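/- arXiv:2110.12031 — 8 statements merged into one kernel-verified Lean document; each statement's English description precedes it below -/
import Mathlib

section
/- Let (X, 𝒜, μ) be a σ-finite measure space and let (A_n)_{n∈ℕ} be an increasing sequence of measurable sets of finite measure with X = ∪_{n=1}^∞ A_n. Let 𝒮 denote the subspace of L¹(X,μ) consisting of integrable simple functions, and let S : 𝒮 → L¹(X,μ) be a linear map. Then S admits a (necessarily unique) extension to a semi-doubly stochastic operator on L¹(X,μ) if and only if S is nonnegative (Sφ ≥ 0 a.e. whenever φ ≥ 0 a.e.) and for every measurable set E with μ(E) < ∞ one has ∫_X S(χ_E) dμ = μ(E) and lim_{n→∞} ∫_X χ_E · S(χ_{A_n}) dμ ≤ μ(E). -/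
open MeasureTheory Filter Topology ENNReal NNReal

attribute [local instance] MeasureTheory.Lp.simpleFunc.smul
  MeasureTheory.Lp.simpleFunc.module

attribute [local instance] MeasureTheory.Lp.simpleFunc.isBoundedSMul
  MeasureTheory.Lp.simpleFunc.normedSpace

section Aux

variable {X : Type*} [MeasurableSpace X] {μ : Measure X}

lemma sds_integral_coe_add (f g : Lp ℝ 1 μ) :
    ∫ x, ((f + g : Lp ℝ 1 μ) : X → ℝ) x ∂μ
      = ∫ x, (f : X → ℝ) x ∂μ + ∫ x, (g : X → ℝ) x ∂μ := by
  rw [integral_congr_ae (Lp.coeFn_add f g)]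
  exact integral_add (L1.integrable_coeFn f) (L1.integrable_coeFn g)

lemma sds_integral_coe_smul (c : ℝ) (f : Lp ℝ 1 μ) :
    ∫ x, ((c • f : Lp ℝ 1 μ) : X → ℝ) x ∂μ = c * ∫ x, (f : X → ℝ) x ∂μ := by
  rw [integral_congr_ae (Lp.coeFn_smul c f)]
  simp only [Pi.smul_apply, smul_eq_mul]
  exact integral_const_mul c _

lemma sds_indicatorConst_smul_one {s : Set X} (hs : MeasurableSet s) (hμs : μ s ≠ ⊤) (c : ℝ) :
    Lp.simpleFunc.indicatorConst 1 hs hμs c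
      = c • Lp.simpleFunc.indicatorConst 1 hs hμs (1 : ℝ) := by
  apply Subtype.ext
  rw [Lp.simpleFunc.coe_smul, Lp.simpleFunc.coe_indicatorConst, Lp.simpleFunc.coe_indicatorConst]
  apply Lp.ext
  filter_upwards [(indicatorConstLp_coeFn : indicatorConstLp 1 hs hμs c =ᵐ[μ] _),
    Lp.coeFn_smul c (indicatorConstLp 1 hs hμs (1:ℝ)),
    (indicatorConstLp_coeFn : indicatorConstLp 1 hs hμs (1:ℝ) =ᵐ[μ] _)] with x h1 h2 h3
  rw [h1, h2, Pi.smul_apply, h3]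
  by_cases hx : x ∈ s <;> simp [hx]

variable (S : Lp.simpleFunc ℝ 1 μ →ₗ[ℝ] Lp ℝ 1 μ)

/-- Integral preservation extends from indicators to all simple functions. -/
lemma sds_integral_S
    (hS2 : ∀ E : Set X, ∀ (hE : MeasurableSet E) (hEfin : μ E < ⊤),
      ∫ x, (S (Lp.simpleFunc.indicatorConst 1 hE hEfin.ne (1 : ℝ)) : X → ℝ) x ∂μ = (μ E).toReal)
    (φ : Lp.simpleFunc ℝ 1 μ) :
    ∫ x, (S φ : X → ℝ) x ∂μ = ∫ x, ((φ : Lp ℝ 1 μ) : X → ℝ) x ∂μ := by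
  refine Lp.simpleFunc.induction (p := (1:ℝ≥0∞)) one_ne_zero ENNReal.one_ne_top ?_ ?_ φ
  · intro c s hs hμs
    rw [sds_indicatorConst_smul_one hs hμs.ne c, _root_.map_smul,
      sds_integral_coe_smul, hS2 _ hs hμs, Lp.simpleFunc.coe_smul, sds_integral_coe_smul,
      Lp.simpleFunc.coe_indicatorConst,
      integral_congr_ae (indicatorConstLp_coeFn : indicatorConstLp 1 hs hμs.ne (1:ℝ) =ᵐ[μ] _)]
    rw [integral_indicator_const (1:ℝ) hs]
    simp [measureReal_def]
  · intro f g hf hg hdisj Pf Pg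
    have hco : ((SimpleFunc.toLp f hf + SimpleFunc.toLp g hg : Lp.simpleFunc ℝ 1 μ) : Lp ℝ 1 μ)
        = (SimpleFunc.toLp f hf : Lp ℝ 1 μ) + (SimpleFunc.toLp g hg : Lp ℝ 1 μ) := rfl
    rw [map_add, sds_integral_coe_add, hco, sds_integral_coe_add, Pf, Pg]


/-- monotonicity of set integrals of `S` of indicators, from positivity of `S`. -/
lemma sds_mono
    (hS1 : ∀ φ : Lp.simpleFunc ℝ 1 μ,
        0 ≤ᵐ[μ] ((φ : Lp ℝ 1 μ) : X → ℝ) → 0 ≤ᵐ[μ] (S φ : X → ℝ))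
    (E : Set X) {C D : Set X} (hC : MeasurableSet C) (hCfin : μ C ≠ ⊤)
    (hD : MeasurableSet D) (hDfin : μ D ≠ ⊤) (hCD : C ⊆ D) :
    ∫ x in E, (S (Lp.simpleFunc.indicatorConst 1 hC hCfin (1:ℝ)) : X → ℝ) x ∂μ
      ≤ ∫ x in E, (S (Lp.simpleFunc.indicatorConst 1 hD hDfin (1:ℝ)) : X → ℝ) x ∂μ := by
  set a := Lp.simpleFunc.indicatorConst 1 hC hCfin (1:ℝ) with ha
  set b := Lp.simpleFunc.indicatorConst 1 hD hDfin (1:ℝ) with hb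
  have hba : ((b - a : Lp.simpleFunc ℝ 1 μ) : Lp ℝ 1 μ) = (b : Lp ℝ 1 μ) - (a : Lp ℝ 1 μ) := rfl
  have hpos : 0 ≤ᵐ[μ] (((b - a : Lp.simpleFunc ℝ 1 μ) : Lp ℝ 1 μ) : X → ℝ) := by
    rw [hba]
    filter_upwards [Lp.coeFn_sub (b : Lp ℝ 1 μ) (a : Lp ℝ 1 μ),
      (indicatorConstLp_coeFn : indicatorConstLp 1 hC hCfin (1:ℝ) =ᵐ[μ] _),
      (indicatorConstLp_coeFn : indicatorConstLp 1 hD hDfin (1:ℝ) =ᵐ[μ] _)] with x h1 h2 h3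
    rw [Pi.zero_apply, h1, Pi.sub_apply]
    have h2' : ((a : Lp ℝ 1 μ) : X → ℝ) x = C.indicator (fun _ => (1:ℝ)) x := h2
    have h3' : ((b : Lp ℝ 1 μ) : X → ℝ) x = D.indicator (fun _ => (1:ℝ)) x := h3
    rw [h2', h3', sub_nonneg]
    exact Set.indicator_le_indicator_of_subset hCD (fun _ => zero_le_one) x
  have key := hS1 _ hpos
  rw [map_sub] at key
  have hle : (S a : X → ℝ) ≤ᵐ[μ] (S b : X → ℝ) := by
    filter_upwards [key, Lp.coeFn_sub (S b) (S a)] with x h1 h2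
    rw [Pi.zero_apply] at h1
    rw [h2, Pi.sub_apply] at h1
    linarith
  exact integral_mono_ae ((L1.integrable_coeFn (S a)).restrict)
    ((L1.integrable_coeFn (S b)).restrict) (ae_restrict_of_ae hle)

/-- `S` is a contraction. -/
lemma sds_norm_bound
    (hS1 : ∀ φ : Lp.simpleFunc ℝ 1 μ,
        0 ≤ᵐ[μ] ((φ : Lp ℝ 1 μ) : X → ℝ) → 0 ≤ᵐ[μ] (S φ : X → ℝ))
    (hI : ∀ φ : Lp.simpleFunc ℝ 1 μ,
        ∫ x, (S φ : X → ℝ) x ∂μ = ∫ x, ((φ : Lp ℝ 1 μ) : X → ℝ) x ∂μ)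
    (φ : Lp.simpleFunc ℝ 1 μ) : ‖S φ‖ ≤ 1 * ‖φ‖ := by
  rw [one_mul]
  set f := Lp.simpleFunc.toSimpleFunc φ with hfdef
  have hmem : MemLp (f : X → ℝ) 1 μ := Lp.simpleFunc.memLp φ
  have hfeq : (f : X → ℝ) =ᵐ[μ] ((φ : Lp ℝ 1 μ) : X → ℝ) := Lp.simpleFunc.toSimpleFunc_eq_toFun φ
  set pos : SimpleFunc X ℝ := f.map (fun t => max t 0) with hposdef
  set neg : SimpleFunc X ℝ := f.map (fun t => max (-t) 0) with hnegdef
  have hposco : ∀ x, pos x = max (f x) 0 := fun x => rfl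
  have hnegco : ∀ x, neg x = max (-(f x)) 0 := fun x => rfl
  have habs : ∀ t : ℝ, |max t 0| ≤ |t| := by
    intro t
    rcases le_total t 0 with h | h
    · rw [max_eq_right h, abs_zero]; exact abs_nonneg t
    · rw [max_eq_left h, abs_of_nonneg h]
  have hpm : MemLp (pos : X → ℝ) 1 μ := by
    refine hmem.of_le pos.aestronglyMeasurable (Eventually.of_forall fun x => ?_)
    rw [hposco, Real.norm_eq_abs, Real.norm_eq_abs]
    exact habs (f x)
  have hnm : MemLp (neg : X → ℝ) 1 μ := by
    refine hmem.of_le neg.aestronglyMeasurable (Eventually.of_forall fun x => ?_)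
    rw [hnegco, Real.norm_eq_abs, Real.norm_eq_abs]
    exact (habs (-f x)).trans (by rw [abs_neg])
  set φp := SimpleFunc.toLp pos hpm with hφp
  set φn := SimpleFunc.toLp neg hnm with hφn
  have hsub : φ = φp - φn := by
    rw [← Lp.simpleFunc.toLp_toSimpleFunc φ]
    apply Subtype.ext
    apply Lp.ext
    have hcoe : ((φp - φn : Lp.simpleFunc ℝ 1 μ) : Lp ℝ 1 μ)
        = (φp : Lp ℝ 1 μ) - (φn : Lp ℝ 1 μ) := rfl
    rw [hcoe]
    filter_upwards [MemLp.coeFn_toLp (Lp.simpleFunc.memLp φ), MemLp.coeFn_toLp hpm,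
      MemLp.coeFn_toLp hnm, Lp.coeFn_sub (φp : Lp ℝ 1 μ) (φn : Lp ℝ 1 μ)] with x h1 h2 h3 h4
    have h2' : ((φp : Lp ℝ 1 μ) : X → ℝ) x = pos x := h2
    have h3' : ((φn : Lp ℝ 1 μ) : X → ℝ) x = neg x := h3
    rw [h1, h4, Pi.sub_apply, h2', h3', hposco, hnegco]
    rcases le_total (f x) 0 with h | h
    · rw [max_eq_right h, max_eq_left (neg_nonneg.mpr h)]; ring
    · rw [max_eq_left h, max_eq_right (neg_nonpos.mpr h)]; ring
  have hp0 : 0 ≤ᵐ[μ] (((φp : Lp.simpleFunc ℝ 1 μ) : Lp ℝ 1 μ) : X → ℝ) := by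
    filter_upwards [MemLp.coeFn_toLp hpm] with x h
    have h' : ((φp : Lp ℝ 1 μ) : X → ℝ) x = pos x := h
    rw [Pi.zero_apply, h', hposco]
    exact le_max_right _ _
  have hn0 : 0 ≤ᵐ[μ] (((φn : Lp.simpleFunc ℝ 1 μ) : Lp ℝ 1 μ) : X → ℝ) := by
    filter_upwards [MemLp.coeFn_toLp hnm] with x h
    have h' : ((φn : Lp ℝ 1 μ) : X → ℝ) x = neg x := h
    rw [Pi.zero_apply, h', hnegco]
    exact le_max_right _ _
  have hSp := hS1 φp hp0
  have hSn := hS1 φn hn0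
  have normSp : ‖S φp‖ = ∫ x, (pos : X → ℝ) x ∂μ := by
    have e1 : ∫ x, ‖(S φp : X → ℝ) x‖ ∂μ = ∫ x, (S φp : X → ℝ) x ∂μ := by
      refine integral_congr_ae ?_
      filter_upwards [hSp] with x hx
      simp only [Pi.zero_apply] at hx
      rw [Real.norm_eq_abs, abs_of_nonneg hx]
    rw [L1.norm_eq_integral_norm, e1, hI φp]
    exact integral_congr_ae (MemLp.coeFn_toLp hpm)
  have normSn : ‖S φn‖ = ∫ x, (neg : X → ℝ) x ∂μ := by
    have e1 : ∫ x, ‖(S φn : X → ℝ) x‖ ∂μ = ∫ x, (S φn : X → ℝ) x ∂μ := by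
      refine integral_congr_ae ?_
      filter_upwards [hSn] with x hx
      simp only [Pi.zero_apply] at hx
      rw [Real.norm_eq_abs, abs_of_nonneg hx]
    rw [L1.norm_eq_integral_norm, e1, hI φn]
    exact integral_congr_ae (MemLp.coeFn_toLp hnm)
  have hnormφ : ‖φ‖ = ∫ x, (pos : X → ℝ) x ∂μ + ∫ x, (neg : X → ℝ) x ∂μ := by
    have : ‖φ‖ = ‖(φ : Lp ℝ 1 μ)‖ := rfl
    rw [this, L1.norm_eq_integral_norm,
      ← integral_add (memLp_one_iff_integrable.mp hpm) (memLp_one_iff_integrable.mp hnm)]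
    refine integral_congr_ae ?_
    filter_upwards [hfeq] with x hx
    rw [← hx, Real.norm_eq_abs, hposco, hnegco]
    rcases le_total (f x) 0 with h | h
    · rw [abs_of_nonpos h, max_eq_left (neg_nonneg.mpr h), max_eq_right h]; ring
    · rw [abs_of_nonneg h, max_eq_right (neg_nonpos.mpr h), max_eq_left h]; ring
  calc ‖S φ‖ = ‖S φp - S φn‖ := by rw [hsub, map_sub]
    _ ≤ ‖S φp‖ + ‖S φn‖ := norm_sub_le _ _
    _ = ‖φ‖ := by rw [normSp, normSn, hnormφ]

end Aux
set_option synthInstance.maxHeartbeats 1000000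
set_option maxHeartbeats 1000000

section Main

/-- **Construction of semi-doubly stochastic operators.**  Let `(X,μ)` be σ-finite, exhausted
by an increasing sequence `Aₙ` of sets of finite measure, and let `S` be a linear map from the
subspace `𝒮` of integrable simple functions into `L¹(X,μ)`.  Then `S` extends to a semi-doubly
stochastic operator on `L¹(X,μ)` (a positive, integral-preserving operator `T` with
`∫_E T χ_B dμ ≤ μ(E)` for all sets `E, B` of finite measure) if and only if `S` is
nonnegative, `∫ S χ_E dμ = μ(E)` for every set `E` of finite measure, and
`lim_{n→∞} ∫ χ_E · S χ_{Aₙ} dμ ≤ μ(E)` for every such `E`. -/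
theorem extension_to_semi_doubly_stochastic_iff
    {X : Type*} [MeasurableSpace X] (μ : Measure X) [SigmaFinite μ]
    (A : ℕ → Set X) (hAmeas : ∀ n, MeasurableSet (A n)) (hAfin : ∀ n, μ (A n) < ⊤)
    (hAmono : Monotone A) (hAcover : ⋃ n, A n = Set.univ)
    (S : Lp.simpleFunc ℝ 1 μ →ₗ[ℝ] Lp ℝ 1 μ) :
    (∃ T : Lp ℝ 1 μ →L[ℝ] Lp ℝ 1 μ,
      (∀ φ : Lp.simpleFunc ℝ 1 μ, T ↑φ = S φ) ∧
      (∀ f : Lp ℝ 1 μ, 0 ≤ᵐ[μ] (f : X → ℝ) → 0 ≤ᵐ[μ] (T f : X → ℝ)) ∧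
      (∀ f : Lp ℝ 1 μ, ∫ x, (T f : X → ℝ) x ∂μ = ∫ x, (f : X → ℝ) x ∂μ) ∧
      (∀ E B : Set X, ∀ (_ : MeasurableSet E) (_ : μ E < ⊤) (hB : MeasurableSet B)
        (hBfin : μ B < ⊤),
        ∫ x in E, (T (indicatorConstLp 1 hB hBfin.ne (1 : ℝ)) : X → ℝ) x ∂μ ≤ (μ E).toReal))
    ↔
    ((∀ φ : Lp.simpleFunc ℝ 1 μ,
        0 ≤ᵐ[μ] ((φ : Lp ℝ 1 μ) : X → ℝ) → 0 ≤ᵐ[μ] (S φ : X → ℝ)) ∧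
     (∀ E : Set X, ∀ (hE : MeasurableSet E) (hEfin : μ E < ⊤),
        ∫ x, (S (Lp.simpleFunc.indicatorConst 1 hE hEfin.ne (1 : ℝ)) : X → ℝ) x ∂μ
          = (μ E).toReal) ∧
     (∀ E : Set X, MeasurableSet E → μ E < ⊤ →
        ∃ L : ℝ, L ≤ (μ E).toReal ∧
          Tendsto
            (fun n => ∫ x in E,
              (S (Lp.simpleFunc.indicatorConst 1 (hAmeas n) (hAfin n).ne (1 : ℝ)) : X → ℝ) x ∂μ)
            atTop (𝓝 L))) := by
  constructor
  · rintro ⟨T, hTφ, hTpos, hTint, hTsds⟩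
    have hS1 : ∀ φ : Lp.simpleFunc ℝ 1 μ,
        0 ≤ᵐ[μ] ((φ : Lp ℝ 1 μ) : X → ℝ) → 0 ≤ᵐ[μ] (S φ : X → ℝ) := by
      intro φ hφ
      rw [← hTφ φ]
      exact hTpos _ hφ
    refine ⟨hS1, ?_, ?_⟩
    · intro E hE hEfin
      rw [← hTφ, hTint, Lp.simpleFunc.coe_indicatorConst,
        integral_congr_ae (indicatorConstLp_coeFn : indicatorConstLp 1 hE hEfin.ne (1:ℝ) =ᵐ[μ] _),
        integral_indicator_const (1:ℝ) hE]
      simp [measureReal_def]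
    · intro E hE hEfin
      set a : ℕ → ℝ := fun n => ∫ x in E,
        (S (Lp.simpleFunc.indicatorConst 1 (hAmeas n) (hAfin n).ne (1:ℝ)) : X → ℝ) x ∂μ with hadef
      have hmono : Monotone a := fun n m hnm =>
        sds_mono S hS1 E (hAmeas n) (hAfin n).ne (hAmeas m) (hAfin m).ne (hAmono hnm)
      have hbd : ∀ n, a n ≤ (μ E).toReal := by
        intro n
        have h := hTsds E (A n) hE hEfin (hAmeas n) (hAfin n)
        have heq : T (indicatorConstLp 1 (hAmeas n) (hAfin n).ne (1:ℝ))
            = S (Lp.simpleFunc.indicatorConst 1 (hAmeas n) (hAfin n).ne (1:ℝ)) := by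
          rw [← Lp.simpleFunc.coe_indicatorConst]; exact hTφ _
        rwa [heq] at h
      have hbdd : BddAbove (Set.range a) := ⟨(μ E).toReal, by rintro _ ⟨n, rfl⟩; exact hbd n⟩
      exact ⟨⨆ n, a n, ciSup_le hbd, tendsto_atTop_ciSup hmono hbdd⟩
  · rintro ⟨hS1, hS2, hS3⟩
    have hI := sds_integral_S S hS2
    have hbound := sds_norm_bound S hS1 hI
    haveI : Fact ((1:ℝ≥0∞) ≤ 1) := ⟨le_rfl⟩
    set S' : Lp.simpleFunc ℝ 1 μ →L[ℝ] Lp ℝ 1 μ := LinearMap.mkContinuous S 1 hbound with hS'def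
    set T : Lp ℝ 1 μ →L[ℝ] Lp ℝ 1 μ :=
      S'.extend (Lp.simpleFunc.coeToLp X ℝ ℝ) with hTdef
    have hTφ : ∀ φ : Lp.simpleFunc ℝ 1 μ, T ↑φ = S φ := fun φ =>
      ContinuousLinearMap.extend_eq S' (Lp.simpleFunc.denseRange ENNReal.one_ne_top)
        (by exact Lp.simpleFunc.isUniformInducing) φ
    refine ⟨T, hTφ, ?_, ?_, ?_⟩
    · -- positivity
      intro f hf
      have hf' : (0 : Lp ℝ 1 μ) ≤ f := (Lp.coeFn_nonneg f).mp hf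
      have hd := Lp.simpleFunc.denseRange_coeSimpleFuncNonnegToLpNonneg (p := 1) (μ := μ) (G := ℝ) ENNReal.one_ne_top
      obtain ⟨u, hu_mem, hu_tendsto⟩ := mem_closure_iff_seq_limit.mp (hd ⟨f, hf'⟩)
      choose g hg using hu_mem
      have hval : Tendsto (fun n => ((u n : { g : Lp ℝ 1 μ // 0 ≤ g }) : Lp ℝ 1 μ)) atTop (𝓝 f) :=
        (continuous_subtype_val.tendsto _).comp hu_tendsto
      have hvg : ∀ n, ((u n : { g : Lp ℝ 1 μ // 0 ≤ g }) : Lp ℝ 1 μ)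
          = ((g n : Lp.simpleFunc ℝ 1 μ) : Lp ℝ 1 μ) := by
        intro n
        rw [← hg n]
        rfl
      have hTt : Tendsto (fun n => T ((g n : Lp.simpleFunc ℝ 1 μ) : Lp ℝ 1 μ)) atTop (𝓝 (T f)) := by
        refine (T.continuous.tendsto f).comp ?_
        simpa only [hvg] using hval
      have hnn : ∀ n, (0 : Lp ℝ 1 μ) ≤ T ((g n : Lp.simpleFunc ℝ 1 μ) : Lp ℝ 1 μ) := by
        intro n
        rw [hTφ]
        have h0 : (0 : Lp.simpleFunc ℝ 1 μ) ≤ (g n : Lp.simpleFunc ℝ 1 μ) := (g n).2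
        have := hS1 (g n) ((Lp.simpleFunc.coeFn_nonneg _).mpr h0)
        exact (Lp.coeFn_nonneg _).mp this
      have hclosed : IsClosed {h : Lp ℝ 1 μ | 0 ≤ h} := isClosed_nonneg
      have : (0 : Lp ℝ 1 μ) ≤ T f :=
        hclosed.mem_of_tendsto hTt (Eventually.of_forall hnn)
      exact (Lp.coeFn_nonneg _).mpr this
    · -- integral preservation
      intro f
      refine (Lp.simpleFunc.denseRange (E := ℝ) (μ := μ) (p := 1) ENNReal.one_ne_top).induction_on
        f ?_ ?_
      · exact isClosed_eq (continuous_integral.comp T.continuous) continuous_integral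
      · intro φ
        rw [hTφ φ, hI φ]
    · -- semi-doubly stochastic inequality
      intro E B hE hEfin hB hBfin
      have hBA : ∀ n, MeasurableSet (B ∩ A n) := fun n => hB.inter (hAmeas n)
      have hBAfin : ∀ n, μ (B ∩ A n) ≠ ⊤ := fun n =>
        ((measure_mono Set.inter_subset_left).trans_lt hBfin).ne
      obtain ⟨L, hL, hLt⟩ := hS3 E hE hEfin
      have hmono : Monotone (fun n => ∫ x in E,
          (S (Lp.simpleFunc.indicatorConst 1 (hAmeas n) (hAfin n).ne (1:ℝ)) : X → ℝ) x ∂μ) :=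
        fun n m hnm =>
          sds_mono S hS1 E (hAmeas n) (hAfin n).ne (hAmeas m) (hAfin m).ne (hAmono hnm)
      have hboundn : ∀ n, ∫ x in E,
          (S (Lp.simpleFunc.indicatorConst 1 (hBA n) (hBAfin n) (1:ℝ)) : X → ℝ) x ∂μ ≤ L :=
        fun n =>
          (sds_mono S hS1 E (hBA n) (hBAfin n) (hAmeas n) (hAfin n).ne
            Set.inter_subset_right).trans (hmono.ge_of_tendsto hLt n)
      -- convergence of indicators in L¹
      have hdm : ∀ n, MeasurableSet (B \ A n) := fun n => hB.diff (hAmeas n)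
      have hdfin : ∀ n, μ (B \ A n) ≠ ⊤ := fun n =>
        ((measure_mono Set.diff_subset).trans_lt hBfin).ne
      have hdiff : ∀ n, indicatorConstLp 1 hB hBfin.ne (1:ℝ)
          - indicatorConstLp 1 (hBA n) (hBAfin n) (1:ℝ)
          = indicatorConstLp 1 (hdm n) (hdfin n) (1:ℝ) := by
        intro n
        apply Lp.ext
        filter_upwards [Lp.coeFn_sub (indicatorConstLp 1 hB hBfin.ne (1:ℝ))
            (indicatorConstLp 1 (hBA n) (hBAfin n) (1:ℝ)),
          (indicatorConstLp_coeFn : indicatorConstLp 1 hB hBfin.ne (1:ℝ) =ᵐ[μ] _),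
          (indicatorConstLp_coeFn : indicatorConstLp 1 (hBA n) (hBAfin n) (1:ℝ) =ᵐ[μ] _),
          (indicatorConstLp_coeFn : indicatorConstLp 1 (hdm n) (hdfin n) (1:ℝ) =ᵐ[μ] _)]
          with x h1 h2 h3 h4
        rw [h1, Pi.sub_apply, h2, h3, h4]
        by_cases hxB : x ∈ B <;> by_cases hxA : x ∈ A n <;>
          simp [Set.indicator_apply, hxB, hxA]
      have hμ0 : Tendsto (fun n => μ (B \ A n)) atTop (𝓝 0) := by
        have h1 : Tendsto (μ ∘ fun n => B \ A n) atTop (𝓝 (μ (⋂ n, B \ A n))) :=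
          tendsto_measure_iInter_atTop (fun n => (hdm n).nullMeasurableSet)
            (fun n m hnm => Set.diff_subset_diff_right (hAmono hnm)) ⟨0, hdfin 0⟩
        have h2 : (⋂ n, B \ A n) = ∅ := by
          rw [← Set.diff_iUnion, hAcover, Set.diff_univ]
        rw [h2, measure_empty] at h1
        exact h1
      have hnorm0 : Tendsto (fun n => ‖indicatorConstLp 1 hB hBfin.ne (1:ℝ)
          - indicatorConstLp 1 (hBA n) (hBAfin n) (1:ℝ)‖) atTop (𝓝 0) := by
        have : ∀ n, ‖indicatorConstLp 1 hB hBfin.ne (1:ℝ)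
            - indicatorConstLp 1 (hBA n) (hBAfin n) (1:ℝ)‖ = (μ (B \ A n)).toReal := by
          intro n
          rw [hdiff n, norm_indicatorConstLp one_ne_zero ENNReal.one_ne_top]
          simp [measureReal_def]
        simp only [this]
        have := (ENNReal.tendsto_toReal (a := 0) (by simp)).comp hμ0
        exact this
      have hconv : Tendsto (fun n => (indicatorConstLp 1 (hBA n) (hBAfin n) (1:ℝ) : Lp ℝ 1 μ))
          atTop (𝓝 (indicatorConstLp 1 hB hBfin.ne (1:ℝ))) := by
        rw [tendsto_iff_norm_sub_tendsto_zero]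
        simpa only [norm_sub_rev] using hnorm0
      have hTconv := ((T.continuous.tendsto _).comp hconv)
      have hIconv : Tendsto (fun n => ∫ x in E,
          (T (indicatorConstLp 1 (hBA n) (hBAfin n) (1:ℝ)) : X → ℝ) x ∂μ) atTop
          (𝓝 (∫ x in E, (T (indicatorConstLp 1 hB hBfin.ne (1:ℝ)) : X → ℝ) x ∂μ)) :=
        ((continuous_setIntegral E).tendsto _).comp hTconv
      have hfin : ∫ x in E, (T (indicatorConstLp 1 hB hBfin.ne (1:ℝ)) : X → ℝ) x ∂μ ≤ L := by
        refine le_of_tendsto hIconv (Eventually.of_forall fun n => ?_)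
        have heq : T (indicatorConstLp 1 (hBA n) (hBAfin n) (1:ℝ))
            = S (Lp.simpleFunc.indicatorConst 1 (hBA n) (hBAfin n) (1:ℝ)) := by
          rw [← Lp.simpleFunc.coe_indicatorConst]; exact hTφ _
        rw [heq]
        exact hboundn n
      exact hfin.trans hL

end Main
end

section
/- Let (X, μ) be a σ-finite measure space, a > 0, and P = {A_n : n ∈ ℕ} a countable measurable partition of X with μ(A_n) = a for every n. Define Φ_P : L¹(X,μ) → ℓ¹ by Φ_P f = (∫_{A_n} f dμ)_n and Ψ_P : ℓ¹ → L¹(X,μ) by Ψ_P(b) = Σ_n (b_n / a) χ_{A_n}. If G : L¹(X,μ) → L¹(X,μ) is a semi-doubly stochastic operator, then the operator D := Φ_P ∘ G ∘ Ψ_P : ℓ¹ → ℓ¹ is semi-doubly stochastic on ℓ¹, i.e. Σ_{m=1}^∞ ⟨De_n, e_m⟩ = 1 for every n and Σ_{n=1}^∞ ⟨De_n, e_m⟩ ≤ 1 for every m. -/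
open MeasureTheory

/-- Let `P = {Aₙ}` be a countable measurable partition of a σ-finite measure space `(X,μ)`
with `μ(Aₙ) = a > 0` for all `n`, let `Φ_P : L¹(X,μ) → ℓ¹` be `f ↦ (∫_{Aₙ} f dμ)ₙ` and
`Ψ_P : ℓ¹ → L¹(X,μ)` be `b ↦ Σₙ (bₙ/a) χ_{Aₙ}`.  If `G` is a semi-doubly stochastic operator
on `L¹(X,μ)`, then `D = Φ_P ∘ G ∘ Ψ_P` is a semi-doubly stochastic operator on `ℓ¹`:
it is positive, `Σₘ ⟨D eₙ, eₘ⟩ = 1` for every `n`, and `Σₙ ⟨D eₙ, eₘ⟩ ≤ 1` for every `m`. -/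
theorem semiDoublyStochastic_transfer_L1_to_lp
    {X : Type*} [MeasurableSpace X] (μ : Measure X) [SigmaFinite μ]
    (a : ℝ) (ha : 0 < a)
    (A : ℕ → Set X) (hAmeas : ∀ n, MeasurableSet (A n))
    (hAdisj : Pairwise (Function.onFun Disjoint A)) (hAcover : ⋃ n, A n = Set.univ)
    (hAa : ∀ n, μ (A n) = ENNReal.ofReal a)
    (Φ : Lp ℝ 1 μ →L[ℝ] lp (fun _ : ℕ => ℝ) 1)
    (hΦ : ∀ (f : Lp ℝ 1 μ) (n : ℕ), Φ f n = ∫ x in A n, f x ∂μ)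
    (Ψ : lp (fun _ : ℕ => ℝ) 1 →L[ℝ] Lp ℝ 1 μ)
    (hΨ : ∀ b : lp (fun _ : ℕ => ℝ) 1,
      (Ψ b : X → ℝ) =ᵐ[μ] fun x => ∑' n : ℕ, Set.indicator (A n) (fun _ => b n / a) x)
    (G : Lp ℝ 1 μ →L[ℝ] Lp ℝ 1 μ)
    (hGpos : ∀ f : Lp ℝ 1 μ, 0 ≤ᵐ[μ] (f : X → ℝ) → 0 ≤ᵐ[μ] (G f : X → ℝ))
    (hGint : ∀ f : Lp ℝ 1 μ, ∫ x, (G f : X → ℝ) x ∂μ = ∫ x, (f : X → ℝ) x ∂μ)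
    (hGsemi : ∀ E B : Set X, ∀ (_ : MeasurableSet E) (_ : μ E < ⊤) (hB : MeasurableSet B)
      (hBfin : μ B < ⊤),
      ∫ x in E, (G (indicatorConstLp 1 hB hBfin.ne (1 : ℝ)) : X → ℝ) x ∂μ ≤ (μ E).toReal) :
    (∀ x : lp (fun _ : ℕ => ℝ) 1, (∀ i, 0 ≤ x i) → ∀ i, 0 ≤ Φ (G (Ψ x)) i) ∧
    (∀ n : ℕ, ∑' m : ℕ, Φ (G (Ψ (lp.single 1 n (1 : ℝ)))) m = 1) ∧
    (∀ m : ℕ, ∑' n : ℕ, Φ (G (Ψ (lp.single 1 n (1 : ℝ)))) m ≤ 1) := by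
  -- basic facts about the partition
  have hfin : ∀ n, μ (A n) < ⊤ := fun n => by
    rw [hAa n]; exact ENNReal.ofReal_lt_top
  have hmem : ∀ x : X, ∃ k, x ∈ A k ∧ ∀ j, j ≠ k → x ∉ A j := by
    intro x
    have : x ∈ ⋃ n, A n := by rw [hAcover]; trivial
    obtain ⟨k, hk⟩ := Set.mem_iUnion.1 this
    refine ⟨k, hk, fun j hj hx => ?_⟩
    exact (hAdisj hj).le_bot ⟨hx, hk⟩
  -- pointwise computation of the defining tsum of Ψ
  have htsum : ∀ (b : ℕ → ℝ) (x : X) (k : ℕ), x ∈ A k → (∀ j, j ≠ k → x ∉ A j) →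
      (∑' n : ℕ, Set.indicator (A n) (fun _ => b n / a) x) = b k / a := by
    intro b x k hk hnk
    rw [tsum_eq_single k]
    · exact Set.indicator_of_mem hk _
    · intro j hj
      exact Set.indicator_of_notMem (hnk j hj) _
  -- positivity
  have hpos : ∀ x : lp (fun _ : ℕ => ℝ) 1, (∀ i, 0 ≤ x i) → ∀ i, 0 ≤ Φ (G (Ψ x)) i := by
    intro x hx i
    have hΨpos : 0 ≤ᵐ[μ] ((Ψ x : Lp ℝ 1 μ) : X → ℝ) := by
      filter_upwards [hΨ x] with y hy
      rw [hy]
      refine tsum_nonneg fun n => Set.indicator_nonneg (fun _ _ => ?_) _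
      exact div_nonneg (hx n) ha.le
    have hGf := hGpos _ hΨpos
    rw [hΦ]
    refine setIntegral_nonneg_ae (hAmeas i) ?_
    filter_upwards [hGf] with y hy
    exact fun _ => hy
  -- the finite-sum / union identity : Ψ of a finite sum of basis vectors is a scaled indicator
  have hΨsum : ∀ s : Finset ℕ, ∀ (hU : MeasurableSet (⋃ n ∈ s, A n)) (hUfin : μ (⋃ n ∈ s, A n) ≠ ⊤),
      Ψ (∑ n ∈ s, lp.single 1 n (1 : ℝ)) = a⁻¹ • indicatorConstLp 1 hU hUfin (1 : ℝ) := by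
    intro s hU hUfin
    refine Lp.ext ?_
    have h1 := hΨ (∑ n ∈ s, lp.single 1 n (1 : ℝ))
    have h2 : ⇑(a⁻¹ • indicatorConstLp 1 hU hUfin (1 : ℝ)) =ᵐ[μ]
        fun x => a⁻¹ * Set.indicator (⋃ n ∈ s, A n) (fun _ => (1 : ℝ)) x := by
      filter_upwards [Lp.coeFn_smul a⁻¹ (indicatorConstLp 1 hU hUfin (1 : ℝ)),
        indicatorConstLp_coeFn (p := 1) (μ := μ) (hs := hU) (hμs := hUfin) (c := (1 : ℝ))]
        with y h h' using by simp [h, h']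
    filter_upwards [h1, h2] with y hy hy'
    rw [hy, hy']
    obtain ⟨k, hk, hnk⟩ := hmem y
    rw [htsum _ y k hk hnk]
    have hb : (∑ n ∈ s, lp.single 1 n (1 : ℝ)) k = if k ∈ s then (1 : ℝ) else 0 := by
      rw [lp.coeFn_sum, Finset.sum_apply]
      simp [lp.single_apply, Finset.sum_ite_eq' s k (fun _ => (1:ℝ))]
    rw [hb]
    by_cases hks : k ∈ s
    · have : y ∈ ⋃ n ∈ s, A n := Set.mem_biUnion hks hk
      rw [if_pos hks, Set.indicator_of_mem this]
      simp [div_eq_inv_mul]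
    · have : y ∉ ⋃ n ∈ s, A n := by
        simp only [Set.mem_iUnion]
        rintro ⟨j, hj, hyj⟩
        rcases eq_or_ne j k with rfl | hjk
        · exact hks hj
        · exact hnk j hjk hyj
      rw [if_neg hks, Set.indicator_of_notMem this]
      simp
  refine ⟨hpos, ?_, ?_⟩
  -- column sums
  · intro n
    set f := G (Ψ (lp.single 1 n (1 : ℝ))) with hf
    have hint : IntegrableOn (⇑f) (⋃ m, A m) μ :=
      (L1.integrable_coeFn f).integrableOn
    have hsum : ∑' m : ℕ, ∫ x in A m, (f : X → ℝ) x ∂μ = ∫ x, (f : X → ℝ) x ∂μ := by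
      rw [← integral_iUnion hAmeas hAdisj hint, hAcover, Measure.restrict_univ]
    have h1 : ∑' m : ℕ, Φ f m = ∫ x, (f : X → ℝ) x ∂μ := by
      rw [← hsum]; exact tsum_congr fun m => hΦ f m
    rw [h1, hf, hGint]
    -- ∫ Ψ eₙ = 1
    have hone : lp.single 1 n (1 : ℝ) = ∑ m ∈ ({n} : Finset ℕ), lp.single 1 m (1 : ℝ) := by
      simp
    have hU : MeasurableSet (⋃ m ∈ ({n} : Finset ℕ), A m) := by
      simpa using hAmeas n
    have hUfin : μ (⋃ m ∈ ({n} : Finset ℕ), A m) ≠ ⊤ := by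
      simpa using (hfin n).ne
    rw [hone, hΨsum {n} hU hUfin]
    have hcoe : ⇑(a⁻¹ • indicatorConstLp 1 hU hUfin (1 : ℝ)) =ᵐ[μ]
        fun x => a⁻¹ * Set.indicator (⋃ m ∈ ({n} : Finset ℕ), A m) (fun _ => (1 : ℝ)) x := by
      filter_upwards [Lp.coeFn_smul a⁻¹ (indicatorConstLp 1 hU hUfin (1 : ℝ)),
        indicatorConstLp_coeFn (p := 1) (μ := μ) (hs := hU) (hμs := hUfin) (c := (1 : ℝ))]
        with y h h' using by rw [h, Pi.smul_apply, smul_eq_mul, h']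
    rw [integral_congr_ae hcoe, integral_const_mul, integral_indicator_const _ hU]
    have : μ (⋃ m ∈ ({n} : Finset ℕ), A m) = ENNReal.ofReal a := by simpa using hAa n
    rw [Measure.real, this, ENNReal.toReal_ofReal ha.le, smul_eq_mul, mul_one]
    field_simp
  -- row sums
  · intro m
    refine tsum_le_of_sum_le' zero_le_one fun s => ?_
    have hU : MeasurableSet (⋃ n ∈ s, A n) := s.measurableSet_biUnion fun n _ => hAmeas n
    have hUfin : μ (⋃ n ∈ s, A n) < ⊤ :=
      measure_biUnion_lt_top s.finite_toSet fun n _ => hfin n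
    have hlin : ∑ n ∈ s, Φ (G (Ψ (lp.single 1 n (1 : ℝ)))) m
        = Φ (G (Ψ (∑ n ∈ s, lp.single 1 n (1 : ℝ)))) m := by
      rw [map_sum Ψ, map_sum G, map_sum Φ, lp.coeFn_sum, Finset.sum_apply]
    rw [hlin, hΨsum s hU hUfin.ne, _root_.map_smul, _root_.map_smul]
    have hsmul : (a⁻¹ • Φ (G (indicatorConstLp 1 hU hUfin.ne (1 : ℝ)))) m
        = a⁻¹ * Φ (G (indicatorConstLp 1 hU hUfin.ne (1 : ℝ))) m := by
      rw [lp.coeFn_smul]; rfl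
    rw [hsmul, hΦ]
    have hle := hGsemi (A m) (⋃ n ∈ s, A n) (hAmeas m) (hfin m) hU hUfin
    have : (μ (A m)).toReal = a := by rw [hAa m, ENNReal.toReal_ofReal ha.le]
    rw [this] at hle
    calc a⁻¹ * ∫ x in A m, (G (indicatorConstLp 1 hU hUfin.ne (1 : ℝ)) : X → ℝ) x ∂μ
        ≤ a⁻¹ * a := by
          exact mul_le_mul_of_nonneg_left hle (inv_nonneg.2 ha.le)
      _ = 1 := inv_mul_cancel₀ ha.ne'
end

section
/- Let (X, μ) be a σ-finite measure space and f ∈ L¹(X,μ) nonnegative. Then the family S_f = {Sf : S a semi-doubly stochastic operator on L¹(X,μ)} is equi-integrable: for every ε > 0 there exists δ > 0 such that for every measurable set E with μ(E) < δ and every semi-doubly stochastic operator S on L¹(X,μ), ∫_E |Sf| dμ < ε. -/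
open MeasureTheory Filter Topology

/-- `T : L¹(X,μ) → L¹(X,μ)` is a semi-doubly stochastic operator: it is positive,
integral preserving, and `∫_E T χ_B dμ ≤ μ(E)` for all measurable sets `E, B` of finite
measure. -/
def IsSemiDoublyStochastic {X : Type*} [MeasurableSpace X] {μ : Measure X}
    (T : Lp ℝ 1 μ →L[ℝ] Lp ℝ 1 μ) : Prop :=
  (∀ f : Lp ℝ 1 μ, 0 ≤ᵐ[μ] (f : X → ℝ) → 0 ≤ᵐ[μ] (T f : X → ℝ)) ∧
  (∀ f : Lp ℝ 1 μ, ∫ x, (T f : X → ℝ) x ∂μ = ∫ x, (f : X → ℝ) x ∂μ) ∧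
  (∀ E B : Set X, ∀ (_ : MeasurableSet E) (_ : μ E < ⊤) (hB : MeasurableSet B)
    (hBfin : μ B < ⊤),
    ∫ x in E, (T (indicatorConstLp 1 hB hBfin.ne (1 : ℝ)) : X → ℝ) x ∂μ ≤ (μ E).toReal)

/-- **Equi-integrability of semi-doubly stochastic orbits.**  For a σ-finite measure space
`(X,μ)` and a nonnegative `f ∈ L¹(X,μ)`, the family `S_f = {Sf : S semi-doubly stochastic}` is
equi-integrable. -/
theorem equiIntegrable_semiDoublyStochastic_orbit
    {X : Type*} [MeasurableSpace X] (μ : Measure X) [SigmaFinite μ]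
    (f : Lp ℝ 1 μ) (hf : 0 ≤ᵐ[μ] (f : X → ℝ)) :
    ∀ ε : ℝ, 0 < ε → ∃ δ : ℝ, 0 < δ ∧
      ∀ E : Set X, MeasurableSet E → μ E < ENNReal.ofReal δ →
        ∀ S : Lp ℝ 1 μ →L[ℝ] Lp ℝ 1 μ, IsSemiDoublyStochastic S →
          ∫ x in E, |(S f : X → ℝ) x| ∂μ < ε := by
  intro ε hε
  set χ : ℕ → Lp ℝ 1 μ := fun n =>
    indicatorConstLp 1 (measurableSet_spanningSets μ n)
      (measure_spanningSets_lt_top μ n).ne (1 : ℝ) with hχ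
  set g : ℕ → Lp ℝ 1 μ := fun n => f ⊓ ((n : ℝ) • χ n) with hgdef
  set F : ℕ → X → ℝ := fun n x =>
    min ((f : X → ℝ) x) ((n : ℝ) * (spanningSets μ n).indicator (fun _ => (1:ℝ)) x) with hFdef
  have hgcoe : ∀ n, (g n : X → ℝ) =ᵐ[μ] F n := by
    intro n
    filter_upwards [Lp.coeFn_inf f ((n : ℝ) • χ n), Lp.coeFn_smul (n : ℝ) (χ n),
      indicatorConstLp_coeFn (p := 1) (μ := μ) (hs := measurableSet_spanningSets μ n)
        (hμs := (measure_spanningSets_lt_top μ n).ne) (c := (1:ℝ))] with x h1 h2 h3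
    show ((f ⊓ ((n : ℝ) • χ n) : Lp ℝ 1 μ) : X → ℝ) x = _
    rw [h1]
    simp only [Pi.inf_apply, hFdef]
    congr 1
    rw [h2]
    simp [h3]; exact Or.inl h3
  -- integrability of F n
  have hInt : ∀ n, Integrable (F n) μ := fun n => (L1.integrable_coeFn (g n)).congr (hgcoe n)
  -- pointwise convergence
  have hlim : ∀ᵐ x ∂μ, Tendsto (fun n => F n x) atTop (𝓝 ((f : X → ℝ) x)) := by
    filter_upwards [hf] with x hx
    obtain ⟨m, hm⟩ : ∃ m, x ∈ spanningSets μ m := by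
      have h := iUnion_spanningSets μ
      have : x ∈ ⋃ i, spanningSets μ i := h ▸ Set.mem_univ x
      exact Set.mem_iUnion.1 this
    obtain ⟨k, hk⟩ := exists_nat_ge ((f : X → ℝ) x)
    refine Tendsto.congr' ?_ tendsto_const_nhds
    filter_upwards [eventually_ge_atTop (max m k)] with n hn
    have hxn : x ∈ spanningSets μ n :=
      monotone_spanningSets μ (le_trans (le_max_left _ _) hn) hm
    have hfn : (f : X → ℝ) x ≤ (n : ℝ) := by
      calc (f : X → ℝ) x ≤ (k : ℝ) := hk
        _ ≤ (n : ℝ) := by exact_mod_cast le_trans (le_max_right m k) hn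
    simp [hFdef, Set.indicator_of_mem hxn, min_eq_left, hfn]
  -- domination
  have hbound : ∀ n, ∀ᵐ x ∂μ, ‖F n x‖ ≤ (f : X → ℝ) x := by
    intro n
    filter_upwards [hf] with x hx
    have h1 : 0 ≤ F n x := le_min hx (mul_nonneg (Nat.cast_nonneg n) (Set.indicator_nonneg (fun _ _ => zero_le_one) x))
    have h2 : F n x ≤ (f : X → ℝ) x := min_le_left _ _
    rwa [Real.norm_eq_abs, abs_of_nonneg h1]
  have htend : Tendsto (fun n => ∫ x, F n x ∂μ) atTop (𝓝 (∫ x, (f : X → ℝ) x ∂μ)) :=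
    tendsto_integral_of_dominated_convergence _ (fun n => (hInt n).aestronglyMeasurable)
      (L1.integrable_coeFn f) hbound hlim
  have htend0 : Tendsto (fun n => ∫ x, (f : X → ℝ) x ∂μ - ∫ x, F n x ∂μ) atTop (𝓝 0) := by
    simpa using ((tendsto_const_nhds : Filter.Tendsto (fun _ : ℕ => ∫ x, (f : X → ℝ) x ∂μ) atTop (𝓝 (∫ x, (f : X → ℝ) x ∂μ))).sub htend)
  obtain ⟨N, hN⟩ : ∃ N, ∫ x, (f : X → ℝ) x ∂μ - ∫ x, F N x ∂μ < ε / 2 :=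
    (htend0.eventually_lt_const (half_pos hε)).exists
  refine ⟨ε / (2 * ((N : ℝ) + 1)), by positivity, ?_⟩
  set δ := ε / (2 * ((N : ℝ) + 1)) with hδ
  intro E hE hEμ S hS
  obtain ⟨hpos, hintS, hsds⟩ := hS
  have hEfin : μ E < ⊤ := hEμ.trans_le le_top
  have hEreal : (μ E).toReal < δ :=
    (ENNReal.lt_ofReal_iff_toReal_lt hEfin.ne).1 hEμ
  -- f - g N is nonneg
  have hgle : (g N : X → ℝ) ≤ᵐ[μ] (f : X → ℝ) := (Lp.coeFn_le _ _).2 inf_le_left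
  have hfg_nonneg : 0 ≤ᵐ[μ] ((f - g N : Lp ℝ 1 μ) : X → ℝ) := by
    filter_upwards [Lp.coeFn_sub f (g N), hgle] with x h1 h2
    rw [h1]; simp only [Pi.zero_apply, Pi.sub_apply]; linarith
  have hSfg_nonneg : 0 ≤ᵐ[μ] (S (f - g N) : X → ℝ) := hpos _ hfg_nonneg
  have hSf_nonneg : 0 ≤ᵐ[μ] (S f : X → ℝ) := hpos f hf
  -- integral of S (f - g N) is small
  have hfgint : ∫ x, ((f - g N : Lp ℝ 1 μ) : X → ℝ) x ∂μ < ε / 2 := by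
    have h1 : ∫ x, ((f - g N : Lp ℝ 1 μ) : X → ℝ) x ∂μ
        = ∫ x, (f : X → ℝ) x ∂μ - ∫ x, (g N : X → ℝ) x ∂μ := by
      rw [integral_congr_ae (Lp.coeFn_sub f (g N))]
      exact integral_sub (L1.integrable_coeFn f) (L1.integrable_coeFn (g N))
    rw [h1, integral_congr_ae (hgcoe N)]
    exact hN
  have hSfg_small : ∫ x, (S (f - g N) : X → ℝ) x ∂μ < ε / 2 := by
    rw [hintS]; exact hfgint
  -- decomposition of S f
  have hdecomp : (S f : X → ℝ) =ᵐ[μ] (S (g N) : X → ℝ) + (S (f - g N) : X → ℝ) := by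
    have h0 : S f = S (g N) + S (f - g N) := by rw [map_sub]; abel
    calc (S f : X → ℝ) =ᵐ[μ] ((S (g N) + S (f - g N) : Lp ℝ 1 μ) : X → ℝ) := by rw [h0]
      _ =ᵐ[μ] (S (g N) : X → ℝ) + (S (f - g N) : X → ℝ) := Lp.coeFn_add _ _
  -- bound on ∫_E S (g N)
  have hgleχ : 0 ≤ᵐ[μ] (((N : ℝ) • χ N - g N : Lp ℝ 1 μ) : X → ℝ) := by
    have := (Lp.coeFn_le (g N) ((N : ℝ) • χ N)).2 inf_le_right
    filter_upwards [Lp.coeFn_sub ((N : ℝ) • χ N) (g N), this] with x h1 h2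
    rw [h1]; simp only [Pi.zero_apply, Pi.sub_apply]; linarith
  have hSg_le : (S (g N) : X → ℝ) ≤ᵐ[μ] (S ((N : ℝ) • χ N) : X → ℝ) := by
    have h1 := hpos _ hgleχ
    have h2 : S ((N : ℝ) • χ N - g N) = S ((N : ℝ) • χ N) - S (g N) := map_sub _ _ _
    filter_upwards [h1, h2 ▸ Lp.coeFn_sub (S ((N : ℝ) • χ N)) (S (g N))] with x hx1 hx2
    rw [hx2] at hx1; simp only [Pi.zero_apply, Pi.sub_apply] at hx1; linarith
  have hSχ_int : ∫ x in E, (S ((N : ℝ) • χ N) : X → ℝ) x ∂μ ≤ (N : ℝ) * (μ E).toReal := by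
    have h0 : S ((N : ℝ) • χ N) = (N : ℝ) • S (χ N) := map_smul _ _ _
    have h1 : ∫ x in E, (S ((N : ℝ) • χ N) : X → ℝ) x ∂μ
        = (N : ℝ) * ∫ x in E, (S (χ N) : X → ℝ) x ∂μ := by
      rw [setIntegral_congr_ae hE ((h0 ▸ Lp.coeFn_smul (N : ℝ) (S (χ N))).mono fun x hx _ => hx)]
      simp only [Pi.smul_apply, smul_eq_mul, integral_const_mul]
    rw [h1]
    exact mul_le_mul_of_nonneg_left
      (hsds E (spanningSets μ N) hE hEfin (measurableSet_spanningSets μ N)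
        (measure_spanningSets_lt_top μ N)) (Nat.cast_nonneg N)
  have hSg_bound : ∫ x in E, (S (g N) : X → ℝ) x ∂μ ≤ (N : ℝ) * (μ E).toReal := by
    refine le_trans (setIntegral_mono_ae (L1.integrable_coeFn (S (g N))).integrableOn
      (L1.integrable_coeFn (S ((N : ℝ) • χ N))).integrableOn hSg_le) hSχ_int
  -- bound on ∫_E S (f - g N)
  have hSfg_bound : ∫ x in E, (S (f - g N) : X → ℝ) x ∂μ < ε / 2 :=
    lt_of_le_of_lt (setIntegral_le_integral (L1.integrable_coeFn _) hSfg_nonneg) hSfg_small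
  -- put together
  have habs : ∫ x in E, |(S f : X → ℝ) x| ∂μ
      = ∫ x in E, (S (g N) : X → ℝ) x ∂μ + ∫ x in E, (S (f - g N) : X → ℝ) x ∂μ := by
    have h1 : (fun x => |(S f : X → ℝ) x|)
        =ᵐ[μ] (S (g N) : X → ℝ) + (S (f - g N) : X → ℝ) := by
      filter_upwards [hSf_nonneg, hdecomp] with x hx1 hx2
      simp only [Pi.add_apply] at hx2 ⊢
      rw [abs_of_nonneg hx1, hx2]
    rw [setIntegral_congr_ae hE (h1.mono fun x hx _ => hx)]
    exact integral_add (L1.integrable_coeFn (S (g N))).integrableOn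
      (L1.integrable_coeFn (S (f - g N))).integrableOn
  rw [habs]
  have hNδ : (N : ℝ) * (μ E).toReal ≤ (N : ℝ) * δ :=
    mul_le_mul_of_nonneg_left hEreal.le (Nat.cast_nonneg N)
  have hNδ2 : (N : ℝ) * δ < ε / 2 := by
    have hδpos : 0 < δ := by rw [hδ]; positivity
    have hne : ((N : ℝ) + 1) ≠ 0 := by positivity
    have h1 : ((N : ℝ) + 1) * δ = ε / 2 := by rw [hδ]; field_simp
    calc (N : ℝ) * δ < ((N : ℝ) + 1) * δ := by nlinarith
      _ = ε / 2 := h1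
  linarith
end

section
/- Let (X, μ) be a σ-finite measure space, f, g ∈ L¹(X,μ), and suppose there exists a semi-doubly stochastic operator S on L¹(X,μ) with f = Sg. Then for every sublinear functional φ : ℝ → [0,∞) (i.e. φ is convex and positively homogeneous: φ(cx) = c·φ(x) for all c ≥ 0 and x ∈ ℝ), one has ∫_X φ∘f dμ ≤ ∫_X φ∘g dμ. -/
open MeasureTheory

/-- If `(X,μ)` is σ-finite, `S` is a semi-doubly stochastic operator on `L¹(X,μ)` and
`f = Sg`, then `∫ φ∘f dμ ≤ ∫ φ∘g dμ` for every sublinear functional `φ : ℝ → [0,∞)`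
(a nonnegative, convex, positively homogeneous function). -/
theorem integral_sublinear_le_of_semiDoublyStochastic
    {X : Type*} [MeasurableSpace X] (μ : Measure X) [SigmaFinite μ]
    (f g : Lp ℝ 1 μ) (S : Lp ℝ 1 μ →L[ℝ] Lp ℝ 1 μ)
    (hS : IsSemiDoublyStochastic S) (hfg : f = S g)
    (φ : ℝ → ℝ) (hφ0 : ∀ x, 0 ≤ φ x) (hφconv : ConvexOn ℝ Set.univ φ)
    (hφhom : ∀ c : ℝ, 0 ≤ c → ∀ x : ℝ, φ (c * x) = c * φ x) :
    ∫ x, φ ((f : X → ℝ) x) ∂μ ≤ ∫ x, φ ((g : X → ℝ) x) ∂μ := by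
  obtain ⟨hpos, hint, -⟩ := hS
  -- φ has the form φ(x) = φ(1) x⁺ + φ(-1) x⁻
  have key : ∀ x : ℝ, φ x = φ 1 * max x 0 + φ (-1) * max (-x) 0 := by
    intro x
    rcases le_total 0 x with h | h
    · have h1 : φ x = x * φ 1 := by
        have := hφhom x h 1; rwa [mul_one] at this
      rw [h1, max_eq_left h, max_eq_right (by linarith), mul_zero, add_zero, mul_comm]
    · have h1 : φ x = -x * φ (-1) := by
        have := hφhom (-x) (by linarith) (-1)
        rwa [mul_neg_one, neg_neg] at this
      rw [h1, max_eq_right h, max_eq_left (by linarith), mul_zero, zero_add, mul_comm]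
  obtain ⟨a, b, ha, hb, key⟩ :
      ∃ a b : ℝ, 0 ≤ a ∧ 0 ≤ b ∧ ∀ x : ℝ, φ x = a * max x 0 + b * max (-x) 0 :=
    ⟨φ 1, φ (-1), hφ0 1, hφ0 (-1), key⟩
  set gp := MeasureTheory.Lp.posPart g with hgp_def
  set gn := MeasureTheory.Lp.negPart g with hgn_def
  have hgp : ⇑gp =ᵐ[μ] fun x => max ((g : X → ℝ) x) 0 := Lp.coeFn_posPart g
  have hgn : ⇑gn =ᵐ[μ] fun x => max (-(g : X → ℝ) x) 0 := Lp.coeFn_negPart_eq_max g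
  have hg_eq : gp - gn = g := by
    apply Lp.ext
    filter_upwards [Lp.coeFn_sub gp gn, hgp, hgn] with x h1 h2 h3
    rw [h1]
    simp only [Pi.sub_apply, h2, h3]
    rcases le_total 0 ((g : X → ℝ) x) with h | h
    · rw [max_eq_left h, max_eq_right (by linarith), sub_zero]
    · rw [max_eq_right h, max_eq_left (by linarith)]; ring
  -- nonnegativity of S gp, S gn
  have hSgp_pos : 0 ≤ᵐ[μ] (S gp : X → ℝ) :=
    hpos gp (hgp.mono fun x hx => by simp [hx, le_max_right])
  have hSgn_pos : 0 ≤ᵐ[μ] (S gn : X → ℝ) :=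
    hpos gn (hgn.mono fun x hx => by simp [hx, le_max_right])
  -- f = S gp - S gn a.e.
  have hf_eq : ⇑f =ᵐ[μ] fun x => (S gp : X → ℝ) x - (S gn : X → ℝ) x := by
    have : S g = S gp - S gn := by rw [← hg_eq, map_sub]
    rw [hfg, this]
    exact Lp.coeFn_sub (S gp) (S gn)
  -- pointwise bounds
  have hub_p : ∀ᵐ x ∂μ, max ((f : X → ℝ) x) 0 ≤ (S gp : X → ℝ) x := by
    filter_upwards [hf_eq, hSgp_pos, hSgn_pos] with x h1 h2 h3
    simp only [Pi.zero_apply] at h2 h3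
    rw [h1]
    exact max_le (by linarith) h2
  have hub_n : ∀ᵐ x ∂μ, max (-(f : X → ℝ) x) 0 ≤ (S gn : X → ℝ) x := by
    filter_upwards [hf_eq, hSgp_pos, hSgn_pos] with x h1 h2 h3
    simp only [Pi.zero_apply] at h2 h3
    rw [h1]
    exact max_le (by linarith) h3
  -- integrability
  have hfi : Integrable (f : X → ℝ) μ := L1.integrable_coeFn f
  have hgi : Integrable (g : X → ℝ) μ := L1.integrable_coeFn g
  have hfp : Integrable (fun x => max ((f : X → ℝ) x) 0) μ := hfi.pos_part
  have hfn : Integrable (fun x => max (-(f : X → ℝ) x) 0) μ := hfi.neg.pos_part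
  have hgpI : Integrable (fun x => max ((g : X → ℝ) x) 0) μ := hgi.pos_part
  have hgnI : Integrable (fun x => max (-(g : X → ℝ) x) 0) μ := hgi.neg.pos_part
  -- integral inequalities for positive and negative parts
  have Ip : ∫ x, max ((f : X → ℝ) x) 0 ∂μ ≤ ∫ x, max ((g : X → ℝ) x) 0 ∂μ := by
    calc ∫ x, max ((f : X → ℝ) x) 0 ∂μ ≤ ∫ x, (S gp : X → ℝ) x ∂μ :=
          integral_mono_ae hfp (L1.integrable_coeFn (S gp)) hub_p
      _ = ∫ x, (gp : X → ℝ) x ∂μ := hint gp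
      _ = ∫ x, max ((g : X → ℝ) x) 0 ∂μ := integral_congr_ae hgp
  have In : ∫ x, max (-(f : X → ℝ) x) 0 ∂μ ≤ ∫ x, max (-(g : X → ℝ) x) 0 ∂μ := by
    calc ∫ x, max (-(f : X → ℝ) x) 0 ∂μ ≤ ∫ x, (S gn : X → ℝ) x ∂μ :=
          integral_mono_ae hfn (L1.integrable_coeFn (S gn)) hub_n
      _ = ∫ x, (gn : X → ℝ) x ∂μ := hint gn
      _ = ∫ x, max (-(g : X → ℝ) x) 0 ∂μ := integral_congr_ae hgn
  -- assemble
  have hdecomp : ∀ (h : Lp ℝ 1 μ),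
      ∫ x, φ ((h : X → ℝ) x) ∂μ
        = a * ∫ x, max ((h : X → ℝ) x) 0 ∂μ + b * ∫ x, max (-(h : X → ℝ) x) 0 ∂μ := by
    intro h
    have hi : Integrable (h : X → ℝ) μ := L1.integrable_coeFn h
    have hn : Integrable (fun x => max (-(h : X → ℝ) x) 0) μ := by
      simpa using hi.neg.pos_part
    simp_rw [key]
    rw [integral_add (hi.pos_part.const_mul a) (hn.const_mul b),
      integral_const_mul, integral_const_mul]
  rw [hdecomp f, hdecomp g]
  exact add_le_add (mul_le_mul_of_nonneg_left Ip ha) (mul_le_mul_of_nonneg_left In hb)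
end

section
/- Let (X, μ) be a σ-finite measure space, P = {A_n : n ∈ ℕ} a countable measurable partition of X with 0 < μ(A_n) < ∞ for all n, and G_P f = Σ_n (μ(A_n)⁻¹ ∫_{A_n} f dμ) χ_{A_n}. If S is a semi-doubly stochastic operator on L¹(X,μ), then the composition G_P ∘ S is a semi-doubly stochastic integral operator: there exists a measurable K : X × X → [0,∞) with ∫_X K(x,y) dμ(x) = 1 for a.e. y and ∫_X K(x,y) dμ(y) ≤ 1 for a.e. x, such that for every f ∈ L¹(X,μ), (G_P(Sf))(x) = ∫_X K(x,y) f(y) dμ(y) for almost every x. -/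
open MeasureTheory
open scoped ENNReal NNReal

namespace SDSAux

open Set Filter Topology
open scoped ENNReal NNReal

variable {X : Type*} [MeasurableSpace X] {μ : Measure X}

open scoped Classical in
/-- `∫_E S χ_B dμ`, with junk value `0` for bad `B`. -/
noncomputable def nu (S : Lp ℝ 1 μ →L[ℝ] Lp ℝ 1 μ) (E B : Set X) : ℝ :=
  if h : MeasurableSet B ∧ μ B ≠ ⊤ then
    ∫ x in E, (S (indicatorConstLp 1 h.1 h.2 (1 : ℝ)) : X → ℝ) x ∂μ
  else 0

variable (S : Lp ℝ 1 μ →L[ℝ] Lp ℝ 1 μ)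

theorem nu_of {B : Set X} (E : Set X) (hB : MeasurableSet B) (hBf : μ B ≠ ⊤) :
    nu S E B = ∫ x in E, (S (indicatorConstLp 1 hB hBf (1 : ℝ)) : X → ℝ) x ∂μ :=
by
  rw [nu, dif_pos ⟨hB, hBf⟩]

theorem chi_nonneg {B : Set X} (hB : MeasurableSet B) (hBf : μ B ≠ ⊤) :
    0 ≤ᵐ[μ] ((indicatorConstLp 1 hB hBf (1 : ℝ) : Lp ℝ 1 μ) : X → ℝ) := by
  filter_upwards [indicatorConstLp_coeFn (p := 1) (hs := hB) (hμs := hBf) (c := (1:ℝ))] with x hx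
  rw [hx]
  exact Set.indicator_nonneg (fun _ _ => zero_le_one) x

variable (hS : IsSemiDoublyStochastic S)
include hS

theorem Schi_nonneg {B : Set X} (hB : MeasurableSet B) (hBf : μ B ≠ ⊤) :
    0 ≤ᵐ[μ] ((S (indicatorConstLp 1 hB hBf (1 : ℝ)) : Lp ℝ 1 μ) : X → ℝ) :=
  hS.1 _ (chi_nonneg hB hBf)

theorem nu_nonneg (E B : Set X) : 0 ≤ nu S E B := by
  rw [nu]
  split
  · next h =>
    exact integral_nonneg_of_ae (ae_restrict_of_ae (Schi_nonneg S hS h.1 h.2))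
  · exact le_refl 0

theorem nu_le_toReal (E B : Set X) : nu S E B ≤ (μ B).toReal := by
  rw [nu]
  split
  · next h =>
    calc ∫ x in E, (S (indicatorConstLp 1 h.1 h.2 (1:ℝ)) : X → ℝ) x ∂μ
        ≤ ∫ x, (S (indicatorConstLp 1 h.1 h.2 (1:ℝ)) : X → ℝ) x ∂μ :=
          setIntegral_le_integral (L1.integrable_coeFn _) (Schi_nonneg S hS h.1 h.2)
      _ = ∫ x, (indicatorConstLp 1 h.1 h.2 (1:ℝ) : X → ℝ) x ∂μ := hS.2.1 _
      _ = (μ B).toReal := by rw [integral_indicatorConstLp h.1 h.2]; simp; rfl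
  · exact ENNReal.toReal_nonneg

omit hS in
theorem nu_empty (E : Set X) : nu S E (∅ : Set X) = 0 := by
  rw [nu_of S E MeasurableSet.empty (by simp)]
  have h0 : indicatorConstLp 1 MeasurableSet.empty (by simp : μ (∅ : Set X) ≠ ⊤) (1 : ℝ)
      = (0 : Lp ℝ 1 μ) := by
    apply Lp.ext
    filter_upwards [indicatorConstLp_coeFn (p := 1) (hs := MeasurableSet.empty)
      (hμs := (by simp : μ (∅ : Set X) ≠ ⊤)) (c := (1:ℝ)), Lp.coeFn_zero ℝ 1 μ] with x hx hx0
    simp [hx, hx0]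
  rw [h0, map_zero]
  rw [integral_congr_ae (ae_restrict_of_ae (Lp.coeFn_zero ℝ 1 μ))]
  simp

omit hS in
theorem nu_union {B C : Set X} (E : Set X) (hB : MeasurableSet B) (hC : MeasurableSet C)
    (hBf : μ B ≠ ⊤) (hCf : μ C ≠ ⊤) (hd : Disjoint B C) :
    nu S E (B ∪ C) = nu S E B + nu S E C := by
  rw [nu_of S E (hB.union hC) (measure_union_ne_top hBf hCf), nu_of S E hB hBf,
    nu_of S E hC hCf, indicatorConstLp_disjoint_union hB hC hBf hCf hd (1:ℝ), map_add]
  rw [integral_congr_ae (ae_restrict_of_ae (Lp.coeFn_add (S (indicatorConstLp 1 hB hBf 1))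
          (S (indicatorConstLp 1 hC hCf 1))))]
  exact integral_add ((L1.integrable_coeFn _).integrableOn) ((L1.integrable_coeFn _).integrableOn)

omit hS in
theorem nu_biUnion (E : Set X) (C : ℕ → Set X) (hC : ∀ i, MeasurableSet (C i))
    (hd : Pairwise (Function.onFun Disjoint C)) (hCf : ∀ i, μ (C i) ≠ ⊤) (N : ℕ) :
    nu S E (⋃ i ∈ Finset.range N, C i) = ∑ i ∈ Finset.range N, nu S E (C i) := by
  induction N with
  | zero => simpa using nu_empty S E
  | succ N ih =>
    have hU : (⋃ i ∈ Finset.range (N+1), C i) = (⋃ i ∈ Finset.range N, C i) ∪ C N := by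
      rw [Finset.range_add_one]
      simp [Set.biUnion_insert, Set.union_comm]
    have hUm : MeasurableSet (⋃ i ∈ Finset.range N, C i) :=
      MeasurableSet.biUnion (Finset.range N).countable_toSet (fun i _ => hC i)
    have hUf : μ (⋃ i ∈ Finset.range N, C i) ≠ ⊤ := by
      refine ((measure_biUnion_finset_le _ _).trans_lt ?_).ne
      exact ENNReal.sum_lt_top.2 (fun i _ => (hCf i).lt_top)
    have hdU : Disjoint (⋃ i ∈ Finset.range N, C i) (C N) := by
      rw [Set.disjoint_iUnion_left]
      intro i
      rw [Set.disjoint_iUnion_left]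
      intro hi
      exact hd (by simp at hi; omega)
    rw [hU, nu_union S E hUm (hC N) hUf (hCf N) hdU, ih, Finset.sum_range_succ]

theorem nu_hasSum (E : Set X) (C : ℕ → Set X) (hC : ∀ i, MeasurableSet (C i))
    (hd : Pairwise (Function.onFun Disjoint C)) (hfin : μ (⋃ i, C i) ≠ ⊤) :
    HasSum (fun i => nu S E (C i)) (nu S E (⋃ i, C i)) := by
  have hCf : ∀ i, μ (C i) ≠ ⊤ :=
    fun i => ((measure_mono (Set.subset_iUnion C i)).trans_lt hfin.lt_top).ne
  set R : ℕ → Set X := fun N => ⋃ i, C (i + N) with hR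
  have hRmeas : ∀ N, MeasurableSet (R N) := fun N => MeasurableSet.iUnion (fun i => hC _)
  have hRsub : ∀ N, R N ⊆ ⋃ i, C i := fun N => Set.iUnion_subset fun i => Set.subset_iUnion C _
  have hRf : ∀ N, μ (R N) ≠ ⊤ := fun N => ((measure_mono (hRsub N)).trans_lt hfin.lt_top).ne
  have hsplit : ∀ N, (⋃ i, C i) = (⋃ i ∈ Finset.range N, C i) ∪ R N := by
    intro N
    apply Set.Subset.antisymm
    · intro x hx
      rcases Set.mem_iUnion.1 hx with ⟨i, hi⟩
      rcases lt_or_ge i N with h | h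
      · exact Or.inl (Set.mem_biUnion (Finset.mem_range.2 h) hi)
      · exact Or.inr (Set.mem_iUnion.2 ⟨i - N, by rwa [Nat.sub_add_cancel h]⟩)
    · intro x hx
      rcases hx with hx | hx
      · obtain ⟨i, _, hxi⟩ := Set.mem_iUnion₂.1 hx
        exact Set.mem_iUnion.2 ⟨i, hxi⟩
      · rcases Set.mem_iUnion.1 hx with ⟨i, hi⟩
        exact Set.mem_iUnion.2 ⟨i + N, hi⟩
  have hUm : ∀ N, MeasurableSet (⋃ i ∈ Finset.range N, C i) :=
    fun N => MeasurableSet.biUnion (Finset.range N).countable_toSet (fun i _ => hC i)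
  have hUf : ∀ N, μ (⋃ i ∈ Finset.range N, C i) ≠ ⊤ := fun N => by
    refine ((measure_biUnion_finset_le _ _).trans_lt ?_).ne
    exact ENNReal.sum_lt_top.2 (fun i _ => (hCf i).lt_top)
  have hdU : ∀ N, Disjoint (⋃ i ∈ Finset.range N, C i) (R N) := by
    intro N
    rw [Set.disjoint_iUnion_left]
    intro i
    rw [Set.disjoint_iUnion_left]
    intro hi
    rw [hR, Set.disjoint_iUnion_right]
    intro j
    exact hd (by simp at hi; omega)
  have key : ∀ N, nu S E (⋃ i, C i)
      = (∑ i ∈ Finset.range N, nu S E (C i)) + nu S E (R N) := by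
    intro N
    rw [hsplit N, nu_union S E (hUm N) (hRmeas N) (hUf N) (hRf N) (hdU N),
      nu_biUnion S E C hC hd hCf N]
  have hμR : Tendsto (fun N => μ (R N)) atTop (𝓝 0) := by
    have hsum : ∑' i, μ (C i) ≠ ⊤ := by
      rw [← measure_iUnion hd hC]; exact hfin
    have h1 := ENNReal.tendsto_sum_nat_add (fun i => μ (C i)) hsum
    have h2 : ∀ N, μ (R N) = ∑' i, μ (C (i + N)) := by
      intro N
      refine measure_iUnion (fun i j hij => hd (by omega)) (fun i => hC _)
    simpa [h2] using h1
  have hnuR : Tendsto (fun N => nu S E (R N)) atTop (𝓝 0) := by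
    have htr : Tendsto (fun N => (μ (R N)).toReal) atTop (𝓝 0) := by
      have := (ENNReal.tendsto_toReal (a := 0) (by simp)).comp hμR
      simpa [Function.comp_def] using this
    exact squeeze_zero (fun N => nu_nonneg S hS E _) (fun N => nu_le_toReal S hS E _) htr
  rw [hasSum_iff_tendsto_nat_of_nonneg (fun i => nu_nonneg S hS E _)]
  have heq : (fun N => ∑ i ∈ Finset.range N, nu S E (C i))
      = fun N => nu S E (⋃ i, C i) - nu S E (R N) := by
    funext N; linarith [key N]
  rw [heq]
  simpa using tendsto_const_nhds.sub hnuR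

/-- disjointified spanning sets -/
noncomputable def part (μ : Measure X) [SigmaFinite μ] (k : ℕ) : Set X :=
  disjointed (spanningSets μ) k

omit hS in
theorem part_meas (μ : Measure X) [SigmaFinite μ] (k : ℕ) : MeasurableSet (part μ k) :=
  MeasurableSet.disjointed (measurableSet_spanningSets μ) k

omit hS in
theorem part_disj (μ : Measure X) [SigmaFinite μ] : Pairwise (Function.onFun Disjoint (part μ)) :=
  disjoint_disjointed _

omit hS in
theorem part_iUnion (μ : Measure X) [SigmaFinite μ] : (⋃ k, part μ k) = Set.univ := by
  simp only [part]
  rw [iUnion_disjointed]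
  exact iUnion_spanningSets μ

omit hS in
theorem part_fin (μ : Measure X) [SigmaFinite μ] (k : ℕ) : μ (part μ k) ≠ ⊤ :=
  ((measure_mono (disjointed_subset _ k)).trans_lt (measure_spanningSets_lt_top μ k)).ne

variable [SigmaFinite μ]

/-- the measure `B ↦ ∫_E S χ_{B ∩ part k}` -/
noncomputable def nuMeasK (hS : IsSemiDoublyStochastic S) (E : Set X) (k : ℕ) : Measure X :=
  Measure.ofMeasurable (fun B _ => ENNReal.ofReal (nu S E (B ∩ part μ k)))
    (by simp [nu_empty S E])
    (by
      intro f hfm hfd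
      have hU : (⋃ i, f i) ∩ part μ k = ⋃ i, (f i ∩ part μ k) := Set.iUnion_inter _ _
      have h := nu_hasSum S hS E (fun i => f i ∩ part μ k)
        (fun i => (hfm i).inter (part_meas μ k))
        (fun i j hij => ((hfd hij).mono Set.inter_subset_left Set.inter_subset_left))
        (by
          refine ((measure_mono ?_).trans_lt (part_fin μ k).lt_top).ne
          exact Set.iUnion_subset fun i => Set.inter_subset_right)
      rw [hU, ← h.tsum_eq, ENNReal.ofReal_tsum_of_nonneg (fun i => nu_nonneg S hS E _)
        h.summable])

/-- the measure `B ↦ ∫_E S χ_B` -/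
noncomputable def nuMeas (hS : IsSemiDoublyStochastic S) (E : Set X) : Measure X :=
  Measure.sum (fun k => nuMeasK S hS E k)

theorem nuMeasK_apply (E : Set X) (k : ℕ) {B : Set X} (hB : MeasurableSet B) :
    nuMeasK S hS E k B = ENNReal.ofReal (nu S E (B ∩ part μ k)) :=
  Measure.ofMeasurable_apply B hB

theorem nuMeas_apply (E : Set X) {B : Set X} (hB : MeasurableSet B) (hBf : μ B ≠ ⊤) :
    nuMeas S hS E B = ENNReal.ofReal (nu S E B) := by
  rw [nuMeas, Measure.sum_apply _ hB]
  simp_rw [nuMeasK_apply S hS E _ hB]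
  have hU : (⋃ k, B ∩ part μ k) = B := by
    rw [← Set.inter_iUnion, part_iUnion (μ := μ), Set.inter_univ]
  have h := nu_hasSum S hS E (fun k => B ∩ part μ k)
    (fun k => hB.inter (part_meas μ k))
    (fun i j hij => ((part_disj μ hij).mono Set.inter_subset_right Set.inter_subset_right))
    (by rw [hU]; exact hBf)
  rw [← ENNReal.ofReal_tsum_of_nonneg (fun i => nu_nonneg S hS E _) h.summable, h.tsum_eq, hU]

theorem nuMeas_le (E : Set X) : nuMeas S hS E ≤ μ := by
  refine Measure.le_iff.2 (fun B hB => ?_)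
  rw [nuMeas, Measure.sum_apply _ hB]
  simp_rw [nuMeasK_apply S hS E _ hB]
  calc ∑' k, ENNReal.ofReal (nu S E (B ∩ part μ k))
      ≤ ∑' k, μ (B ∩ part μ k) := by
        refine ENNReal.tsum_le_tsum (fun k => ?_)
        calc ENNReal.ofReal (nu S E (B ∩ part μ k))
            ≤ ENNReal.ofReal (μ (B ∩ part μ k)).toReal :=
              ENNReal.ofReal_le_ofReal (nu_le_toReal S hS E _)
          _ = μ (B ∩ part μ k) := ENNReal.ofReal_toReal
              (((measure_mono Set.inter_subset_right).trans_lt (part_fin μ k).lt_top).ne)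
    _ = μ B := by
        rw [← measure_iUnion
          (fun i j hij => ((part_disj μ hij).mono Set.inter_subset_right Set.inter_subset_right))
          (fun k => hB.inter (part_meas μ k)),
          ← Set.inter_iUnion, part_iUnion (μ := μ), Set.inter_univ]

theorem nuMeas_univ_le {E : Set X} (hE : MeasurableSet E) (hEf : μ E ≠ ⊤) :
    nuMeas S hS E Set.univ ≤ μ E := by
  rw [nuMeas, Measure.sum_apply _ MeasurableSet.univ]
  simp_rw [nuMeasK_apply S hS E _ MeasurableSet.univ, Set.univ_inter]
  rw [ENNReal.tsum_eq_iSup_nat]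
  refine iSup_le (fun N => ?_)
  rw [← ENNReal.ofReal_sum_of_nonneg (fun i _ => nu_nonneg S hS E _),
    ← nu_biUnion S E (part μ) (part_meas μ) (part_disj μ) (part_fin μ) N]
  have hUm : MeasurableSet (⋃ i ∈ Finset.range N, part μ i) :=
    MeasurableSet.biUnion (Finset.range N).countable_toSet (fun i _ => part_meas μ i)
  have hUf : μ (⋃ i ∈ Finset.range N, part μ i) < ⊤ :=
    (measure_biUnion_finset_le _ _).trans_lt
      (ENNReal.sum_lt_top.2 (fun i _ => (part_fin μ i).lt_top))
  calc ENNReal.ofReal (nu S E (⋃ i ∈ Finset.range N, part μ i))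
      ≤ ENNReal.ofReal (μ E).toReal := by
        refine ENNReal.ofReal_le_ofReal ?_
        rw [nu_of S E hUm hUf.ne]
        exact hS.2.2 E _ hE hEf.lt_top hUm hUf
    _ ≤ μ E := ENNReal.ofReal_toReal_le

omit hS in
theorem abs_setIntegral_le (E : Set X) (u : Lp ℝ 1 μ) :
    |∫ x in E, (u : X → ℝ) x ∂μ| ≤ ‖u‖ := by
  rw [← Real.norm_eq_abs]
  calc ‖∫ x in E, (u : X → ℝ) x ∂μ‖ ≤ ∫ x in E, ‖(u : X → ℝ) x‖ ∂μ :=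
        norm_integral_le_integral_norm _
    _ ≤ ∫ x, ‖(u : X → ℝ) x‖ ∂μ := setIntegral_le_integral (L1.integrable_coeFn u).norm
        (Filter.Eventually.of_forall fun x => norm_nonneg _)
    _ = ‖u‖ := (L1.norm_eq_integral_norm u).symm

omit hS in
theorem cont_setIntegral (E : Set X) :
    Continuous fun u : Lp ℝ 1 μ => ∫ x in E, (u : X → ℝ) x ∂μ := by
  refine (LipschitzWith.of_dist_le_mul (K := 1) ?_).continuous
  intro u v
  rw [NNReal.coe_one, one_mul, Real.dist_eq, dist_eq_norm]
  have hsub : ∫ x in E, (u : X → ℝ) x ∂μ - ∫ x in E, (v : X → ℝ) x ∂μ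
      = ∫ x in E, ((u - v : Lp ℝ 1 μ) : X → ℝ) x ∂μ := by
    rw [integral_congr_ae (ae_restrict_of_ae (Lp.coeFn_sub u v))]
    exact (integral_sub (L1.integrable_coeFn u).integrableOn
      (L1.integrable_coeFn v).integrableOn).symm
  rw [hsub]
  exact abs_setIntegral_le (μ := μ) E (u - v)

omit hS in
theorem integrable_mul_of_bound {w : X → ℝ} (hw : Measurable w)
    (hw1 : ∀ᵐ y ∂μ, |w y| ≤ 1) (u : Lp ℝ 1 μ) :
    Integrable (fun y => w y * (u : X → ℝ) y) μ := by
  refine Integrable.mono (L1.integrable_coeFn u)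
    (hw.aestronglyMeasurable.mul (Lp.aestronglyMeasurable u)) ?_
  filter_upwards [hw1] with y hy
  rw [Real.norm_eq_abs, Real.norm_eq_abs, abs_mul]
  calc |w y| * |(u : X → ℝ) y| ≤ 1 * |(u : X → ℝ) y| := by
        exact mul_le_mul_of_nonneg_right hy (abs_nonneg _)
    _ = |(u : X → ℝ) y| := one_mul _

omit hS in
theorem abs_integral_mul_le {w : X → ℝ} (hw : Measurable w)
    (hw1 : ∀ᵐ y ∂μ, |w y| ≤ 1) (u : Lp ℝ 1 μ) :
    |∫ y, w y * (u : X → ℝ) y ∂μ| ≤ ‖u‖ := by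
  rw [← Real.norm_eq_abs]
  calc ‖∫ y, w y * (u : X → ℝ) y ∂μ‖ ≤ ∫ y, ‖w y * (u : X → ℝ) y‖ ∂μ :=
        norm_integral_le_integral_norm _
    _ ≤ ∫ y, ‖(u : X → ℝ) y‖ ∂μ := by
        refine integral_mono_of_nonneg (Filter.Eventually.of_forall fun y => norm_nonneg _)
          (L1.integrable_coeFn u).norm ?_
        filter_upwards [hw1] with y hy
        rw [Real.norm_eq_abs, Real.norm_eq_abs, abs_mul]
        calc |w y| * |(u : X → ℝ) y| ≤ 1 * |(u : X → ℝ) y| :=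
              mul_le_mul_of_nonneg_right hy (abs_nonneg _)
          _ = |(u : X → ℝ) y| := one_mul _
    _ = ‖u‖ := (L1.norm_eq_integral_norm u).symm

omit hS in
theorem cont_integral_mul {w : X → ℝ} (hw : Measurable w) (hw1 : ∀ᵐ y ∂μ, |w y| ≤ 1) :
    Continuous fun u : Lp ℝ 1 μ => ∫ y, w y * (u : X → ℝ) y ∂μ := by
  refine (LipschitzWith.of_dist_le_mul (K := 1) ?_).continuous
  intro u v
  rw [NNReal.coe_one, one_mul, Real.dist_eq, dist_eq_norm]
  have hsub : ∫ y, w y * (u : X → ℝ) y ∂μ - ∫ y, w y * (v : X → ℝ) y ∂μ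
      = ∫ y, w y * ((u - v : Lp ℝ 1 μ) : X → ℝ) y ∂μ := by
    rw [integral_congr_ae (show (fun y => w y * ((u - v : Lp ℝ 1 μ) : X → ℝ) y)
      =ᵐ[μ] fun y => w y * (u : X → ℝ) y - w y * (v : X → ℝ) y from by
        filter_upwards [Lp.coeFn_sub u v] with y hy
        rw [hy, Pi.sub_apply, mul_sub])]
    exact (integral_sub (integrable_mul_of_bound (μ := μ) hw hw1 u)
      (integrable_mul_of_bound (μ := μ) hw hw1 v)).symm
  rw [hsub]
  exact abs_integral_mul_le (μ := μ) hw hw1 (u - v)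

theorem star {E : Set X} (hE : MeasurableSet E) (hEf : μ E ≠ ⊤) (f : Lp ℝ 1 μ) :
    ∫ x in E, (S f : X → ℝ) x ∂μ
      = ∫ y, ((nuMeas S hS E).rnDeriv μ y).toReal * (f : X → ℝ) y ∂μ := by
  haveI hfinM : IsFiniteMeasure (nuMeas S hS E) :=
    ⟨(nuMeas_univ_le S hS hE hEf).trans_lt hEf.lt_top⟩
  set w : X → ℝ := fun y => ((nuMeas S hS E).rnDeriv μ y).toReal with hwdef
  have hwmeas : Measurable w := (Measure.measurable_rnDeriv _ _).ennreal_toReal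
  have hac : nuMeas S hS E ≪ μ := Measure.absolutelyContinuous_of_le (nuMeas_le S hS E)
  have hle1 : (nuMeas S hS E).rnDeriv μ ≤ᵐ[μ] 1 :=
    Measure.rnDeriv_le_one_of_le (nuMeas_le S hS E)
  have hw1 : ∀ᵐ y ∂μ, |w y| ≤ 1 := by
    filter_upwards [hle1] with y hy
    rw [hwdef, abs_of_nonneg ENNReal.toReal_nonneg]
    calc ((nuMeas S hS E).rnDeriv μ y).toReal ≤ (1 : ℝ≥0∞).toReal :=
          ENNReal.toReal_mono ENNReal.one_ne_top hy
      _ = 1 := by simp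
  have hwint : ∀ s : Set X, MeasurableSet s → μ s ≠ ⊤ → ∫ y in s, w y ∂μ = nu S E s := by
    intro s hs hsf
    rw [hwdef]
    rw [integral_toReal ((Measure.measurable_rnDeriv _ _).aemeasurable)
      (ae_restrict_of_ae (Measure.rnDeriv_lt_top _ _)),
      Measure.setLIntegral_rnDeriv' hac hs, nuMeas_apply S hS E hs hsf,
      ENNReal.toReal_ofReal (nu_nonneg S hS E s)]
  refine Lp.induction (p := 1) ENNReal.one_ne_top
    (fun u : Lp ℝ 1 μ => ∫ x in E, (S u : X → ℝ) x ∂μ = ∫ y, w y * (u : X → ℝ) y ∂μ)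
    ?_ ?_ ?_ f
  · intro c s hs hμs
    rw [Lp.simpleFunc.coe_indicatorConst]
    have hsm : indicatorConstLp 1 hs hμs.ne c
        = c • indicatorConstLp 1 hs hμs.ne (1 : ℝ) := by
      apply Lp.ext
      filter_upwards [indicatorConstLp_coeFn (p := 1) (hs := hs) (hμs := hμs.ne) (c := c),
        Lp.coeFn_smul c (indicatorConstLp 1 hs hμs.ne (1 : ℝ)),
        indicatorConstLp_coeFn (p := 1) (hs := hs) (hμs := hμs.ne) (c := (1 : ℝ))]
        with y h1 h2 h3
      rw [h1, h2, Pi.smul_apply, h3, smul_eq_mul]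
      by_cases hy : y ∈ s <;> simp [Set.indicator, hy]
    have hL : ∫ x in E, (S (indicatorConstLp 1 hs hμs.ne c) : X → ℝ) x ∂μ = c * nu S E s := by
      rw [hsm, _root_.map_smul]
      rw [integral_congr_ae (ae_restrict_of_ae
        (Lp.coeFn_smul c (S (indicatorConstLp 1 hs hμs.ne (1 : ℝ)))))]
      simp_rw [Pi.smul_apply, smul_eq_mul]
      rw [integral_const_mul, ← nu_of S E hs hμs.ne]
    have hR : ∫ y, w y * (indicatorConstLp 1 hs hμs.ne c : X → ℝ) y ∂μ = c * nu S E s := by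
      rw [integral_congr_ae (show (fun y => w y * (indicatorConstLp 1 hs hμs.ne c : X → ℝ) y)
        =ᵐ[μ] fun y => s.indicator (fun y => c * w y) y from by
          filter_upwards [indicatorConstLp_coeFn (p := 1) (hs := hs) (hμs := hμs.ne) (c := c)]
            with y h1
          rw [h1]
          by_cases hy : y ∈ s <;> simp [Set.indicator, hy, mul_comm])]
      rw [integral_indicator hs, integral_const_mul, hwint s hs hμs.ne]
    rw [hL, hR]
  · intro u v hu hv hdisj Pu Pv
    rw [map_add]
    rw [integral_congr_ae (ae_restrict_of_ae (Lp.coeFn_add (S (hu.toLp u)) (S (hv.toLp v))))]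
    rw [integral_congr_ae (show (fun y => w y * ((hu.toLp u + hv.toLp v : Lp ℝ 1 μ) : X → ℝ) y)
      =ᵐ[μ] fun y => w y * (hu.toLp u : X → ℝ) y + w y * (hv.toLp v : X → ℝ) y from by
        filter_upwards [Lp.coeFn_add (hu.toLp u) (hv.toLp v)] with y hy
        rw [hy, Pi.add_apply, mul_add])]
    simp only [Pi.add_apply]
    rw [integral_add (L1.integrable_coeFn _).integrableOn (L1.integrable_coeFn _).integrableOn,
      integral_add (integrable_mul_of_bound (μ := μ) hwmeas hw1 _)
        (integrable_mul_of_bound (μ := μ) hwmeas hw1 _), Pu, Pv]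
  · exact isClosed_eq ((cont_setIntegral (μ := μ) E).comp S.continuous)
      (cont_integral_mul (μ := μ) hwmeas hw1)

theorem key_total (A : ℕ → Set X) (hAmeas : ∀ n, MeasurableSet (A n))
    (hAdisj : Pairwise (Function.onFun Disjoint A)) (hAcover : (⋃ n, A n) = Set.univ)
    {C : Set X} (hC : MeasurableSet C) (hCf : μ C ≠ ⊤) :
    ∑' n, nuMeas S hS (A n) C = μ C := by
  simp_rw [nuMeas_apply S hS _ hC hCf]
  have hint : HasSum (fun n => ∫ x in A n, (S (indicatorConstLp 1 hC hCf (1:ℝ)) : X → ℝ) x ∂μ)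
      (∫ x in ⋃ n, A n, (S (indicatorConstLp 1 hC hCf (1:ℝ)) : X → ℝ) x ∂μ) :=
    hasSum_integral_iUnion hAmeas hAdisj ((L1.integrable_coeFn _).integrableOn)
  rw [hAcover, Measure.restrict_univ] at hint
  have htot : ∫ x, (S (indicatorConstLp 1 hC hCf (1:ℝ)) : X → ℝ) x ∂μ = (μ C).toReal := by
    rw [hS.2.1, integral_indicatorConstLp hC hCf]; simp; rfl
  rw [htot] at hint
  have hnu : (fun n => nu S (A n) C)
      = fun n => ∫ x in A n, (S (indicatorConstLp 1 hC hCf (1:ℝ)) : X → ℝ) x ∂μ :=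
    funext fun n => nu_of S (A n) hC hCf
  calc (∑' n, ENNReal.ofReal (nu S (A n) C))
      = ENNReal.ofReal (∑' n, nu S (A n) C) := by
        rw [ENNReal.ofReal_tsum_of_nonneg (fun n => nu_nonneg S hS _ _)]
        rw [hnu]; exact hint.summable
    _ = ENNReal.ofReal (μ C).toReal := by rw [hnu, hint.tsum_eq]
    _ = μ C := ENNReal.ofReal_toReal hCf

theorem sum_nuMeas (A : ℕ → Set X) (hAmeas : ∀ n, MeasurableSet (A n))
    (hAdisj : Pairwise (Function.onFun Disjoint A)) (hAcover : (⋃ n, A n) = Set.univ) :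
    Measure.sum (fun n => nuMeas S hS (A n)) = μ := by
  ext B hB
  rw [Measure.sum_apply _ hB]
  have hUB : (⋃ k, B ∩ part μ k) = B := by
    rw [← Set.inter_iUnion, part_iUnion μ, Set.inter_univ]
  have hdisjB : Pairwise (Function.onFun Disjoint (fun k => B ∩ part μ k)) :=
    fun i j hij => ((part_disj μ hij).mono Set.inter_subset_right Set.inter_subset_right)
  have hmeasB : ∀ k, MeasurableSet (B ∩ part μ k) := fun k => hB.inter (part_meas μ k)
  have h1 : ∀ n, nuMeas S hS (A n) B = ∑' k, nuMeas S hS (A n) (B ∩ part μ k) := by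
    intro n
    conv_lhs => rw [← hUB]
    exact measure_iUnion hdisjB hmeasB
  simp_rw [h1]
  rw [ENNReal.tsum_comm]
  have h2 : ∀ k, ∑' n, nuMeas S hS (A n) (B ∩ part μ k) = μ (B ∩ part μ k) := fun k =>
    key_total S hS A hAmeas hAdisj hAcover (hmeasB k)
      (((measure_mono Set.inter_subset_right).trans_lt (part_fin μ k).lt_top).ne)
  simp_rw [h2]
  conv_rhs => rw [← hUB]
  exact (measure_iUnion hdisjB hmeasB).symm

theorem density_one (A : ℕ → Set X) (hAmeas : ∀ n, MeasurableSet (A n))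
    (hAdisj : Pairwise (Function.onFun Disjoint A)) (hAcover : (⋃ n, A n) = Set.univ)
    (hAfin : ∀ n, μ (A n) ≠ ⊤) :
    ∀ᵐ y ∂μ, (∑' n, (nuMeas S hS (A n)).rnDeriv μ y) = 1 := by
  set g : ℕ → X → ℝ≥0∞ := fun n => (nuMeas S hS (A n)).rnDeriv μ with hg
  have hgmeas : ∀ n, Measurable (g n) := fun n => Measure.measurable_rnDeriv _ _
  have hwd : μ.withDensity (fun y => ∑' n, g n y) = μ := by
    rw [show (fun y => ∑' n, g n y) = ∑' n, g n from funext fun y => (ENNReal.tsum_apply).symm]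
    rw [withDensity_tsum hgmeas]
    have heach : ∀ n, μ.withDensity (g n) = nuMeas S hS (A n) := by
      intro n
      haveI : IsFiniteMeasure (nuMeas S hS (A n)) :=
        ⟨(nuMeas_univ_le S hS (hAmeas n) (hAfin n)).trans_lt (hAfin n).lt_top⟩
      exact Measure.withDensity_rnDeriv_eq _ _
        (Measure.absolutelyContinuous_of_le (nuMeas_le S hS (A n)))
    rw [show (fun n => μ.withDensity (g n)) = fun n => nuMeas S hS (A n) from funext heach]
    exact sum_nuMeas S hS A hAmeas hAdisj hAcover
  have h1 : (fun y => ∑' n, g n y) =ᵐ[μ] μ.rnDeriv μ := by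
    have h2 := Measure.rnDeriv_withDensity μ (Measurable.ennreal_tsum hgmeas)
    rw [hwd] at h2
    exact h2.symm
  filter_upwards [h1, Measure.rnDeriv_self μ] with y hy hy2
  rw [hy, hy2]

end SDSAux

open SDSAux

/-- Let `P = {Aₙ}` be a countable measurable partition of the σ-finite measure space `(X,μ)`
with `0 < μ(Aₙ) < ∞`, and let `G_P f = Σₙ (μ(Aₙ)⁻¹ ∫_{Aₙ} f dμ) χ_{Aₙ}` be the associated
averaging operator.  If `S` is semi-doubly stochastic, then `G_P ∘ S` is a semi-doubly
stochastic integral operator: there is a measurable kernel `K ≥ 0` with `∫ K(x,y) dμ(x) = 1`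
for a.e. `y` and `∫ K(x,y) dμ(y) ≤ 1` for a.e. `x` such that
`(G_P(Sf))(x) = ∫ K(x,y) f(y) dμ(y)` a.e. for every `f ∈ L¹(X,μ)`. -/
theorem averaging_comp_semiDoublyStochastic_is_integral_operator
    {X : Type*} [MeasurableSpace X] (μ : Measure X) [SigmaFinite μ]
    (A : ℕ → Set X) (hAmeas : ∀ n, MeasurableSet (A n))
    (hAdisj : Pairwise (Function.onFun Disjoint A)) (hAcover : ⋃ n, A n = Set.univ)
    (hApos : ∀ n, 0 < μ (A n)) (hAfin : ∀ n, μ (A n) < ⊤)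
    (G : Lp ℝ 1 μ →L[ℝ] Lp ℝ 1 μ)
    (hG : ∀ f : Lp ℝ 1 μ, (G f : X → ℝ) =ᵐ[μ]
      fun x => ∑' n : ℕ,
        Set.indicator (A n) (fun _ => (μ (A n)).toReal⁻¹ * ∫ y in A n, f y ∂μ) x)
    (S : Lp ℝ 1 μ →L[ℝ] Lp ℝ 1 μ) (hS : IsSemiDoublyStochastic S) :
    ∃ K : X → X → ℝ,
      Measurable (Function.uncurry K) ∧ (∀ x y, 0 ≤ K x y) ∧
      (∀ᵐ y ∂μ, ∫⁻ x, ENNReal.ofReal (K x y) ∂μ = 1) ∧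
      (∀ᵐ x ∂μ, ∫⁻ y, ENNReal.ofReal (K x y) ∂μ ≤ 1) ∧
      ∀ f : Lp ℝ 1 μ, (G (S f) : X → ℝ) =ᵐ[μ] fun x => ∫ y, K x y * (f : X → ℝ) y ∂μ := by
  classical
  have hAfin' : ∀ n, μ (A n) ≠ ⊤ := fun n => (hAfin n).ne
  set ν : ℕ → Measure X := fun n => nuMeas S hS (A n) with hν
  set g : ℕ → X → ℝ≥0∞ := fun n => (ν n).rnDeriv μ with hg
  have hgmeas : ∀ n, Measurable (g n) := fun n => Measure.measurable_rnDeriv _ _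
  have hfinM : ∀ n, IsFiniteMeasure (ν n) := fun n =>
    ⟨(nuMeas_univ_le S hS (hAmeas n) (hAfin' n)).trans_lt (hAfin n)⟩
  have hac : ∀ n, ν n ≪ μ := fun n => Measure.absolutelyContinuous_of_le (nuMeas_le S hS (A n))
  set Kε : X → X → ℝ≥0∞ :=
    fun x y => ∑' n, (A n).indicator (1 : X → ℝ≥0∞) x * ((μ (A n))⁻¹ * g n y) with hKε
  set K : X → X → ℝ := fun x y => (Kε x y).toReal with hK
  have hmem : ∀ x : X, ∃ n, x ∈ A n := fun x => by
    have hx : x ∈ ⋃ n, A n := by rw [hAcover]; trivial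
    exact Set.mem_iUnion.1 hx
  have hnotmem : ∀ (m n : ℕ) (x : X), x ∈ A m → n ≠ m → x ∉ A n := fun m n x hx hnm hxn =>
    (Set.disjoint_left.1 (hAdisj hnm) hxn) hx
  have hKε_eq : ∀ (m : ℕ) (x : X), x ∈ A m → ∀ y, Kε x y = (μ (A m))⁻¹ * g m y := by
    intro m x hx y
    have h0 : Kε x y = ∑' n, (A n).indicator (1 : X → ℝ≥0∞) x * ((μ (A n))⁻¹ * g n y) := rfl
    rw [h0]
    rw [tsum_eq_single m (fun n hnm => by
      simp [Set.indicator_of_notMem (hnotmem m n x hx hnm)])]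
    simp [Set.indicator_of_mem hx]
  refine ⟨K, ?_, ?_, ?_, ?_, ?_⟩
  · have huncurry : Function.uncurry K
        = fun p : X × X => (∑' n, (A n).indicator (1 : X → ℝ≥0∞) p.1
            * ((μ (A n))⁻¹ * g n p.2)).toReal := rfl
    rw [huncurry]
    refine Measurable.ennreal_toReal ?_
    refine Measurable.ennreal_tsum (fun n => ?_)
    exact ((measurable_one.indicator (hAmeas n)).comp measurable_fst).mul
      (measurable_const.mul ((hgmeas n).comp measurable_snd))
  · intro x y
    exact ENNReal.toReal_nonneg
  · have hglt : ∀ᵐ y ∂μ, ∀ n, g n y < ⊤ := ae_all_iff.2 (fun n => Measure.rnDeriv_lt_top _ _)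
    have hsum1 := density_one S hS A hAmeas hAdisj hAcover hAfin'
    filter_upwards [hglt, hsum1] with y hylt hysum
    have hfin : ∀ x, Kε x y ≠ ⊤ := by
      intro x
      obtain ⟨m, hm⟩ := hmem x
      rw [hKε_eq m x hm y]
      exact ENNReal.mul_ne_top (ENNReal.inv_ne_top.2 (hApos m).ne') (hylt m).ne
    have hcong : ∀ x, ENNReal.ofReal (K x y) = Kε x y := fun x =>
      ENNReal.ofReal_toReal (hfin x)
    calc ∫⁻ x, ENNReal.ofReal (K x y) ∂μ = ∫⁻ x, Kε x y ∂μ := lintegral_congr hcong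
      _ = ∑' n, ∫⁻ x, (A n).indicator (1 : X → ℝ≥0∞) x * ((μ (A n))⁻¹ * g n y) ∂μ := by
          exact lintegral_tsum (fun n =>
            ((measurable_one.indicator (hAmeas n)).mul measurable_const).aemeasurable)
      _ = ∑' n, g n y := by
          congr 1
          funext n
          have hind : (fun x => (A n).indicator (1 : X → ℝ≥0∞) x * ((μ (A n))⁻¹ * g n y))
              = (A n).indicator (fun _ => (μ (A n))⁻¹ * g n y) := by
            funext x
            by_cases hx : x ∈ A n <;> simp [Set.indicator, hx]
          rw [hind, lintegral_indicator (hAmeas n), setLIntegral_const,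
            mul_comm, ← mul_assoc, ENNReal.mul_inv_cancel (hApos n).ne' (hAfin' n), one_mul]
      _ = 1 := hysum
  · refine Filter.Eventually.of_forall (fun x => ?_)
    obtain ⟨m, hm⟩ := hmem x
    haveI := hfinM m
    calc ∫⁻ y, ENNReal.ofReal (K x y) ∂μ
        ≤ ∫⁻ y, Kε x y ∂μ := lintegral_mono (fun y => ENNReal.ofReal_toReal_le)
      _ = ∫⁻ y, (μ (A m))⁻¹ * g m y ∂μ := lintegral_congr (fun y => hKε_eq m x hm y)
      _ = (μ (A m))⁻¹ * ∫⁻ y, g m y ∂μ := lintegral_const_mul _ (hgmeas m)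
      _ ≤ (μ (A m))⁻¹ * μ (A m) := by
          refine mul_le_mul_right ?_ _
          have h0 : ∫⁻ y, g m y ∂μ = ν m Set.univ := Measure.lintegral_rnDeriv (hac m)
          rw [h0]
          exact nuMeas_univ_le S hS (hAmeas m) (hAfin' m)
      _ = 1 := ENNReal.inv_mul_cancel (hApos m).ne' (hAfin' m)
  · intro f
    filter_upwards [hG (S f)] with x hx
    rw [hx]
    obtain ⟨m, hm⟩ := hmem x
    rw [tsum_eq_single m (fun n hnm =>
      Set.indicator_of_notMem (hnotmem m n x hm hnm) _)]
    rw [Set.indicator_of_mem hm]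
    rw [star S hS (hAmeas m) (hAfin' m) f]
    have hKxy : ∀ y, K x y = (μ (A m)).toReal⁻¹ * (g m y).toReal := fun y => by
      have h0 : K x y = (Kε x y).toReal := rfl
      rw [h0, hKε_eq m x hm y, ENNReal.toReal_mul, ENNReal.toReal_inv]
    rw [show (fun y => K x y * (f : X → ℝ) y)
        = fun y => (μ (A m)).toReal⁻¹ * ((g m y).toReal * (f : X → ℝ) y) from
      funext fun y => by rw [hKxy y, mul_assoc]]
    rw [integral_const_mul]
end

section
/- Let (X, μ) be a σ-finite measure space and f, g ∈ L¹(X,μ) nonnegative. If there exists a sequence (S_k)_{k∈ℕ} of semi-doubly stochastic operators on L¹(X,μ) with ‖S_k f − g‖₁ → 0, then ∫_X g dμ = ∫_X f dμ and for every increasing convex function φ : [0,∞) → [0,∞) with φ(0) = 0, one has ∫_X φ∘g dμ ≤ ∫_X φ∘f dμ (the integrals of these nonnegative measurable functions taken in [0,∞]). -/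
open MeasureTheory Filter Topology

namespace SDSaux

set_option linter.unusedSectionVars false

/-- mesh size -/
noncomputable def d (n : ℕ) : ℝ := 1 / (n + 1)

lemma d_pos (n : ℕ) : 0 < d n := by unfold d; positivity

/-- chord slope of `φ` on `[i·d n, (i+1)·d n]` -/
noncomputable def s (φ : ℝ → ℝ) (n i : ℕ) : ℝ :=
  (φ (((i : ℝ) + 1) * d n) - φ ((i : ℝ) * d n)) / d n

/-- increments of slopes -/
noncomputable def a (φ : ℝ → ℝ) (n : ℕ) : ℕ → ℝ
  | 0 => s φ n 0
  | (i + 1) => s φ n (i + 1) - s φ n i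

lemma sum_a (φ : ℝ → ℝ) (n j : ℕ) :
    ∑ i ∈ Finset.range (j + 1), a φ n i = s φ n j := by
  induction j with
  | zero => simp [a]
  | succ j ih => rw [Finset.sum_range_succ, ih]; simp [a]

variable {φ : ℝ → ℝ} (hm : MonotoneOn φ (Set.Ici 0)) (hc : ConvexOn ℝ (Set.Ici 0) φ)
  (h0 : ∀ x : ℝ, 0 ≤ x → 0 ≤ φ x) (hz : φ 0 = 0)

include hm in
omit hc in
lemma s_nonneg (n i : ℕ) : 0 ≤ s φ n i := by
  have hd := d_pos n
  have h1 : (i : ℝ) * d n ≤ ((i : ℝ) + 1) * d n := by nlinarith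
  have hx : (i : ℝ) * d n ∈ Set.Ici (0 : ℝ) :=
    Set.mem_Ici.2 (mul_nonneg (Nat.cast_nonneg i) hd.le)
  have hy : ((i : ℝ) + 1) * d n ∈ Set.Ici (0 : ℝ) :=
    Set.mem_Ici.2 (mul_nonneg (by positivity) hd.le)
  have := hm hx hy h1
  unfold s
  exact div_nonneg (by linarith) hd.le

include hm hc in
lemma s_mono (n i : ℕ) : s φ n i ≤ s φ n (i + 1) := by
  have hd := d_pos n
  have h1 : ((i : ℝ)) * d n < ((i : ℝ) + 1) * d n := by nlinarith
  have h2 : ((i : ℝ) + 1) * d n < ((i : ℝ) + 2) * d n := by nlinarith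
  have hx : ((i : ℝ)) * d n ∈ Set.Ici (0 : ℝ) :=
    Set.mem_Ici.2 (mul_nonneg (Nat.cast_nonneg i) hd.le)
  have hzz : ((i : ℝ) + 2) * d n ∈ Set.Ici (0 : ℝ) :=
    Set.mem_Ici.2 (mul_nonneg (by positivity) hd.le)
  have h := hc.slope_mono_adjacent hx hzz h1 h2
  have e1 : ((i : ℝ) + 1) * d n - (i : ℝ) * d n = d n := by ring
  have e2 : ((i : ℝ) + 2) * d n - ((i : ℝ) + 1) * d n = d n := by ring
  rw [e1, e2] at h
  unfold s
  push_cast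
  have e3 : ((i : ℝ) + 1 + 1) = (i : ℝ) + 2 := by ring
  rw [e3]
  exact h

include hm hc in
lemma a_nonneg (n i : ℕ) : 0 ≤ a φ n i := by
  cases i with
  | zero => exact s_nonneg hm n 0
  | succ i => simpa [a] using sub_nonneg.2 (s_mono hm hc n i)

include hz in
lemma ident (n : ℕ) : ∀ j : ℕ,
    ∑ i ∈ Finset.range j, a φ n i * (((j : ℝ) + 1) * d n - ((i : ℝ) + 1) * d n)
      = φ ((j : ℝ) * d n) := by
  intro j
  induction j with
  | zero => simpa using hz.symm
  | succ j ih =>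
      have hd := (d_pos n).ne'
      push_cast
      calc ∑ i ∈ Finset.range (j + 1), a φ n i * (((j : ℝ) + 1 + 1) * d n - ((i : ℝ) + 1) * d n)
          = ∑ i ∈ Finset.range (j + 1),
              (a φ n i * (((j : ℝ) + 1) * d n - ((i : ℝ) + 1) * d n) + a φ n i * d n) :=
            Finset.sum_congr rfl (fun i _ => by ring)
        _ = (∑ i ∈ Finset.range (j + 1), a φ n i * (((j : ℝ) + 1) * d n - ((i : ℝ) + 1) * d n))
              + (∑ i ∈ Finset.range (j + 1), a φ n i) * d n := by
            rw [Finset.sum_add_distrib, Finset.sum_mul]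
        _ = (∑ i ∈ Finset.range j, a φ n i * (((j : ℝ) + 1) * d n - ((i : ℝ) + 1) * d n))
              + s φ n j * d n := by
            rw [Finset.sum_range_succ, sum_a]; ring
        _ = φ ((j : ℝ) * d n) + (φ (((j : ℝ) + 1) * d n) - φ ((j : ℝ) * d n)) := by
            rw [ih]; unfold s; field_simp
        _ = φ (((j : ℝ) + 1) * d n) := by ring


/-- piecewise-linear under-approximation of `φ` -/
noncomputable def psi (φ : ℝ → ℝ) (n : ℕ) (x : ℝ) : ℝ :=
  ∑ i ∈ Finset.range ((n + 1) * (n + 1)), a φ n i * max (x - ((i : ℝ) + 1) * d n) 0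

lemma psi_continuous (φ : ℝ → ℝ) (n : ℕ) : Continuous (psi φ n) := by
  unfold psi
  apply continuous_finset_sum
  intro i _
  exact continuous_const.mul ((continuous_id.sub continuous_const).max continuous_const)

include hm hc h0 hz in
lemma partial_le (n : ℕ) : ∀ j : ℕ, ∀ x : ℝ, 0 ≤ x →
    ∑ i ∈ Finset.range j, a φ n i * max (x - ((i : ℝ) + 1) * d n) 0 ≤ φ x := by
  intro j
  induction j with
  | zero => intro x hx; simpa using h0 x hx
  | succ j ih =>
      intro x hx
      have hd := d_pos n
      rcases le_or_gt x (((j : ℝ) + 1) * d n) with hle | hlt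
      · rw [Finset.sum_range_succ]
        have : max (x - ((j : ℝ) + 1) * d n) 0 = 0 := max_eq_right (by linarith)
        rw [this, mul_zero, add_zero]
        exact ih x hx
      · have hact : ∀ i ∈ Finset.range (j + 1),
            a φ n i * max (x - ((i : ℝ) + 1) * d n) 0 = a φ n i * (x - ((i : ℝ) + 1) * d n) := by
          intro i hi
          have hi' : (i : ℝ) ≤ (j : ℝ) := by
            exact_mod_cast Nat.lt_succ_iff.1 (Finset.mem_range.1 hi)
          have : ((i : ℝ) + 1) * d n ≤ ((j : ℝ) + 1) * d n := by nlinarith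
          rw [max_eq_left (by linarith)]
        rw [Finset.sum_congr rfl hact]
        have split : ∀ i ∈ Finset.range (j + 1),
            a φ n i * (x - ((i : ℝ) + 1) * d n)
              = a φ n i * (((j : ℝ) + 1) * d n - ((i : ℝ) + 1) * d n)
                + a φ n i * (x - ((j : ℝ) + 1) * d n) := by
          intro i _; ring
        rw [Finset.sum_congr rfl split, Finset.sum_add_distrib, ← Finset.sum_mul]
        have e1 : ∑ i ∈ Finset.range (j + 1),
            a φ n i * (((j : ℝ) + 1) * d n - ((i : ℝ) + 1) * d n) = φ ((j : ℝ) * d n) := by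
          have := ident hz n (j + 1)
          push_cast at this
          calc ∑ i ∈ Finset.range (j + 1),
                a φ n i * (((j : ℝ) + 1) * d n - ((i : ℝ) + 1) * d n)
              = ∑ i ∈ Finset.range j, a φ n i * (((j : ℝ) + 1) * d n - ((i : ℝ) + 1) * d n) := by
                rw [Finset.sum_range_succ]; ring
            _ = φ ((j : ℝ) * d n) := ident hz n j
        rw [e1, sum_a]
        -- now: φ (j d) + s j * (x - (j+1) d) ≤ φ x
        have hxm : (j : ℝ) * d n ∈ Set.Ici (0 : ℝ) :=
          Set.mem_Ici.2 (mul_nonneg (Nat.cast_nonneg j) hd.le)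
        have hym : ((j : ℝ) + 1) * d n ∈ Set.Ici (0 : ℝ) :=
          Set.mem_Ici.2 (mul_nonneg (by positivity) hd.le)
        have hxy : (j : ℝ) * d n < ((j : ℝ) + 1) * d n := by nlinarith
        have hslope := hc.slope_mono_adjacent hxm (Set.mem_Ici.2 hx) hxy hlt
        have e2 : ((j : ℝ) + 1) * d n - (j : ℝ) * d n = d n := by ring
        rw [e2] at hslope
        have hsj : s φ n j ≤ (φ x - φ (((j : ℝ) + 1) * d n)) / (x - ((j : ℝ) + 1) * d n) := by
          unfold s; exact hslope
        have hpos : 0 < x - ((j : ℝ) + 1) * d n := by linarith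
        have := (div_le_div_iff_of_pos_right hpos).mpr hsj
        have h3 : s φ n j * (x - ((j : ℝ) + 1) * d n) ≤ φ x - φ (((j : ℝ) + 1) * d n) := by
          calc s φ n j * (x - ((j : ℝ) + 1) * d n)
              ≤ ((φ x - φ (((j : ℝ) + 1) * d n)) / (x - ((j : ℝ) + 1) * d n))
                  * (x - ((j : ℝ) + 1) * d n) := by
                exact mul_le_mul_of_nonneg_right hsj hpos.le
            _ = φ x - φ (((j : ℝ) + 1) * d n) := by field_simp
        have hmono : φ ((j : ℝ) * d n) ≤ φ (((j : ℝ) + 1) * d n) := hm hxm hym hxy.le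
        linarith

include hm hc h0 hz in
lemma psi_le (n : ℕ) {x : ℝ} (hx : 0 ≤ x) : psi φ n x ≤ φ x :=
  partial_le hm hc h0 hz n _ x hx

include hm hc hz in
lemma le_psi (n j : ℕ) (hj : j + 1 ≤ (n + 1) * (n + 1)) {x : ℝ}
    (hx : ((j : ℝ) + 1) * d n ≤ x) : φ ((j : ℝ) * d n) ≤ psi φ n x := by
  have hd := d_pos n
  have h1 : ∑ i ∈ Finset.range j, a φ n i * max (x - ((i : ℝ) + 1) * d n) 0 ≤ psi φ n x := by
    apply Finset.sum_le_sum_of_subset_of_nonneg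
    · exact Finset.range_subset_range.2 (le_trans (Nat.le_succ j) hj)
    · intro i _ _
      exact mul_nonneg (a_nonneg hm hc n i) (le_max_right _ _)
  refine le_trans ?_ h1
  have h2 : ∀ i ∈ Finset.range j,
      a φ n i * (((j : ℝ) + 1) * d n - ((i : ℝ) + 1) * d n)
        ≤ a φ n i * max (x - ((i : ℝ) + 1) * d n) 0 := by
    intro i hi
    apply mul_le_mul_of_nonneg_left _ (a_nonneg hm hc n i)
    exact le_trans (by linarith) (le_max_left _ _)
  calc φ ((j : ℝ) * d n) = ∑ i ∈ Finset.range j,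
        a φ n i * (((j : ℝ) + 1) * d n - ((i : ℝ) + 1) * d n) := (ident hz n j).symm
    _ ≤ _ := Finset.sum_le_sum h2

lemma psi_zero (φ : ℝ → ℝ) (n : ℕ) : psi φ n 0 = 0 := by
  unfold psi
  apply Finset.sum_eq_zero
  intro i _
  have hd := d_pos n
  have : max (0 - ((i : ℝ) + 1) * d n) 0 = 0 := max_eq_right (by nlinarith)
  rw [this, mul_zero]

include hm hc h0 hz in
lemma psi_tendsto {x : ℝ} (hx : 0 ≤ x) :
    Tendsto (fun n => psi φ n x) atTop (𝓝 (φ x)) := by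
  rcases eq_or_lt_of_le hx with rfl | hxpos
  · simp only [psi_zero, hz]
    exact tendsto_const_nhds
  have hd0 : Tendsto (fun n : ℕ => d n) atTop (𝓝 0) := by
    unfold d
    exact tendsto_one_div_add_atTop_nhds_zero_nat
  -- lower bound eventually
  have hev : ∀ᶠ n in atTop, φ (x - 2 * d n) ≤ psi φ n x := by
    have h1 : ∀ᶠ n in atTop, 2 * d n < x := by
      have := hd0.const_mul 2
      rw [mul_zero] at this
      exact this.eventually_lt_const hxpos
    have h2 : ∀ᶠ n : ℕ in atTop, x ≤ (n : ℝ) + 1 := by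
      have ht : Tendsto (fun n : ℕ => (n : ℝ) + 1) atTop atTop :=
        tendsto_atTop_add_const_right _ _ tendsto_natCast_atTop_atTop
      exact ht.eventually_ge_atTop x
    filter_upwards [h1, h2] with n hn1 hn2
    have hd := d_pos n
    set m := ⌊x * ((n : ℝ) + 1)⌋₊ with hm'
    have hxd : 1 < x * ((n : ℝ) + 1) := by
      have : d n = 1 / ((n : ℝ) + 1) := rfl
      rw [this] at hn1
      have h3 : (0:ℝ) < (n : ℝ) + 1 := by positivity
      have h4 : (1 / ((n:ℝ) + 1)) * ((n:ℝ) + 1) = 1 := by field_simp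
      nlinarith
    have hm1 : 1 ≤ m := Nat.le_floor (by exact_mod_cast hxd.le)
    -- j := m - 1
    have hjx : ((m - 1 : ℕ) : ℝ) + 1 = (m : ℝ) := by
      push_cast [hm1]; ring
    have hfl : (m : ℝ) ≤ x * ((n : ℝ) + 1) := Nat.floor_le (by positivity)
    have hfl2 : x * ((n : ℝ) + 1) - 1 < (m : ℝ) := by
      have := Nat.lt_floor_add_one (x * ((n : ℝ) + 1))
      linarith
    have hdn : d n * ((n : ℝ) + 1) = 1 := by
      unfold d; field_simp
    have hjN : (m - 1) + 1 ≤ (n + 1) * (n + 1) := by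
      have hxle : x * ((n : ℝ) + 1) ≤ (((n + 1) * (n + 1) : ℕ) : ℝ) := by
        push_cast
        nlinarith [Nat.cast_nonneg (α := ℝ) n]
      have hmle : m ≤ (n + 1) * (n + 1) := by
        calc m ≤ ⌊(((n + 1) * (n + 1) : ℕ) : ℝ)⌋₊ := Nat.floor_mono hxle
          _ = (n + 1) * (n + 1) := Nat.floor_natCast _
      omega
    have hjd : (((m - 1 : ℕ) : ℝ) + 1) * d n ≤ x := by
      rw [hjx]
      have h3 : (0:ℝ) < (n : ℝ) + 1 := by positivity
      calc (m : ℝ) * d n ≤ (x * ((n : ℝ) + 1)) * d n :=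
            mul_le_mul_of_nonneg_right hfl hd.le
        _ = x := by unfold d; field_simp
    have hlp := le_psi hm hc hz n (m - 1) hjN hjd
    refine le_trans ?_ hlp
    -- φ (x - 2 d n) ≤ φ ((m-1) d n)
    have hx2 : (0:ℝ) ≤ x - 2 * d n := by linarith
    have hmd : x - 2 * d n ≤ ((m - 1 : ℕ) : ℝ) * d n := by
      have e : ((m - 1 : ℕ) : ℝ) = (m : ℝ) - 1 := by push_cast [hm1]; ring
      rw [e]
      have h3 : (0:ℝ) < (n : ℝ) + 1 := by positivity
      have : (x * ((n : ℝ) + 1) - 2) * d n ≤ ((m : ℝ) - 1) * d n := by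
        apply mul_le_mul_of_nonneg_right _ hd.le
        linarith
      calc x - 2 * d n = (x * ((n : ℝ) + 1) - 2) * d n := by unfold d; field_simp
        _ ≤ _ := this
    exact hm (Set.mem_Ici.2 hx2) (Set.mem_Ici.2 (by positivity)) hmd
  -- continuity of φ within Ioi 0 at x
  have hcont : ContinuousWithinAt φ (Set.Ioi 0) x := by
    have hco := hc.continuousOn_interior
    rw [interior_Ici] at hco
    exact hco.continuousWithinAt (Set.mem_Ioi.2 hxpos)
  have h2d : Tendsto (fun n : ℕ => 2 * d n) atTop (𝓝 0) := by
    have := hd0.const_mul 2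
    rwa [mul_zero] at this
  have harg : Tendsto (fun n : ℕ => x - 2 * d n) atTop (𝓝[Set.Ioi 0] x) := by
    rw [tendsto_nhdsWithin_iff]
    constructor
    · have := Tendsto.sub (tendsto_const_nhds : Tendsto (fun _ : ℕ => x) atTop (𝓝 x)) h2d
      simpa using this
    · filter_upwards [h2d.eventually_lt_const hxpos] with n hn
      exact Set.mem_Ioi.2 (by linarith)
  have hlow : Tendsto (fun n => φ (x - 2 * d n)) atTop (𝓝 (φ x)) :=
    hcont.tendsto.comp harg
  exact tendsto_of_tendsto_of_tendsto_of_le_of_le' hlow tendsto_const_nhds hev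
    (Eventually.of_forall fun n => psi_le hm hc h0 hz n hx)


include hm hc h0 hz in
lemma lintegral_comp_le {X : Type*} [MeasurableSpace X] {μ : Measure X}
    {f g : X → ℝ} (hfm : AEMeasurable f μ) (hgm : AEMeasurable g μ)
    (hfnn : 0 ≤ᵐ[μ] f) (hgnn : 0 ≤ᵐ[μ] g)
    (hcomp : ∀ t : ℝ, 0 < t →
      ∫⁻ x, ENNReal.ofReal (max (g x - t) 0) ∂μ ≤ ∫⁻ x, ENNReal.ofReal (max (f x - t) 0) ∂μ) :
    ∫⁻ x, ENNReal.ofReal (φ (g x)) ∂μ ≤ ∫⁻ x, ENNReal.ofReal (φ (f x)) ∂μ := by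
  have hmax : ∀ (c : ℝ), Continuous (fun y : ℝ => max (y - c) 0) := fun c =>
    (continuous_id.sub continuous_const).max continuous_const
  have hterm : ∀ (u : X → ℝ), AEMeasurable u μ → ∀ (n i : ℕ),
      AEMeasurable (fun x => ENNReal.ofReal (a φ n i)
        * ENNReal.ofReal (max (u x - ((i : ℝ) + 1) * d n) 0)) μ := by
    intro u hu n i
    exact aemeasurable_const.mul (ENNReal.measurable_ofReal.comp_aemeasurable
      (((hmax _).measurable).comp_aemeasurable hu))
  have hpsiM : ∀ (u : X → ℝ), AEMeasurable u μ → ∀ n : ℕ,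
      AEMeasurable (fun x => ENNReal.ofReal (psi φ n (u x))) μ := by
    intro u hu n
    exact ENNReal.measurable_ofReal.comp_aemeasurable
      ((psi_continuous φ n).measurable.comp_aemeasurable hu)
  have hexp : ∀ (u : X → ℝ), AEMeasurable u μ → ∀ n : ℕ,
      ∫⁻ x, ENNReal.ofReal (psi φ n (u x)) ∂μ
        = ∑ i ∈ Finset.range ((n + 1) * (n + 1)), ENNReal.ofReal (a φ n i)
            * ∫⁻ x, ENNReal.ofReal (max (u x - ((i : ℝ) + 1) * d n) 0) ∂μ := by
    intro u hu n
    have e1 : ∀ x, ENNReal.ofReal (psi φ n (u x))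
        = ∑ i ∈ Finset.range ((n + 1) * (n + 1)), ENNReal.ofReal (a φ n i)
            * ENNReal.ofReal (max (u x - ((i : ℝ) + 1) * d n) 0) := by
      intro x
      rw [psi, ENNReal.ofReal_sum_of_nonneg (fun i _ =>
        mul_nonneg (a_nonneg hm hc n i) (le_max_right _ _))]
      exact Finset.sum_congr rfl fun i _ => ENNReal.ofReal_mul (a_nonneg hm hc n i)
    calc ∫⁻ x, ENNReal.ofReal (psi φ n (u x)) ∂μ
        = ∫⁻ x, ∑ i ∈ Finset.range ((n + 1) * (n + 1)), ENNReal.ofReal (a φ n i)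
            * ENNReal.ofReal (max (u x - ((i : ℝ) + 1) * d n) 0) ∂μ := by
          exact lintegral_congr fun x => e1 x
      _ = ∑ i ∈ Finset.range ((n + 1) * (n + 1)),
            ∫⁻ x, ENNReal.ofReal (a φ n i)
              * ENNReal.ofReal (max (u x - ((i : ℝ) + 1) * d n) 0) ∂μ :=
          lintegral_finset_sum' _ fun i _ => hterm u hu n i
      _ = _ := Finset.sum_congr rfl fun i _ =>
          lintegral_const_mul' _ _ ENNReal.ofReal_ne_top
  have hper : ∀ n : ℕ, ∫⁻ x, ENNReal.ofReal (psi φ n (g x)) ∂μ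
      ≤ ∫⁻ x, ENNReal.ofReal (φ (f x)) ∂μ := by
    intro n
    have hd := d_pos n
    calc ∫⁻ x, ENNReal.ofReal (psi φ n (g x)) ∂μ
        = ∑ i ∈ Finset.range ((n + 1) * (n + 1)), ENNReal.ofReal (a φ n i)
            * ∫⁻ x, ENNReal.ofReal (max (g x - ((i : ℝ) + 1) * d n) 0) ∂μ := hexp g hgm n
      _ ≤ ∑ i ∈ Finset.range ((n + 1) * (n + 1)), ENNReal.ofReal (a φ n i)
            * ∫⁻ x, ENNReal.ofReal (max (f x - ((i : ℝ) + 1) * d n) 0) ∂μ := by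
          refine Finset.sum_le_sum fun i _ => mul_le_mul_right ?_ _
          exact hcomp (((i : ℝ) + 1) * d n) (by positivity)
      _ = ∫⁻ x, ENNReal.ofReal (psi φ n (f x)) ∂μ := (hexp f hfm n).symm
      _ ≤ ∫⁻ x, ENNReal.ofReal (φ (f x)) ∂μ := by
          refine lintegral_mono_ae ?_
          filter_upwards [hfnn] with x hx
          exact ENNReal.ofReal_le_ofReal (psi_le hm hc h0 hz n hx)
  calc ∫⁻ x, ENNReal.ofReal (φ (g x)) ∂μ
      = ∫⁻ x, Filter.atTop.liminf (fun n => ENNReal.ofReal (psi φ n (g x))) ∂μ := by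
        refine lintegral_congr_ae ?_
        filter_upwards [hgnn] with x hx
        have := (ENNReal.continuous_ofReal.tendsto _).comp (psi_tendsto hm hc h0 hz hx)
        exact (this.liminf_eq).symm
    _ ≤ Filter.atTop.liminf (fun n => ∫⁻ x, ENNReal.ofReal (psi φ n (g x)) ∂μ) :=
        lintegral_liminf_le' fun n => hpsiM g hgm n
    _ ≤ Filter.atTop.liminf (fun _ => ∫⁻ x, ENNReal.ofReal (φ (f x)) ∂μ) :=
        liminf_le_liminf (Eventually.of_forall hper)
    _ = ∫⁻ x, ENNReal.ofReal (φ (f x)) ∂μ := liminf_const _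


section Operator

variable {X : Type*} [MeasurableSpace X] {μ : Measure X}

/-- integral of an `L¹` function over a set is at most its norm -/
lemma setIntegral_le_norm (u : Lp ℝ 1 μ) (E : Set X) :
    ∫ x in E, (u : X → ℝ) x ∂μ ≤ ‖u‖ := by
  have hi : Integrable (u : X → ℝ) μ := L1.integrable_coeFn u
  calc ∫ x in E, (u : X → ℝ) x ∂μ ≤ ∫ x in E, ‖(u : X → ℝ) x‖ ∂μ :=
        setIntegral_mono_ae hi.integrableOn hi.norm.integrableOn
          (Eventually.of_forall fun x => le_abs_self _)
    _ ≤ ∫ x, ‖(u : X → ℝ) x‖ ∂μ :=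
        setIntegral_le_integral hi.norm (Eventually.of_forall fun x => norm_nonneg _)
    _ = ‖u‖ := (L1.norm_eq_integral_norm u).symm

/-- a positive operator is monotone -/
lemma T_mono {T : Lp ℝ 1 μ →L[ℝ] Lp ℝ 1 μ}
    (hT1 : ∀ f : Lp ℝ 1 μ, 0 ≤ᵐ[μ] (f : X → ℝ) → 0 ≤ᵐ[μ] (T f : X → ℝ))
    {u v : Lp ℝ 1 μ} (h : (u : X → ℝ) ≤ᵐ[μ] (v : X → ℝ)) :
    (T u : X → ℝ) ≤ᵐ[μ] (T v : X → ℝ) := by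
  have h0 : 0 ≤ᵐ[μ] ((v - u : Lp ℝ 1 μ) : X → ℝ) := by
    filter_upwards [h, Lp.coeFn_sub v u] with x hx he
    rw [he]
    simp only [Pi.sub_apply, Pi.zero_apply]
    linarith
  have h1 := hT1 _ h0
  rw [map_sub] at h1
  filter_upwards [h1, Lp.coeFn_sub (T v) (T u)] with x hx he
  rw [he] at hx
  simpa using hx

/-- truncated positive part is integrable -/
lemma integrable_maxsub (u : Lp ℝ 1 μ) {t : ℝ} (ht : 0 ≤ t) :
    Integrable (fun x => max ((u : X → ℝ) x - t) 0) μ := by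
  have hi : Integrable (u : X → ℝ) μ := L1.integrable_coeFn u
  refine hi.norm.mono ?_ ?_
  · exact (((continuous_id.sub continuous_const).max continuous_const).comp_aestronglyMeasurable
      (Lp.aestronglyMeasurable u))
  · refine Eventually.of_forall fun x => ?_
    rw [norm_norm, Real.norm_eq_abs, Real.norm_eq_abs, abs_of_nonneg (le_max_right _ _)]
    rcases le_total ((u : X → ℝ) x - t) 0 with h | h
    · rw [max_eq_right h]; positivity
    · rw [max_eq_left h]
      have := le_abs_self ((u : X → ℝ) x)
      linarith

/-- Key inequality: a semi-doubly stochastic operator decreases `∫ (· - t)⁺`. -/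
lemma key [SigmaFinite μ] {T : Lp ℝ 1 μ →L[ℝ] Lp ℝ 1 μ} (hT : IsSemiDoublyStochastic T)
    (f : Lp ℝ 1 μ) (hf : 0 ≤ᵐ[μ] (f : X → ℝ)) {t : ℝ} (ht : 0 < t) :
    ∫ x, max ((T f : X → ℝ) x - t) 0 ∂μ ≤ ∫ x, max ((f : X → ℝ) x - t) 0 ∂μ := by
  obtain ⟨hT1, hT2, hT3⟩ := hT
  have hfi : Integrable (f : X → ℝ) μ := L1.integrable_coeFn f
  have hPi : Integrable (fun x => max ((f : X → ℝ) x - t) 0) μ := integrable_maxsub f ht.le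
  set P : Lp ℝ 1 μ := hPi.toL1 _ with hP
  set Q : Lp ℝ 1 μ := f - P with hQ
  have hPcoe : (P : X → ℝ) =ᵐ[μ] fun x => max ((f : X → ℝ) x - t) 0 := hPi.coeFn_toL1
  have hP0 : 0 ≤ᵐ[μ] (P : X → ℝ) := by
    filter_upwards [hPcoe] with x hx; rw [hx]; exact le_max_right _ _
  have hQcoe : (Q : X → ℝ) =ᵐ[μ] fun x => (f : X → ℝ) x - max ((f : X → ℝ) x - t) 0 := by
    filter_upwards [Lp.coeFn_sub f P, hPcoe] with x h1 h2
    rw [hQ] at *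
    rw [h1]; simp only [Pi.sub_apply]; rw [h2]
  have hQ0 : 0 ≤ᵐ[μ] (Q : X → ℝ) := by
    filter_upwards [hQcoe, hf] with x h1 h2
    simp only [Pi.zero_apply] at h2 ⊢
    rw [h1]
    rcases le_total ((f : X → ℝ) x - t) 0 with h | h
    · rw [max_eq_right h]; linarith
    · rw [max_eq_left h]; linarith
  have hQt : (Q : X → ℝ) ≤ᵐ[μ] fun _ => t := by
    filter_upwards [hQcoe] with x h1
    rw [h1]
    rcases le_total ((f : X → ℝ) x - t) 0 with h | h
    · rw [max_eq_right h]; linarith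
    · rw [max_eq_left h]; linarith
  set h : Lp ℝ 1 μ := T f with hhdef
  have hhi : Integrable (h : X → ℝ) μ := L1.integrable_coeFn h
  set h' : X → ℝ := (Lp.aestronglyMeasurable h).mk _ with hh'def
  have hmeq : (h : X → ℝ) =ᵐ[μ] h' := (Lp.aestronglyMeasurable h).ae_eq_mk
  have hh'm : StronglyMeasurable h' := (Lp.aestronglyMeasurable h).stronglyMeasurable_mk
  set E : Set X := {x | t < h' x} with hEdef
  have hEmeas : MeasurableSet E := measurableSet_lt measurable_const hh'm.measurable
  have hEfin : μ E < ⊤ := by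
    have hi' : Integrable h' μ := hhi.congr hmeq
    refine lt_of_le_of_lt (measure_mono ?_) (hi'.measure_ge_lt_top ht)
    intro x hx
    simp only [Set.mem_setOf_eq] at hx ⊢
    exact hx.le
  -- ∫ (h - t)⁺ = ∫_E h - t μ E
  have hind : (fun x => max ((h : X → ℝ) x - t) 0)
      =ᵐ[μ] E.indicator (fun x => (h : X → ℝ) x - t) := by
    filter_upwards [hmeq] with x hx
    by_cases hxe : x ∈ E
    · rw [Set.indicator_of_mem hxe]
      have hlt : t < h' x := hxe
      rw [← hx] at hlt
      exact max_eq_left (by linarith)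
    · rw [Set.indicator_of_notMem hxe]
      have hle : h' x ≤ t := not_lt.1 hxe
      rw [← hx] at hle
      exact max_eq_right (by linarith)
  have hconst : IntegrableOn (fun _ => t) E μ := integrableOn_const hEfin.ne
  have e1 : ∫ x, max ((h : X → ℝ) x - t) 0 ∂μ
      = (∫ x in E, (h : X → ℝ) x ∂μ) - t * (μ E).toReal := by
    rw [integral_congr_ae hind, integral_indicator hEmeas,
      integral_sub hhi.integrableOn hconst, setIntegral_const]
    simp [mul_comm, Measure.real]
  -- decompose
  have hPQ : P + Q = f := by rw [hQ]; abel
  have hTsplit : h = T P + T Q := by rw [hhdef, ← map_add, hPQ]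
  have hcoeadd : (h : X → ℝ) =ᵐ[μ] fun x => (T P : X → ℝ) x + (T Q : X → ℝ) x := by
    rw [hTsplit]; exact Lp.coeFn_add _ _
  have e2 : ∫ x in E, (h : X → ℝ) x ∂μ
      = (∫ x in E, (T P : X → ℝ) x ∂μ) + ∫ x in E, (T Q : X → ℝ) x ∂μ := by
    rw [integral_congr_ae (ae_restrict_of_ae hcoeadd)]
    exact integral_add (L1.integrable_coeFn (T P)).integrableOn
      (L1.integrable_coeFn (T Q)).integrableOn
  -- bound for P
  have hTP0 : 0 ≤ᵐ[μ] (T P : X → ℝ) := hT1 P hP0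
  have e3 : ∫ x in E, (T P : X → ℝ) x ∂μ ≤ ∫ x, max ((f : X → ℝ) x - t) 0 ∂μ := by
    calc ∫ x in E, (T P : X → ℝ) x ∂μ ≤ ∫ x, (T P : X → ℝ) x ∂μ :=
          setIntegral_le_integral (L1.integrable_coeFn (T P)) hTP0
      _ = ∫ x, (P : X → ℝ) x ∂μ := hT2 P
      _ = ∫ x, max ((f : X → ℝ) x - t) 0 ∂μ := integral_congr_ae hPcoe
  -- bound for Q
  have hQi : Integrable (Q : X → ℝ) μ := L1.integrable_coeFn Q
  have e4 : ∫ x in E, (T Q : X → ℝ) x ∂μ ≤ t * (μ E).toReal := by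
    set B : ℕ → Set X := spanningSets μ with hB
    have hBm : ∀ n, MeasurableSet (B n) := measurableSet_spanningSets μ
    have hBfin : ∀ n, μ (B n) < ⊤ := measure_spanningSets_lt_top μ
    set Qn : ℕ → Lp ℝ 1 μ := fun n => (hQi.indicator (hBm n)).toL1 _ with hQn
    set χ : ℕ → Lp ℝ 1 μ := fun n => indicatorConstLp 1 (hBm n) (hBfin n).ne (1 : ℝ) with hχ
    have hQncoe : ∀ n, (Qn n : X → ℝ) =ᵐ[μ] (B n).indicator (Q : X → ℝ) := fun n =>
      (hQi.indicator (hBm n)).coeFn_toL1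
    -- per-n bound
    have hper : ∀ n, ∫ x in E, (T (Qn n) : X → ℝ) x ∂μ ≤ t * (μ E).toReal := by
      intro n
      have hle : (Qn n : X → ℝ) ≤ᵐ[μ] ((t • χ n : Lp ℝ 1 μ) : X → ℝ) := by
        filter_upwards [hQncoe n, Lp.coeFn_smul t (χ n),
          indicatorConstLp_coeFn (p := 1) (hs := hBm n) (hμs := (hBfin n).ne) (c := (1:ℝ)),
          hQt, hQ0] with x h1 h2 h3 h4 h5
        rw [h1, h2]
        simp only [Pi.smul_apply, smul_eq_mul, hχ, h3]
        by_cases hx : x ∈ B n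
        · rw [Set.indicator_of_mem hx, Set.indicator_of_mem hx]
          simpa using h4
        · rw [Set.indicator_of_notMem hx, Set.indicator_of_notMem hx]
          simp
      have hmono := T_mono hT1 hle
      have hsm : (T (t • χ n) : X → ℝ) =ᵐ[μ] fun x => t * (T (χ n) : X → ℝ) x := by
        rw [T.map_smul]
        filter_upwards [Lp.coeFn_smul t (T (χ n))] with x hx
        rw [hx]; simp
      calc ∫ x in E, (T (Qn n) : X → ℝ) x ∂μ
          ≤ ∫ x in E, t * (T (χ n) : X → ℝ) x ∂μ := by
            refine setIntegral_mono_ae (L1.integrable_coeFn _).integrableOn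
              ((L1.integrable_coeFn (T (χ n))).const_mul t).integrableOn ?_
            filter_upwards [hmono, hsm] with x h1 h2
            rw [← h2]; exact h1
        _ = t * ∫ x in E, (T (χ n) : X → ℝ) x ∂μ := integral_const_mul t _
        _ ≤ t * (μ E).toReal := by
            refine mul_le_mul_of_nonneg_left ?_ ht.le
            exact hT3 E (B n) hEmeas hEfin (hBm n) (hBfin n)
    -- convergence of Qn to Q in L¹
    have hnormconv : Tendsto (fun n => ‖Q - Qn n‖) atTop (𝓝 0) := by
      have e : ∀ n, ‖Q - Qn n‖
          = ∫ x, ‖(Q : X → ℝ) x - (B n).indicator (Q : X → ℝ) x‖ ∂μ := by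
        intro n
        rw [L1.norm_eq_integral_norm]
        refine integral_congr_ae ?_
        filter_upwards [Lp.coeFn_sub Q (Qn n), hQncoe n] with x h1 h2
        rw [h1]; simp only [Pi.sub_apply]; rw [h2]
      have hdct : Tendsto (fun n => ∫ x, ‖(Q : X → ℝ) x - (B n).indicator (Q : X → ℝ) x‖ ∂μ)
          atTop (𝓝 (∫ _, (0 : ℝ) ∂μ)) := by
        refine tendsto_integral_of_dominated_convergence (fun x => ‖(Q : X → ℝ) x‖)
          (fun n => ((Lp.aestronglyMeasurable Q).sub
            ((Lp.aestronglyMeasurable Q).indicator (hBm n))).norm) hQi.norm ?_ ?_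
        · intro n
          refine Eventually.of_forall fun x => ?_
          rw [norm_norm]
          by_cases hx : x ∈ B n
          · rw [Set.indicator_of_mem hx]; simp
          · rw [Set.indicator_of_notMem hx]; simp
        · refine Eventually.of_forall fun x => ?_
          have hxB : ∃ m, x ∈ B m := by
            have := iUnion_spanningSets μ
            rw [Set.iUnion_eq_univ_iff] at this
            exact this x
          obtain ⟨m, hm⟩ := hxB
          refine tendsto_nhds_of_eventually_eq ?_
          filter_upwards [eventually_ge_atTop m] with n hn
          rw [Set.indicator_of_mem (monotone_spanningSets μ hn hm)]
          simp
      rw [integral_zero] at hdct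
      exact hdct.congr fun n => (e n).symm
    -- combine
    have hbound : ∀ n, ∫ x in E, (T Q : X → ℝ) x ∂μ
        ≤ t * (μ E).toReal + ‖T‖ * ‖Q - Qn n‖ := by
      intro n
      have hsplit : T Q = T (Qn n) + T (Q - Qn n) := by rw [← map_add]; congr 1; abel
      have hco : (T Q : X → ℝ) =ᵐ[μ]
          fun x => (T (Qn n) : X → ℝ) x + (T (Q - Qn n) : X → ℝ) x := by
        rw [hsplit]; exact Lp.coeFn_add _ _
      calc ∫ x in E, (T Q : X → ℝ) x ∂μ
          = (∫ x in E, (T (Qn n) : X → ℝ) x ∂μ) + ∫ x in E, (T (Q - Qn n) : X → ℝ) x ∂μ := by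
            rw [integral_congr_ae (ae_restrict_of_ae hco)]
            exact integral_add (L1.integrable_coeFn _).integrableOn
              (L1.integrable_coeFn _).integrableOn
        _ ≤ t * (μ E).toReal + ‖T‖ * ‖Q - Qn n‖ := by
            refine add_le_add (hper n) ?_
            calc ∫ x in E, (T (Q - Qn n) : X → ℝ) x ∂μ ≤ ‖T (Q - Qn n)‖ :=
                  setIntegral_le_norm _ _
              _ ≤ ‖T‖ * ‖Q - Qn n‖ := T.le_opNorm _
    have htend : Tendsto (fun n => t * (μ E).toReal + ‖T‖ * ‖Q - Qn n‖) atTop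
        (𝓝 (t * (μ E).toReal)) := by
      have := (hnormconv.const_mul ‖T‖).const_add (t * (μ E).toReal)
      simpa using this
    exact ge_of_tendsto' htend hbound
  -- assemble
  have e5 : ∫ x in E, (h : X → ℝ) x ∂μ
      ≤ (∫ x, max ((f : X → ℝ) x - t) 0 ∂μ) + t * (μ E).toReal := by
    rw [e2]; exact add_le_add e3 e4
  rw [e1]
  linarith

end Operator

end SDSaux

/-- If `f, g ∈ L¹(X,μ)` are nonnegative on a σ-finite measure space and there is a sequence
`(Sₖ)` of semi-doubly stochastic operators with `‖Sₖf − g‖₁ → 0`, then `∫ g dμ = ∫ f dμ` and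
`∫ φ∘g dμ ≤ ∫ φ∘f dμ` for every increasing convex `φ : [0,∞) → [0,∞)` with `φ(0) = 0`
(the integrals of these nonnegative functions taken in `[0,∞]`). -/
theorem integral_convex_le_of_semiDoublyStochastic_approx
    {X : Type*} [MeasurableSpace X] (μ : Measure X) [SigmaFinite μ]
    (f g : Lp ℝ 1 μ) (hf : 0 ≤ᵐ[μ] (f : X → ℝ)) (hg : 0 ≤ᵐ[μ] (g : X → ℝ))
    (S : ℕ → (Lp ℝ 1 μ →L[ℝ] Lp ℝ 1 μ)) (hS : ∀ k, IsSemiDoublyStochastic (S k))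
    (hconv : Tendsto (fun k => ‖S k f - g‖) atTop (𝓝 0)) :
    (∫ x, (g : X → ℝ) x ∂μ = ∫ x, (f : X → ℝ) x ∂μ) ∧
    ∀ φ : ℝ → ℝ, MonotoneOn φ (Set.Ici 0) → ConvexOn ℝ (Set.Ici 0) φ →
      (∀ x : ℝ, 0 ≤ x → 0 ≤ φ x) → φ 0 = 0 →
      ∫⁻ x, ENNReal.ofReal (φ ((g : X → ℝ) x)) ∂μ
        ≤ ∫⁻ x, ENNReal.ofReal (φ ((f : X → ℝ) x)) ∂μ := by
  have hgi : Integrable (g : X → ℝ) μ := L1.integrable_coeFn g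
  have hfi : Integrable (f : X → ℝ) μ := L1.integrable_coeFn f
  -- ∫ g = ∫ f
  have hdist : ∀ k, dist (∫ x, (S k f : X → ℝ) x ∂μ) (∫ x, (g : X → ℝ) x ∂μ)
      ≤ ‖S k f - g‖ := by
    intro k
    have hki : Integrable (S k f : X → ℝ) μ := L1.integrable_coeFn _
    rw [dist_eq_norm, ← integral_sub hki hgi]
    calc ‖∫ x, ((S k f : X → ℝ) x - (g : X → ℝ) x) ∂μ‖
        ≤ ∫ x, ‖(S k f : X → ℝ) x - (g : X → ℝ) x‖ ∂μ := norm_integral_le_integral_norm _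
      _ = ‖S k f - g‖ := by
          rw [L1.norm_eq_integral_norm (S k f - g)]
          refine integral_congr_ae ?_
          filter_upwards [Lp.coeFn_sub (S k f) g] with x hx
          rw [hx]; simp
  have hSint : ∀ k, ∫ x, (S k f : X → ℝ) x ∂μ = ∫ x, (f : X → ℝ) x ∂μ := fun k => (hS k).2.1 f
  have htend1 : Tendsto (fun k => ∫ x, (S k f : X → ℝ) x ∂μ) atTop
      (𝓝 (∫ x, (g : X → ℝ) x ∂μ)) := by
    rw [tendsto_iff_dist_tendsto_zero]
    exact squeeze_zero (fun k => dist_nonneg) hdist hconv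
  have htend2 : Tendsto (fun k => ∫ x, (S k f : X → ℝ) x ∂μ) atTop
      (𝓝 (∫ x, (f : X → ℝ) x ∂μ)) := by
    simp only [hSint]
    exact tendsto_const_nhds
  have heq : ∫ x, (g : X → ℝ) x ∂μ = ∫ x, (f : X → ℝ) x ∂μ :=
    tendsto_nhds_unique htend1 htend2
  refine ⟨heq, ?_⟩
  intro φ hφm hφc hφ0 hφz
  -- real comparison of tails
  have hcompR : ∀ t : ℝ, 0 < t →
      ∫ x, max ((g : X → ℝ) x - t) 0 ∂μ ≤ ∫ x, max ((f : X → ℝ) x - t) 0 ∂μ := by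
    intro t ht
    have hgt : Integrable (fun x => max ((g : X → ℝ) x - t) 0) μ :=
      SDSaux.integrable_maxsub g ht.le
    have hbound : ∀ k, ∫ x, max ((g : X → ℝ) x - t) 0 ∂μ
        ≤ (∫ x, max ((f : X → ℝ) x - t) 0 ∂μ) + ‖S k f - g‖ := by
      intro k
      have hkt : Integrable (fun x => max ((S k f : X → ℝ) x - t) 0) μ :=
        SDSaux.integrable_maxsub (S k f) ht.le
      have hdiff : ∫ x, (max ((g : X → ℝ) x - t) 0 - max ((S k f : X → ℝ) x - t) 0) ∂μ
          ≤ ‖S k f - g‖ := by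
        calc ∫ x, (max ((g : X → ℝ) x - t) 0 - max ((S k f : X → ℝ) x - t) 0) ∂μ
            ≤ ∫ x, ‖((S k f - g : Lp ℝ 1 μ) : X → ℝ) x‖ ∂μ := by
              refine integral_mono_ae (hgt.sub hkt) (L1.integrable_coeFn _).norm ?_
              filter_upwards [Lp.coeFn_sub (S k f) g] with x hx
              rw [hx]
              simp only [Pi.sub_apply, Real.norm_eq_abs]
              have h1 := abs_max_sub_max_le_abs ((g : X → ℝ) x - t) ((S k f : X → ℝ) x - t) 0
              have h2 := le_abs_self (max ((g : X → ℝ) x - t) 0 - max ((S k f : X → ℝ) x - t) 0)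
              have h3 : ((g : X → ℝ) x - t) - ((S k f : X → ℝ) x - t)
                  = -((S k f : X → ℝ) x - (g : X → ℝ) x) := by ring
              rw [h3, abs_neg] at h1
              linarith
          _ = ‖S k f - g‖ := (L1.norm_eq_integral_norm _).symm
      rw [integral_sub hgt hkt] at hdiff
      have hkey := SDSaux.key (hS k) f hf ht
      linarith
    have htendb : Tendsto (fun k => (∫ x, max ((f : X → ℝ) x - t) 0 ∂μ) + ‖S k f - g‖) atTop
        (𝓝 (∫ x, max ((f : X → ℝ) x - t) 0 ∂μ)) := by
      have := hconv.const_add (∫ x, max ((f : X → ℝ) x - t) 0 ∂μ)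
      simpa using this
    exact ge_of_tendsto' htendb hbound
  -- lintegral comparison of tails
  have hcompL : ∀ t : ℝ, 0 < t →
      ∫⁻ x, ENNReal.ofReal (max ((g : X → ℝ) x - t) 0) ∂μ
        ≤ ∫⁻ x, ENNReal.ofReal (max ((f : X → ℝ) x - t) 0) ∂μ := by
    intro t ht
    rw [← ofReal_integral_eq_lintegral_ofReal (SDSaux.integrable_maxsub g ht.le)
        (Eventually.of_forall fun x => le_max_right _ _),
      ← ofReal_integral_eq_lintegral_ofReal (SDSaux.integrable_maxsub f ht.le)
        (Eventually.of_forall fun x => le_max_right _ _)]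
    exact ENNReal.ofReal_le_ofReal (hcompR t ht)
  exact SDSaux.lintegral_comp_le hφm hφc hφ0 hφz
    (Lp.aestronglyMeasurable f).aemeasurable (Lp.aestronglyMeasurable g).aemeasurable
    hf hg hcompL
end

section
/- Let (X, μ) be a σ-finite measure space and f, g ∈ L¹(X,μ) nonnegative. Then there exists a sequence (S_k)_{k∈ℕ} of semi-doubly stochastic operators on L¹(X,μ) with ‖S_k f − g‖₁ → 0 if and only if there exists a sequence (I_n)_{n∈ℕ} of semi-doubly stochastic integral operators on L¹(X,μ) with ‖I_n f − g‖₁ → 0. -/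
open MeasureTheory Filter Topology

/-- `K : X × X → [0,∞)` is a semi-doubly stochastic kernel: `∫ K(x,y) dμ(x) = 1` for a.e. `y`
and `∫ K(x,y) dμ(y) ≤ 1` for a.e. `x`. -/
def IsSemiDoublyStochasticKernel {X : Type*} [MeasurableSpace X] (μ : Measure X)
    (K : X → X → ℝ) : Prop :=
  Measurable (Function.uncurry K) ∧ (∀ x y, 0 ≤ K x y) ∧
  (∀ᵐ y ∂μ, ∫⁻ x, ENNReal.ofReal (K x y) ∂μ = 1) ∧
  (∀ᵐ x ∂μ, ∫⁻ y, ENNReal.ofReal (K x y) ∂μ ≤ 1)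

/-- `T` is a semi-doubly stochastic integral operator: `(Tf)(x) = ∫ K(x,y) f(y) dμ(y)` for
some semi-doubly stochastic kernel `K`. -/
def IsSemiDoublyStochasticIntegralOperator {X : Type*} [MeasurableSpace X] {μ : Measure X}
    (T : Lp ℝ 1 μ →L[ℝ] Lp ℝ 1 μ) : Prop :=
  ∃ K : X → X → ℝ, IsSemiDoublyStochasticKernel μ K ∧
    ∀ f : Lp ℝ 1 μ, (T f : X → ℝ) =ᵐ[μ] fun x => ∫ y, K x y * (f : X → ℝ) y ∂μ

set_option linter.unusedSectionVars false
set_option maxHeartbeats 1000000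

open scoped ENNReal NNReal

section Aux
variable {X : Type*} [MeasurableSpace X] {μ : Measure X}


lemma sds_posPart_sub_negPart (h : Lp ℝ 1 μ) : Lp.posPart h - Lp.negPart h = h := by
  apply Lp.ext
  filter_upwards [Lp.coeFn_sub (Lp.posPart h) (Lp.negPart h), Lp.coeFn_posPart h,
    Lp.coeFn_negPart_eq_max h] with a h1 h2 h3
  rw [h1]
  simp only [Pi.sub_apply, h2, h3]
  rcases le_total (h a) 0 with hc | hc <;> simp [max_eq_right, max_eq_left, hc] <;> linarith

lemma sds_norm_le {T : Lp ℝ 1 μ →L[ℝ] Lp ℝ 1 μ} (hT : IsSemiDoublyStochastic T)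
    (h : Lp ℝ 1 μ) : ‖T h‖ ≤ ‖h‖ := by
  obtain ⟨hpos, hint, -⟩ := hT
  set P := Lp.posPart h with hP
  set N := Lp.negPart h with hN
  have hPnn : 0 ≤ᵐ[μ] (P : X → ℝ) := by
    filter_upwards [Lp.coeFn_posPart h] with a ha
    rw [ha]; exact le_max_right _ _
  have hNnn : 0 ≤ᵐ[μ] (N : X → ℝ) := by
    filter_upwards [Lp.coeFn_negPart_eq_max h] with a ha
    rw [ha]; exact le_max_right _ _
  have hTh : T h = T P - T N := by
    rw [← map_sub, sds_posPart_sub_negPart]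
  rw [L1.norm_eq_integral_norm, L1.norm_eq_integral_norm]
  have hmono : ∫ a, ‖(T h : X → ℝ) a‖ ∂μ ≤ ∫ a, ((T P : X → ℝ) a + (T N : X → ℝ) a) ∂μ := by
    apply integral_mono_ae (L1.integrable_coeFn (T h)).norm
      ((L1.integrable_coeFn (T P)).add (L1.integrable_coeFn (T N)))
    have : (T h : X → ℝ) =ᵐ[μ] fun a => (T P : X → ℝ) a - (T N : X → ℝ) a := by
      rw [hTh]; exact Lp.coeFn_sub _ _
    filter_upwards [this, hpos P hPnn, hpos N hNnn] with a h1 h2 h3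
    rw [Real.norm_eq_abs, h1]
    refine (abs_sub _ _).trans ?_
    simp only [Pi.add_apply]
    rw [abs_of_nonneg h2, abs_of_nonneg h3]
  refine hmono.trans ?_
  rw [integral_add (L1.integrable_coeFn (T P)) (L1.integrable_coeFn (T N)), hint P, hint N]
  have : ∫ a, ‖(h : X → ℝ) a‖ ∂μ = ∫ a, ((P : X → ℝ) a + (N : X → ℝ) a) ∂μ := by
    apply integral_congr_ae
    filter_upwards [Lp.coeFn_posPart h, Lp.coeFn_negPart_eq_max h] with a h2 h3
    rw [Real.norm_eq_abs, h2, h3]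
    rcases le_total (h a) 0 with hc | hc
    · rw [abs_of_nonpos hc, max_eq_right hc, max_eq_left (neg_nonneg.mpr hc)]; ring
    · rw [abs_of_nonneg hc]; simp [max_eq_left hc, max_eq_right (neg_nonpos.mpr hc)]
  rw [this, integral_add (L1.integrable_coeFn P) (L1.integrable_coeFn N)]


lemma ae_le_one_of_setIntegral {v : Lp ℝ 1 μ}
    (hle : ∀ E : Set X, MeasurableSet E → μ E < ⊤ → ∫ x in E, (v : X → ℝ) x ∂μ ≤ (μ E).toReal) :
    (v : X → ℝ) ≤ᵐ[μ] fun _ => (1 : ℝ) := by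
  have hsm := (Lp.aestronglyMeasurable v)
  set w := hsm.mk (v : X → ℝ) with hw
  have hwm : Measurable w := hsm.stronglyMeasurable_mk.measurable
  have hae : (v : X → ℝ) =ᵐ[μ] w := hsm.ae_eq_mk
  have hwi : Integrable w μ := (L1.integrable_coeFn v).congr hae
  have hEnull : ∀ n : ℕ, μ {x | 1 + 1/(n+1 : ℝ) ≤ w x} = 0 := by
    intro n
    set c : ℝ := 1 + 1/(n+1 : ℝ) with hc
    have hcpos : (0:ℝ) < c := by positivity
    set E := {x | c ≤ w x} with hE
    have hEm : MeasurableSet E := measurableSet_le measurable_const hwm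
    have hEfin : μ E < ⊤ := hwi.measure_ge_lt_top hcpos
    have h1 : ∫ x in E, (v : X → ℝ) x ∂μ = ∫ x in E, w x ∂μ :=
      integral_congr_ae (ae_restrict_of_ae hae)
    have h2 : c * (μ E).toReal ≤ ∫ x in E, w x ∂μ := by
      have := setIntegral_mono_on (f := fun _ => c) (g := w)
        (integrableOn_const hEfin.ne) hwi.integrableOn hEm (fun x hx => hx)
      rw [setIntegral_const, smul_eq_mul, measureReal_def] at this; linarith
    have h3 := hle E hEm hEfin
    rw [h1] at h3
    have h4 : c * (μ E).toReal ≤ (μ E).toReal := h2.trans h3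
    rw [hc] at h4
    have hd : (0:ℝ) < 1/(n+1 : ℝ) := by positivity
    have h5 : (μ E).toReal ≤ 0 := by nlinarith [ENNReal.toReal_nonneg (a := μ E)]
    have : (μ E).toReal = 0 := le_antisymm h5 ENNReal.toReal_nonneg
    exact (ENNReal.toReal_eq_zero_iff _).mp this |>.resolve_right hEfin.ne
  have hwle : ∀ᵐ x ∂μ, w x ≤ 1 := by
    rw [ae_iff]
    have : μ {x | 1 < w x} = 0 := by
      have hsub : {x | 1 < w x} ⊆ ⋃ n : ℕ, {x | 1 + 1/(n+1 : ℝ) ≤ w x} := by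
        intro x hx
        simp only [Set.mem_setOf_eq] at hx
        obtain ⟨n, hn⟩ := exists_nat_one_div_lt (sub_pos.mpr hx)
        exact Set.mem_iUnion.mpr ⟨n, by simp only [Set.mem_setOf_eq]; linarith⟩
      exact measure_mono_null hsub (measure_iUnion_null fun n => hEnull n)
    convert this using 2
    ext x; simp [not_le]
  filter_upwards [hae, hwle] with x h1 h2
  rw [h1]; exact h2

variable [SigmaFinite μ]


section Kernel
variable {K : X → X → ℝ}

lemma kernel_lintegral_eq (hK : IsSemiDoublyStochasticKernel μ K) (h : X → ℝ)
    (hm : AEStronglyMeasurable h μ) :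
    ∫⁻ p : X × X, ‖K p.1 p.2 * h p.2‖₊ ∂(μ.prod μ) = ∫⁻ y, ‖h y‖₊ ∂μ := by
  obtain ⟨hKm, hKnn, hcol, hrow⟩ := hK
  have hFm : AEMeasurable (fun p : X × X => (‖K p.1 p.2 * h p.2‖₊ : ℝ≥0∞)) (μ.prod μ) :=
    ((hKm.aestronglyMeasurable.mul hm.comp_snd).enorm)
  rw [lintegral_prod_symm _ hFm]
  have : ∀ᵐ y ∂μ, ∫⁻ x, (‖K x y * h y‖₊ : ℝ≥0∞) ∂μ = (‖h y‖₊ : ℝ≥0∞) := by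
    filter_upwards [hcol] with y hy
    have e : ∀ x, (‖K x y * h y‖₊ : ℝ≥0∞) = ENNReal.ofReal (K x y) * ‖h y‖₊ := by
      intro x
      rw [nnnorm_mul, ENNReal.coe_mul, show ((‖K x y‖₊ : ℝ≥0∞)) = ENNReal.ofReal (K x y) from Real.enorm_eq_ofReal (hKnn x y)]
    simp_rw [e]
    have hxm : AEMeasurable (fun x => ENNReal.ofReal (K x y)) μ :=
      ((hKm.comp (measurable_id.prodMk measurable_const)).ennreal_ofReal).aemeasurable
    rw [lintegral_mul_const'' _ hxm, hy, one_mul]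
  rw [lintegral_congr_ae this]

lemma kernel_prod_integrable (hK : IsSemiDoublyStochasticKernel μ K) (h : Lp ℝ 1 μ) :
    Integrable (fun p : X × X => K p.1 p.2 * (h : X → ℝ) p.2) (μ.prod μ) := by
  refine ⟨hK.1.aestronglyMeasurable.mul (Lp.aestronglyMeasurable h).comp_snd, ?_⟩
  show (∫⁻ p : X × X, ‖K p.1 p.2 * (h : X → ℝ) p.2‖₊ ∂(μ.prod μ)) < ⊤
  rw [kernel_lintegral_eq hK _ (Lp.aestronglyMeasurable h)]
  have := Lp.eLpNorm_lt_top h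
  rw [eLpNorm_one_eq_lintegral_enorm] at this
  exact this

lemma kernel_fun_integrable (hK : IsSemiDoublyStochasticKernel μ K) (h : Lp ℝ 1 μ) :
    Integrable (fun x => ∫ y, K x y * (h : X → ℝ) y ∂μ) μ :=
  (kernel_prod_integrable hK h).integral_prod_left

lemma kernel_fun_eLpNorm_le (hK : IsSemiDoublyStochasticKernel μ K) (h : Lp ℝ 1 μ) :
    eLpNorm (fun x => ∫ y, K x y * (h : X → ℝ) y ∂μ) 1 μ ≤ eLpNorm (h : X → ℝ) 1 μ := by
  rw [eLpNorm_one_eq_lintegral_enorm, eLpNorm_one_eq_lintegral_enorm]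
  calc ∫⁻ x, (‖∫ y, K x y * (h : X → ℝ) y ∂μ‖₊ : ℝ≥0∞) ∂μ
      ≤ ∫⁻ x, ∫⁻ y, (‖K x y * (h : X → ℝ) y‖₊ : ℝ≥0∞) ∂μ ∂μ :=
        lintegral_mono fun x => enorm_integral_le_lintegral_enorm _
    _ = ∫⁻ p : X × X, (‖K p.1 p.2 * (h : X → ℝ) p.2‖₊ : ℝ≥0∞) ∂(μ.prod μ) :=
        (lintegral_prod _
          ((hK.1.aestronglyMeasurable.mul (Lp.aestronglyMeasurable h).comp_snd).enorm)).symm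
    _ = ∫⁻ y, (‖(h : X → ℝ) y‖₊ : ℝ≥0∞) ∂μ := kernel_lintegral_eq hK _ (Lp.aestronglyMeasurable h)

noncomputable def kernelOp (hK : IsSemiDoublyStochasticKernel μ K) :
    Lp ℝ 1 μ →L[ℝ] Lp ℝ 1 μ :=
  LinearMap.mkContinuous
    { toFun := fun h => (memLp_one_iff_integrable.mpr (kernel_fun_integrable hK h)).toLp _
      map_add' := by
        intro h h'
        apply Lp.ext
        have hadd : (((h + h') : Lp ℝ 1 μ) : X → ℝ) =ᵐ[μ] fun y => (h : X → ℝ) y + (h' : X → ℝ) y :=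
          Lp.coeFn_add h h'
        have key : (fun x => ∫ y, K x y * (((h + h') : Lp ℝ 1 μ) : X → ℝ) y ∂μ) =ᵐ[μ]
            fun x => (∫ y, K x y * (h : X → ℝ) y ∂μ) + ∫ y, K x y * (h' : X → ℝ) y ∂μ := by
          filter_upwards [(kernel_prod_integrable hK h).prod_right_ae,
            (kernel_prod_integrable hK h').prod_right_ae] with x hx hx'
          have e1 : ∫ y, K x y * (((h + h') : Lp ℝ 1 μ) : X → ℝ) y ∂μ
              = ∫ y, (K x y * (h : X → ℝ) y + K x y * (h' : X → ℝ) y) ∂μ := by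
            apply integral_congr_ae
            filter_upwards [hadd] with y hy
            rw [hy]; ring
          rw [e1, integral_add hx hx']
        refine ((memLp_one_iff_integrable.mpr
          (kernel_fun_integrable hK (h + h'))).coeFn_toLp).trans (key.trans ?_)
        filter_upwards [Lp.coeFn_add
            ((memLp_one_iff_integrable.mpr (kernel_fun_integrable hK h)).toLp _)
            ((memLp_one_iff_integrable.mpr (kernel_fun_integrable hK h')).toLp _),
          (memLp_one_iff_integrable.mpr (kernel_fun_integrable hK h)).coeFn_toLp,
          (memLp_one_iff_integrable.mpr (kernel_fun_integrable hK h')).coeFn_toLp]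
          with x e2 e3 e4
        rw [e2, Pi.add_apply, e3, e4]
      map_smul' := by
        intro c h
        apply Lp.ext
        have hsmul : ((c • h : Lp ℝ 1 μ) : X → ℝ) =ᵐ[μ] fun y => c * (h : X → ℝ) y :=
          Lp.coeFn_smul c h
        have key : (fun x => ∫ y, K x y * ((c • h : Lp ℝ 1 μ) : X → ℝ) y ∂μ) =ᵐ[μ]
            fun x => c * ∫ y, K x y * (h : X → ℝ) y ∂μ := by
          refine Eventually.of_forall fun x => ?_
          have e1 : ∫ y, K x y * ((c • h : Lp ℝ 1 μ) : X → ℝ) y ∂μ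
              = ∫ y, c * (K x y * (h : X → ℝ) y) ∂μ := by
            apply integral_congr_ae
            filter_upwards [hsmul] with y hy
            rw [hy]; ring
          exact e1.trans (integral_const_mul c _)
        refine ((memLp_one_iff_integrable.mpr
          (kernel_fun_integrable hK (c • h))).coeFn_toLp).trans (key.trans ?_)
        filter_upwards [Lp.coeFn_smul c
            ((memLp_one_iff_integrable.mpr (kernel_fun_integrable hK h)).toLp _),
          (memLp_one_iff_integrable.mpr (kernel_fun_integrable hK h)).coeFn_toLp]
          with x e2 e3
        simp only [RingHom.id_apply]
        rw [e2, Pi.smul_apply, e3, smul_eq_mul] }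
    1
    (by
      intro h
      simp only [LinearMap.coe_mk, AddHom.coe_mk, one_mul]
      rw [Lp.norm_toLp, Lp.norm_def]
      exact ENNReal.toReal_mono (Lp.eLpNorm_lt_top h).ne (kernel_fun_eLpNorm_le hK h))

lemma kernelOp_coeFn (hK : IsSemiDoublyStochasticKernel μ K) (h : Lp ℝ 1 μ) :
    (kernelOp hK h : X → ℝ) =ᵐ[μ] fun x => ∫ y, K x y * (h : X → ℝ) y ∂μ :=
  (memLp_one_iff_integrable.mpr (kernel_fun_integrable hK h)).coeFn_toLp

lemma kernelOp_norm_le (hK : IsSemiDoublyStochasticKernel μ K) (h : Lp ℝ 1 μ) :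
    ‖kernelOp hK h‖ ≤ ‖h‖ := by
  rw [show (kernelOp hK h : Lp ℝ 1 μ)
    = (memLp_one_iff_integrable.mpr (kernel_fun_integrable hK h)).toLp _ from rfl,
    Lp.norm_toLp, Lp.norm_def]
  exact ENNReal.toReal_mono (Lp.eLpNorm_lt_top h).ne (kernel_fun_eLpNorm_le hK h)

end Kernel

variable {K : X → X → ℝ}

lemma kernel_slice_measurable (hKm : Measurable (Function.uncurry K)) (y : X) :
    Measurable fun x => K x y :=
  hKm.comp (measurable_id.prodMk measurable_const)

lemma kernel_slice_measurable' (hKm : Measurable (Function.uncurry K)) (x : X) :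
    Measurable fun y => K x y :=
  hKm.comp (measurable_const.prodMk measurable_id)

lemma kernel_column_integral (hK : IsSemiDoublyStochasticKernel μ K) :
    ∀ᵐ y ∂μ, Integrable (fun x => K x y) μ ∧ ∫ x, K x y ∂μ = 1 := by
  obtain ⟨hKm, hKnn, hcol, -⟩ := hK
  filter_upwards [hcol] with y hy
  have hm : Measurable fun x => K x y := kernel_slice_measurable hKm y
  have hfi : Integrable (fun x => K x y) μ := by
    refine ⟨hm.aestronglyMeasurable, ?_⟩
    show (∫⁻ x, (‖K x y‖₊ : ℝ≥0∞) ∂μ) < ⊤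
    have : ∀ x, (‖K x y‖₊ : ℝ≥0∞) = ENNReal.ofReal (K x y) :=
      fun x => Real.enorm_eq_ofReal (hKnn x y)
    simp_rw [this, hy]
    exact ENNReal.one_lt_top
  refine ⟨hfi, ?_⟩
  rw [integral_eq_lintegral_of_nonneg_ae (Eventually.of_forall fun x => hKnn x y)
      hm.aestronglyMeasurable, hy]
  simp

theorem integralOperator_isSDS {T : Lp ℝ 1 μ →L[ℝ] Lp ℝ 1 μ}
    (hT : IsSemiDoublyStochasticIntegralOperator T) : IsSemiDoublyStochastic T := by
  obtain ⟨K, hK, hrep⟩ := hT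
  have hKm := hK.1
  have hKnn := hK.2.1
  refine ⟨?_, ?_, ?_⟩
  · intro f hf
    filter_upwards [hrep f] with x hx
    rw [Pi.zero_apply, hx]
    apply integral_nonneg_of_ae
    filter_upwards [hf] with y hy
    exact mul_nonneg (hKnn x y) hy
  · intro f
    rw [integral_congr_ae (hrep f)]
    have swap : ∫ x, ∫ y, K x y * (f : X → ℝ) y ∂μ ∂μ
        = ∫ y, ∫ x, K x y * (f : X → ℝ) y ∂μ ∂μ :=
      integral_integral_swap (kernel_prod_integrable hK f)
    rw [swap]
    apply integral_congr_ae
    filter_upwards [kernel_column_integral hK] with y hy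
    rw [integral_mul_const, hy.2, one_mul]
  · intro E B hE hEfin hB hBfin
    set χ := indicatorConstLp (μ := μ) 1 hB hBfin.ne (1 : ℝ) with hχ
    have hbound : ∀ᵐ x ∂μ, (T χ : X → ℝ) x ≤ 1 := by
      filter_upwards [hrep χ, hK.2.2.2] with x hx hxrow
      rw [hx]
      have e1 : ∫ y, K x y * (χ : X → ℝ) y ∂μ = ∫ y, K x y * Set.indicator B (fun _ => (1:ℝ)) y ∂μ := by
        apply integral_congr_ae
        filter_upwards [indicatorConstLp_coeFn (p := 1) (hs := hB) (hμs := hBfin.ne) (c := (1:ℝ))] with y hy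
        rw [hy]
      rw [e1]
      have hle : ∫ y, K x y * Set.indicator B (fun _ => (1:ℝ)) y ∂μ
          ≤ (∫⁻ y, ENNReal.ofReal (K x y) ∂μ).toReal := by
        have nn : 0 ≤ᵐ[μ] fun y => K x y * Set.indicator B (fun _ => (1:ℝ)) y := by
          refine Eventually.of_forall fun y => mul_nonneg (hKnn x y) (Set.indicator_nonneg (fun _ _ => zero_le_one) y)
        rw [integral_eq_lintegral_of_nonneg_ae nn
          (((kernel_slice_measurable' hKm x).mul
            (measurable_const.indicator hB)).aestronglyMeasurable)]
        apply ENNReal.toReal_mono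
        · exact (lt_of_le_of_lt hxrow ENNReal.one_lt_top).ne
        · apply lintegral_mono fun y => ?_
          apply ENNReal.ofReal_le_ofReal
          by_cases hy : y ∈ B
          · simp [hy]
          · simp [hy, hKnn x y]
      refine hle.trans ?_
      calc (∫⁻ y, ENNReal.ofReal (K x y) ∂μ).toReal ≤ (1 : ℝ≥0∞).toReal :=
            ENNReal.toReal_mono (by simp) hxrow
        _ = 1 := by simp
    have hTχi : IntegrableOn (T χ : X → ℝ) E μ := (L1.integrable_coeFn (T χ)).integrableOn
    calc ∫ x in E, (T χ : X → ℝ) x ∂μ ≤ ∫ x in E, (1:ℝ) ∂μ := by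
          apply integral_mono_ae hTχi (integrableOn_const hEfin.ne)
          exact ae_restrict_of_ae hbound
      _ = (μ E).toReal := by rw [setIntegral_const, smul_eq_mul, mul_one, measureReal_def]


lemma Lp_coeFn_sum {ι : Type*} (s : Finset ι) (F : ι → Lp ℝ 1 μ) :
    ((∑ i ∈ s, F i : Lp ℝ 1 μ) : X → ℝ) =ᵐ[μ] fun x => ∑ i ∈ s, (F i : X → ℝ) x := by
  classical
  induction s using Finset.induction_on with
  | empty => simpa [Pi.zero_def] using Lp.coeFn_zero (E := ℝ) (p := 1) (μ := μ)
  | insert a t hnm ih =>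
    rw [Finset.sum_insert hnm]
    filter_upwards [Lp.coeFn_add (F a) (∑ i ∈ t, F i), ih] with x h1 h2
    rw [h1, Pi.add_apply, h2, Finset.sum_insert hnm]

lemma exists_partition_approx (f : Lp ℝ 1 μ) {ε : ℝ} (hε : 0 < ε) :
    ∃ (C : ℕ → Set X) (hmeas : ∀ n, MeasurableSet (C n)) (hfin : ∀ n, μ (C n) < ⊤)
      (m : ℕ) (c : ℕ → ℝ),
      Pairwise (Function.onFun Disjoint C) ∧ (⋃ n, C n) = Set.univ ∧
      ‖f - ∑ n ∈ Finset.range m, c n • indicatorConstLp 1 (hmeas n) (hfin n).ne (1:ℝ)‖ ≤ ε := by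
  classical
  obtain ⟨g, hg, hgmem⟩ := (Lp.memLp f).exists_simpleFunc_eLpNorm_sub_lt
    (by norm_num : (1:ℝ≥0∞) ≠ ⊤) (by simp [hε] : ENNReal.ofReal ε ≠ 0)
  set l : List ℝ := (g.range.erase 0).toList with hl
  have hlnd : l.Nodup := Finset.nodup_toList _
  set m := l.length with hm
  set c : ℕ → ℝ := fun n => l.getD n 0 with hc
  have hceq : ∀ n (hn : n < m), c n = l[n] := by
    intro n hn
    rw [hc]
    simp only [List.getD_eq_getElem?_getD]
    rw [List.getElem?_eq_getElem hn, Option.getD_some]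
  have hcmem : ∀ n, n < m → c n ∈ g.range.erase 0 := by
    intro n hn
    rw [hceq n hn]
    have : l[n] ∈ l := List.getElem_mem hn
    exact Finset.mem_toList.mp this
  have hcne : ∀ n, n < m → c n ≠ 0 := fun n hn => Finset.ne_of_mem_erase (hcmem n hn)
  have hcinj : ∀ i j, i < m → j < m → c i = c j → i = j := by
    intro i j hi hj hij
    rw [hceq i hi, hceq j hj] at hij
    exact (List.Nodup.getElem_inj_iff hlnd).mp hij
  set C : ℕ → Set X := fun n =>
    if n < m then g ⁻¹' {c n} else (disjointed (spanningSets μ) (n - m)) ∩ g ⁻¹' {0} with hC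
  have hCfib : ∀ n, n < m → C n = g ⁻¹' {c n} := by intro n hn; simp only [hC, if_pos hn]
  have hCtail : ∀ n, ¬ n < m → C n = (disjointed (spanningSets μ) (n - m)) ∩ g ⁻¹' {0} := by
    intro n hn; simp only [hC, if_neg hn]
  have hmeas : ∀ n, MeasurableSet (C n) := by
    intro n
    by_cases hn : n < m
    · rw [hCfib n hn]; exact g.measurableSet_fiber _
    · rw [hCtail n hn]
      exact (MeasurableSet.disjointed (measurableSet_spanningSets μ) _).inter
        (g.measurableSet_fiber _)
  have hfin : ∀ n, μ (C n) < ⊤ := by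
    intro n
    by_cases hn : n < m
    · rw [hCfib n hn]
      exact SimpleFunc.measure_preimage_lt_top_of_memLp one_ne_zero (by norm_num) g hgmem _
        (hcne n hn)
    · rw [hCtail n hn]
      refine lt_of_le_of_lt (measure_mono ?_) (measure_spanningSets_lt_top μ (n - m))
      exact (Set.inter_subset_left).trans (disjointed_subset _ _)
  have hdisj : Pairwise (Function.onFun Disjoint C) := by
    intro i j hij
    rw [Function.onFun, Set.disjoint_left]
    intro x hxi hxj
    by_cases hi : i < m <;> by_cases hj : j < m
    · rw [hCfib i hi] at hxi; rw [hCfib j hj] at hxj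
      exact hij (hcinj i j hi hj (by
        have e1 : g x = c i := hxi
        have e2 : g x = c j := hxj
        rw [← e1, ← e2]))
    · rw [hCfib i hi] at hxi; rw [hCtail j hj] at hxj
      exact hcne i hi (by
        have e1 : g x = c i := hxi
        have e2 : g x = 0 := hxj.2
        rw [← e1, e2])
    · rw [hCtail i hi] at hxi; rw [hCfib j hj] at hxj
      exact hcne j hj (by
        have e1 : g x = c j := hxj
        have e2 : g x = 0 := hxi.2
        rw [← e1, e2])
    · rw [hCtail i hi] at hxi; rw [hCtail j hj] at hxj
      have hd := disjoint_disjointed (spanningSets μ) (i := i - m) (j := j - m) (by omega)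
      exact Set.disjoint_left.mp hd hxi.1 hxj.1
  have hcover : (⋃ n, C n) = Set.univ := by
    rw [Set.eq_univ_iff_forall]
    intro x
    by_cases hx : g x = 0
    · have : x ∈ ⋃ k, disjointed (spanningSets μ) k := by
        rw [iUnion_disjointed, iUnion_spanningSets]; trivial
      obtain ⟨k, hk⟩ := Set.mem_iUnion.mp this
      refine Set.mem_iUnion.mpr ⟨k + m, ?_⟩
      rw [hCtail (k + m) (by omega)]
      have : k + m - m = k := by omega
      rw [this]
      exact ⟨hk, hx⟩
    · have hmem : g x ∈ l := by
        rw [hl, Finset.mem_toList, Finset.mem_erase]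
        exact ⟨hx, g.mem_range_self x⟩
      obtain ⟨n, hn, hgn⟩ := List.getElem_of_mem hmem
      refine Set.mem_iUnion.mpr ⟨n, ?_⟩
      rw [hCfib n hn]
      show g x ∈ ({c n} : Set ℝ)
      rw [hceq n hn, hgn]
      rfl
  refine ⟨C, hmeas, hfin, m, c, hdisj, hcover, ?_⟩
  set s : Lp ℝ 1 μ := ∑ n ∈ Finset.range m, c n • indicatorConstLp 1 (hmeas n) (hfin n).ne (1:ℝ)
    with hs
  have hterm : ∀ n, ((c n • indicatorConstLp 1 (hmeas n) (hfin n).ne (1:ℝ) : Lp ℝ 1 μ) : X → ℝ)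
      =ᵐ[μ] fun x => c n * Set.indicator (C n) (fun _ => (1:ℝ)) x := by
    intro n
    refine (Lp.coeFn_smul _ _).trans ?_
    filter_upwards [indicatorConstLp_coeFn (p := 1) (hs := hmeas n) (hμs := (hfin n).ne)
      (c := (1:ℝ))] with x hx
    simp [hx]
  have hsg : (s : X → ℝ) =ᵐ[μ] ⇑g := by
    have hall : ∀ᵐ x ∂μ, ∀ n, ((c n • indicatorConstLp 1 (hmeas n) (hfin n).ne (1:ℝ) : Lp ℝ 1 μ) : X → ℝ) x
        = c n * Set.indicator (C n) (fun _ => (1:ℝ)) x := ae_all_iff.mpr hterm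
    filter_upwards [Lp_coeFn_sum (Finset.range m)
      (fun n => c n • indicatorConstLp 1 (hmeas n) (hfin n).ne (1:ℝ)), hall] with x h1 h2
    rw [h1]
    have : ∀ n ∈ Finset.range m, ((c n • indicatorConstLp 1 (hmeas n) (hfin n).ne (1:ℝ) : Lp ℝ 1 μ) : X → ℝ) x
        = c n * Set.indicator (C n) (fun _ => (1:ℝ)) x := fun n _ => h2 n
    rw [Finset.sum_congr rfl this]
    by_cases hx : g x = 0
    · rw [hx]
      apply Finset.sum_eq_zero
      intro n hn
      have hnm := Finset.mem_range.mp hn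
      have : x ∉ C n := by
        rw [hCfib n hnm]
        intro hmem
        exact hcne n hnm (by rw [← show g x = c n from hmem, hx])
      simp [Set.indicator_of_notMem this]
    · have hmem : g x ∈ l := by
        rw [hl, Finset.mem_toList, Finset.mem_erase]
        exact ⟨hx, g.mem_range_self x⟩
      obtain ⟨n0, hn0, hgn0⟩ := List.getElem_of_mem hmem
      have hxC : x ∈ C n0 := by
        rw [hCfib n0 hn0]
        show g x ∈ ({c n0} : Set ℝ)
        rw [hceq n0 hn0, hgn0]; rfl
      rw [Finset.sum_eq_single n0]
      · rw [Set.indicator_of_mem hxC]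
        rw [hceq n0 hn0, hgn0]; ring
      · intro n hn hne
        have hnm := Finset.mem_range.mp hn
        have : x ∉ C n := by
          rw [hCfib n hnm]
          intro hmem
          have : c n = c n0 := by
            rw [← show g x = c n from hmem, hceq n0 hn0, hgn0]
          exact hne (hcinj n n0 hnm hn0 this)
        simp [Set.indicator_of_notMem this]
      · intro h
        exact absurd (Finset.mem_range.mpr hn0) h
  have : ((f - s : Lp ℝ 1 μ) : X → ℝ) =ᵐ[μ] (f : X → ℝ) - ⇑g := by
    refine (Lp.coeFn_sub f s).trans ?_
    filter_upwards [hsg] with x hx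
    simp [hx]
  rw [Lp.norm_def, eLpNorm_congr_ae this]
  have := hg.le
  calc (eLpNorm ((f : X → ℝ) - ⇑g) 1 μ).toReal ≤ (ENNReal.ofReal ε).toReal :=
        ENNReal.toReal_mono ENNReal.ofReal_ne_top this
    _ = ε := ENNReal.toReal_ofReal hε.le
lemma exists_integralOp_close {S : Lp ℝ 1 μ →L[ℝ] Lp ℝ 1 μ} (hS : IsSemiDoublyStochastic S)
    (f : Lp ℝ 1 μ) {ε : ℝ} (hε : 0 < ε) :
    ∃ T : Lp ℝ 1 μ →L[ℝ] Lp ℝ 1 μ,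
      IsSemiDoublyStochasticIntegralOperator T ∧ ‖T f - S f‖ ≤ ε := by
  classical
  obtain ⟨C, hmeas, hfin, m, c, hdisj, hcover, happrox⟩ := exists_partition_approx f (half_pos hε)
  set χ : ℕ → Lp ℝ 1 μ := fun n => indicatorConstLp 1 (hmeas n) (hfin n).ne (1:ℝ) with hχdef
  have hχnn : ∀ n, 0 ≤ᵐ[μ] (χ n : X → ℝ) := by
    intro n
    filter_upwards [indicatorConstLp_coeFn (p := 1) (hs := hmeas n) (hμs := (hfin n).ne)
      (c := (1:ℝ))] with x hx
    rw [Pi.zero_apply, hx]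
    exact Set.indicator_nonneg (fun _ _ => zero_le_one) x
  have hSχnn : ∀ n, 0 ≤ᵐ[μ] (S (χ n) : X → ℝ) := fun n => hS.1 _ (hχnn n)
  have hkex : ∀ n : ℕ, ∃ kk : X → ℝ, Measurable kk ∧ (∀ x, 0 ≤ kk x) ∧
      kk =ᵐ[μ] (S (χ n) : X → ℝ) := by
    intro n
    refine ⟨fun x => max ((Lp.aestronglyMeasurable (S (χ n))).mk _ x) 0,
      ((Lp.aestronglyMeasurable (S (χ n))).stronglyMeasurable_mk.measurable).max
        measurable_const,
      fun x => le_max_right _ _, ?_⟩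
    filter_upwards [(Lp.aestronglyMeasurable (S (χ n))).ae_eq_mk, hSχnn n] with x h1 h2
    rw [Pi.zero_apply] at h2
    show max _ 0 = _
    rw [← h1]
    exact max_eq_left h2
  choose k hkm hknn hkae using hkex
  have hex : ∀ y, ∃ n, y ∈ C n := fun y =>
    Set.mem_iUnion.mp (hcover ▸ Set.mem_univ y)
  set N : X → ℕ := fun y => Nat.find (hex y) with hNdef
  have hNmeas : Measurable N := measurable_find hex (fun n => hmeas n)
  have hNC : ∀ y, y ∈ C (N y) := fun y => Nat.find_spec (hex y)
  have hNeq : ∀ {y n}, y ∈ C n → N y = n := by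
    intro y n hy
    by_contra hne
    exact Set.disjoint_left.mp (hdisj hne) (hNC y) hy
  set t : ℕ → ℝ := fun n => (μ (C n)).toReal with htdef
  set K : X → X → ℝ := fun x y => k (N y) x / t (N y) with hKdef
  have hKmeas : Measurable (Function.uncurry K) := by
    have h1 : Measurable (fun q : X × ℕ => k q.2 q.1 / t q.2) :=
      measurable_from_prod_countable_left (fun n => (hkm n).div_const (t n))
    exact h1.comp (measurable_fst.prodMk (hNmeas.comp measurable_snd))
  have hKnn : ∀ x y, 0 ≤ K x y := fun x y => div_nonneg (hknn _ _) ENNReal.toReal_nonneg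
  have hlintk : ∀ n, ∫⁻ x, ENNReal.ofReal (k n x) ∂μ = μ (C n) := by
    intro n
    have hcg : (fun x => ENNReal.ofReal (k n x)) =ᵐ[μ]
        fun x => ENNReal.ofReal ((S (χ n) : X → ℝ) x) :=
      (hkae n).mono fun x hx => by dsimp only; rw [hx]
    rw [lintegral_congr_ae hcg,
      ← ofReal_integral_eq_lintegral_ofReal (L1.integrable_coeFn _) (hSχnn n), hS.2.1 (χ n)]
    have : ∫ x, (χ n : X → ℝ) x ∂μ = (μ (C n)).toReal • (1:ℝ) :=
      integral_indicatorConstLp (hmeas n) (hfin n).ne _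
    rw [this, smul_eq_mul, mul_one, ENNReal.ofReal_toReal (hfin n).ne]
  have hcol : ∀ᵐ y ∂μ, ∫⁻ x, ENNReal.ofReal (K x y) ∂μ = 1 := by
    have hZ : μ (⋃ n, (if μ (C n) = 0 then C n else (∅ : Set X))) = 0 :=
      measure_iUnion_null (fun n => by split <;> simp_all)
    rw [ae_iff]
    refine measure_mono_null (fun y hy => ?_) hZ
    simp only [Set.mem_setOf_eq] at hy
    by_contra hyZ
    apply hy
    have hne : μ (C (N y)) ≠ 0 := by
      intro h0
      exact hyZ (Set.mem_iUnion.mpr ⟨N y, by rw [if_pos h0]; exact hNC y⟩)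
    have htpos : 0 < t (N y) := ENNReal.toReal_pos hne (hfin _).ne
    have hKeq : ∀ x, ENNReal.ofReal (K x y)
        = ENNReal.ofReal (k (N y) x) * ENNReal.ofReal (t (N y))⁻¹ := by
      intro x
      show ENNReal.ofReal (k (N y) x / t (N y)) = _
      rw [div_eq_mul_inv, ENNReal.ofReal_mul (hknn _ _)]
    simp_rw [hKeq]
    rw [lintegral_mul_const'' _ ((hkm (N y)).ennreal_ofReal).aemeasurable, hlintk]
    have hμt : μ (C (N y)) = ENNReal.ofReal (t (N y)) :=
      (ENNReal.ofReal_toReal (hfin (N y)).ne).symm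
    rw [hμt, ← ENNReal.ofReal_mul htpos.le, mul_inv_cancel₀ htpos.ne', ENNReal.ofReal_one]
  have hrowsum : ∀ s : Finset ℕ, ∀ᵐ x ∂μ, ∑ n ∈ s, k n x ≤ 1 := by
    intro s
    set U := ⋃ n ∈ s, C n with hU
    have hUmeas : MeasurableSet U := s.measurableSet_biUnion (fun n _ => hmeas n)
    have hUfin : μ U < ⊤ := lt_of_le_of_lt (measure_biUnion_finset_le s C)
      (ENNReal.sum_lt_top.mpr fun n _ => hfin n)
    have hsum : indicatorConstLp 1 hUmeas hUfin.ne (1:ℝ) = ∑ n ∈ s, χ n := by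
      apply Lp.ext
      have h3 : ∀ᵐ x ∂μ, ∀ n : ℕ, (χ n : X → ℝ) x = Set.indicator (C n) (fun _ => (1:ℝ)) x :=
        ae_all_iff.mpr fun n => indicatorConstLp_coeFn
      filter_upwards [indicatorConstLp_coeFn (p := 1) (hs := hUmeas) (hμs := hUfin.ne)
        (c := (1:ℝ)), Lp_coeFn_sum s χ, h3] with x h1 h2 h3
      rw [h1, h2, Finset.sum_congr rfl (fun n _ => h3 n)]
      by_cases hx : x ∈ U
      · obtain ⟨n0, hn0s, hn0⟩ := Set.mem_iUnion₂.mp hx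
        rw [Set.indicator_of_mem hx, Finset.sum_eq_single n0]
        · rw [Set.indicator_of_mem hn0]
        · intro n hn hne
          have hxn : x ∉ C n := fun hmem => Set.disjoint_left.mp (hdisj hne) hmem hn0
          rw [Set.indicator_of_notMem hxn]
        · intro habs; exact absurd hn0s habs
      · rw [Set.indicator_of_notMem hx, Finset.sum_eq_zero]
        intro n hn
        have hxn : x ∉ C n := fun hmem => hx (Set.mem_iUnion₂.mpr ⟨n, hn, hmem⟩)
        rw [Set.indicator_of_notMem hxn]
    have hb : (S (indicatorConstLp 1 hUmeas hUfin.ne (1:ℝ)) : X → ℝ) ≤ᵐ[μ] fun _ => (1:ℝ) :=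
      ae_le_one_of_setIntegral (fun E hE hEfin => hS.2.2 E U hE hEfin hUmeas hUfin)
    have hcoe : (S (indicatorConstLp 1 hUmeas hUfin.ne (1:ℝ)) : X → ℝ) =ᵐ[μ]
        fun x => ∑ n ∈ s, k n x := by
      rw [hsum, map_sum]
      refine (Lp_coeFn_sum s (fun n => S (χ n))).trans ?_
      filter_upwards [ae_all_iff.mpr hkae] with x hx
      exact (Finset.sum_congr rfl (fun n _ => (hx n).symm))
    filter_upwards [hb, hcoe] with x h1 h2
    rw [← h2]; exact h1
  have hrow : ∀ᵐ x ∂μ, ∫⁻ y, ENNReal.ofReal (K x y) ∂μ ≤ 1 := by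
    filter_upwards [ae_all_iff.mpr hrowsum] with x hx
    have hdecomp : ∫⁻ y, ENNReal.ofReal (K x y) ∂μ
        = ∑' n, ∫⁻ y in C n, ENNReal.ofReal (K x y) ∂μ := by
      rw [← setLIntegral_univ, ← hcover, lintegral_iUnion hmeas hdisj]
    have hpc : ∀ n, ∫⁻ y in C n, ENNReal.ofReal (K x y) ∂μ ≤ ENNReal.ofReal (k n x) := by
      intro n
      have heq : ∫⁻ y in C n, ENNReal.ofReal (K x y) ∂μ
          = ENNReal.ofReal (k n x / t n) * μ (C n) := by
        rw [setLIntegral_congr_fun (hmeas n)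
          (fun y hy => by
            show ENNReal.ofReal (k (N y) x / t (N y)) = ENNReal.ofReal (k n x / t n)
            rw [hNeq hy])]
        exact setLIntegral_const _ _
      by_cases h0 : μ (C n) = 0
      · rw [heq, h0, mul_zero]; positivity
      · have htpos : 0 < t n := ENNReal.toReal_pos h0 (hfin n).ne
        have hμt : μ (C n) = ENNReal.ofReal (t n) :=
          (ENNReal.ofReal_toReal (hfin n).ne).symm
        rw [heq, hμt, ← ENNReal.ofReal_mul (div_nonneg (hknn n x) htpos.le),
          div_mul_cancel₀ _ htpos.ne']
    calc ∫⁻ y, ENNReal.ofReal (K x y) ∂μ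
        = ∑' n, ∫⁻ y in C n, ENNReal.ofReal (K x y) ∂μ := hdecomp
      _ ≤ ∑' n, ENNReal.ofReal (k n x) := ENNReal.tsum_le_tsum hpc
      _ ≤ 1 := by
          rw [ENNReal.tsum_eq_iSup_sum]
          refine iSup_le fun s => ?_
          rw [← ENNReal.ofReal_sum_of_nonneg (fun n _ => hknn n x)]
          calc ENNReal.ofReal (∑ n ∈ s, k n x) ≤ ENNReal.ofReal 1 :=
                ENNReal.ofReal_le_ofReal (hx s)
            _ = 1 := ENNReal.ofReal_one
  have hKkernel : IsSemiDoublyStochasticKernel μ K := ⟨hKmeas, hKnn, hcol, hrow⟩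
  refine ⟨kernelOp hKkernel, ⟨K, hKkernel, fun h => kernelOp_coeFn hKkernel h⟩, ?_⟩
  have hIχ : ∀ n, kernelOp hKkernel (χ n) = S (χ n) := by
    intro n
    apply Lp.ext
    refine (kernelOp_coeFn hKkernel (χ n)).trans ?_
    have hint : ∀ x, ∫ y, K x y * (χ n : X → ℝ) y ∂μ = ∫ y in C n, K x y ∂μ := by
      intro x
      rw [← integral_indicator (hmeas n)]
      apply integral_congr_ae
      filter_upwards [indicatorConstLp_coeFn (p := 1) (hs := hmeas n) (hμs := (hfin n).ne)
        (c := (1:ℝ))] with y hy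
      rw [hy]
      by_cases hmem : y ∈ C n <;> simp [hmem]
    have hconst : ∀ x, ∫ y in C n, K x y ∂μ = t n * (k n x / t n) := by
      intro x
      rw [setIntegral_congr_fun (hmeas n) (g := fun _ => k n x / t n)
        (fun y hy => by
          show k (N y) x / t (N y) = k n x / t n
          rw [hNeq hy])]
      rw [setIntegral_const, smul_eq_mul, measureReal_def]
    have hstep : (fun x => ∫ y, K x y * (χ n : X → ℝ) y ∂μ) =ᵐ[μ]
        (fun x => t n * (k n x / t n)) :=
      Eventually.of_forall fun x => (hint x).trans (hconst x)
    refine hstep.trans ?_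
    by_cases h0 : μ (C n) = 0
    · have ht0 : t n = 0 := by rw [htdef]; simp [h0]
      have hχ0 : χ n = 0 := by
        apply Lp.ext
        refine (indicatorConstLp_coeFn (p := 1) (hs := hmeas n) (hμs := (hfin n).ne)
          (c := (1:ℝ))).trans ?_
        refine EventuallyEq.trans ?_ (Lp.coeFn_zero ℝ 1 μ).symm
        have : ∀ᵐ y ∂μ, y ∉ C n := by
          rw [ae_iff]
          simpa [h0] using h0
        filter_upwards [this] with y hy
        simp [Set.indicator_of_notMem hy]
      rw [hχ0, map_zero]
      refine EventuallyEq.trans ?_ (Lp.coeFn_zero ℝ 1 μ).symm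
      refine Eventually.of_forall fun x => ?_
      rw [ht0]
      simp
    · have htpos : 0 < t n := ENNReal.toReal_pos h0 (hfin n).ne
      refine EventuallyEq.trans ?_ (hkae n)
      refine Eventually.of_forall fun x => ?_
      show t n * (k n x / t n) = k n x
      field_simp
  set s : Lp ℝ 1 μ := ∑ n ∈ Finset.range m, c n • χ n with hsdef
  have hTs : kernelOp hKkernel s = S s := by
    rw [hsdef, map_sum, map_sum]
    exact Finset.sum_congr rfl fun n _ => by rw [ContinuousLinearMap.map_smul, ContinuousLinearMap.map_smul, hIχ n]
  have hsplit : kernelOp hKkernel f - S f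
      = kernelOp hKkernel (f - s) + S (s - f) := by
    rw [map_sub, map_sub, hTs]
    abel
  rw [hsplit]
  calc ‖kernelOp hKkernel (f - s) + S (s - f)‖
      ≤ ‖kernelOp hKkernel (f - s)‖ + ‖S (s - f)‖ := norm_add_le _ _
    _ ≤ ‖f - s‖ + ‖s - f‖ := add_le_add (kernelOp_norm_le hKkernel _) (sds_norm_le hS _)
    _ = ‖f - s‖ + ‖f - s‖ := by rw [norm_sub_rev]
    _ ≤ ε / 2 + ε / 2 := add_le_add happrox happrox
    _ = ε := add_halves ε


end Aux

/-- Let `(X,μ)` be σ-finite and `f, g ∈ L¹(X,μ)` nonnegative.  There is a sequence of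
semi-doubly stochastic operators `(Sₖ)` with `‖Sₖf − g‖₁ → 0` if and only if there is a
sequence of semi-doubly stochastic *integral* operators `(Iₙ)` with `‖Iₙf − g‖₁ → 0`. -/
theorem semiDoublyStochastic_approx_iff_integral_operator_approx
    {X : Type*} [MeasurableSpace X] (μ : Measure X) [SigmaFinite μ]
    (f g : Lp ℝ 1 μ) (hf : 0 ≤ᵐ[μ] (f : X → ℝ)) (hg : 0 ≤ᵐ[μ] (g : X → ℝ)) :
    (∃ S : ℕ → (Lp ℝ 1 μ →L[ℝ] Lp ℝ 1 μ),
      (∀ k, IsSemiDoublyStochastic (S k)) ∧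
      Tendsto (fun k => ‖S k f - g‖) atTop (𝓝 0))
    ↔
    (∃ I : ℕ → (Lp ℝ 1 μ →L[ℝ] Lp ℝ 1 μ),
      (∀ n, IsSemiDoublyStochasticIntegralOperator (I n)) ∧
      Tendsto (fun n => ‖I n f - g‖) atTop (𝓝 0)) := by
  constructor
  · rintro ⟨S, hS, htend⟩
    have hch : ∀ k : ℕ, ∃ T : Lp ℝ 1 μ →L[ℝ] Lp ℝ 1 μ,
        IsSemiDoublyStochasticIntegralOperator T ∧ ‖T f - S k f‖ ≤ 1 / (k + 1) :=
      fun k => exists_integralOp_close (hS k) f (by positivity)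
    choose T hT1 hT2 using hch
    refine ⟨T, hT1, ?_⟩
    have hb : ∀ k : ℕ, ‖T k f - g‖ ≤ ‖S k f - g‖ + 1 / (k + 1) := by
      intro k
      calc ‖T k f - g‖ = ‖(T k f - S k f) + (S k f - g)‖ := by abel_nf
        _ ≤ ‖T k f - S k f‖ + ‖S k f - g‖ := norm_add_le _ _
        _ ≤ 1 / (k + 1) + ‖S k f - g‖ := add_le_add (hT2 k) le_rfl
        _ = ‖S k f - g‖ + 1 / (k + 1) := by ring
    have hlim : Tendsto (fun k : ℕ => ‖S k f - g‖ + 1 / (k + 1)) atTop (𝓝 0) := by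
      have := htend.add tendsto_one_div_add_atTop_nhds_zero_nat
      simpa using this
    exact squeeze_zero (fun k => norm_nonneg _) hb hlim
  · rintro ⟨I, hI, htend⟩
    exact ⟨I, fun n => integralOperator_isSDS (hI n), htend⟩
end

section
/- Let (X, μ) be a σ-finite measure space and f, g ∈ L¹(X,μ) nonnegative with ∫_X g dμ = ∫_X f dμ. If ∫_X max(g − u, 0) dμ ≤ ∫_X max(f − u, 0) dμ for every real u > 0, then for every increasing convex function φ : [0,∞) → [0,∞) with φ(0) = 0, one has ∫_X φ∘g dμ ≤ ∫_X φ∘f dμ (the integrals of these nonnegative measurable functions taken in [0,∞]). -/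
open MeasureTheory

section auxiliary

/-- Infimum of forward slopes of `φ` at `u` (a sub-derivative on `[0,∞)`). -/
noncomputable def rd (φ : ℝ → ℝ) (u : ℝ) : ℝ :=
  sInf ((fun v => (φ v - φ u) / (v - u)) '' Set.Ioi u)

variable {φ : ℝ → ℝ}

lemma rd_slope_nonneg (hm : MonotoneOn φ (Set.Ici 0)) {u v : ℝ} (hu : 0 ≤ u) (huv : u < v) :
    0 ≤ (φ v - φ u) / (v - u) :=
  div_nonneg (sub_nonneg.2 (hm hu (hu.trans huv.le) huv.le)) (sub_nonneg.2 huv.le)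

lemma rd_bddBelow (hm : MonotoneOn φ (Set.Ici 0)) {u : ℝ} (hu : 0 ≤ u) :
    BddBelow ((fun v => (φ v - φ u) / (v - u)) '' Set.Ioi u) := by
  refine ⟨0, ?_⟩
  rintro s ⟨v, hv, rfl⟩
  exact rd_slope_nonneg hm hu hv

lemma rd_le_slope (hm : MonotoneOn φ (Set.Ici 0)) {u v : ℝ} (hu : 0 ≤ u) (huv : u < v) :
    rd φ u ≤ (φ v - φ u) / (v - u) :=
  csInf_le (rd_bddBelow hm hu) ⟨v, huv, rfl⟩

lemma rd_nonneg (hm : MonotoneOn φ (Set.Ici 0)) {u : ℝ} (hu : 0 ≤ u) : 0 ≤ rd φ u :=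
  le_csInf ⟨_, ⟨u + 1, by simp, rfl⟩⟩
    (by rintro s ⟨v, hv, rfl⟩; exact rd_slope_nonneg hm hu hv)

lemma slope_le_rd (hc : ConvexOn ℝ (Set.Ici 0) φ) {t u : ℝ} (ht : 0 ≤ t) (htu : t < u) :
    (φ u - φ t) / (u - t) ≤ rd φ u := by
  refine le_csInf ⟨_, ⟨u + 1, by simp, rfl⟩⟩ ?_
  rintro s ⟨v, (hv : u < v), rfl⟩
  exact hc.slope_mono_adjacent ht (le_of_lt ((ht.trans_lt htu).trans hv)) htu hv

lemma rd_support (hm : MonotoneOn φ (Set.Ici 0)) (hc : ConvexOn ℝ (Set.Ici 0) φ)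
    {u t : ℝ} (hu : 0 ≤ u) (ht : 0 ≤ t) :
    φ u + rd φ u * (t - u) ≤ φ t := by
  rcases lt_trichotomy t u with h | rfl | h
  · have h1 := slope_le_rd hc ht h
    have h2 : 0 < u - t := by linarith
    have h3 : φ u - φ t ≤ rd φ u * (u - t) := (div_le_iff₀ h2).1 h1
    nlinarith
  · simp
  · have h1 := rd_le_slope hm hu h
    have h2 : 0 < t - u := by linarith
    have h3 : rd φ u * (t - u) ≤ φ t - φ u := (le_div_iff₀ h2).1 h1
    linarith

lemma rd_mono (hm : MonotoneOn φ (Set.Ici 0)) (hc : ConvexOn ℝ (Set.Ici 0) φ)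
    {u v : ℝ} (hu : 0 ≤ u) (huv : u ≤ v) : rd φ u ≤ rd φ v := by
  rcases eq_or_lt_of_le huv with rfl | h
  · exact le_refl _
  · exact (rd_le_slope hm hu h).trans (slope_le_rd hc hu h)

/-- Piecewise-linear approximation of `φ`: a conic combination of `t` and `(t-u)⁺`. -/
noncomputable def pwl (φ : ℝ → ℝ) (s : ℝ) (N : ℕ) (t : ℝ) : ℝ :=
  rd φ 0 * t + ∑ j ∈ Finset.range N,
    (rd φ ((j + 1) * s) - rd φ (j * s)) * max (t - (j + 1) * s) 0

lemma pwl_continuous (φ : ℝ → ℝ) (s : ℝ) (N : ℕ) : Continuous (pwl φ s N) := by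
  apply Continuous.add
  · exact continuous_const.mul continuous_id
  · exact continuous_finset_sum _ fun j _ =>
      continuous_const.mul ((continuous_id.sub continuous_const).max continuous_const)

variable (hm : MonotoneOn φ (Set.Ici 0)) (hc : ConvexOn ℝ (Set.Ici 0) φ) (h0 : φ 0 = 0)
include hm hc

lemma pwl_nonneg {s : ℝ} (hs : 0 < s) (N : ℕ) {t : ℝ} (ht : 0 ≤ t) :
    0 ≤ pwl φ s N t := by
  refine add_nonneg (mul_nonneg (rd_nonneg hm le_rfl) ht) (Finset.sum_nonneg fun j _ => ?_)
  refine mul_nonneg (sub_nonneg.2 (rd_mono hm hc (mul_nonneg (Nat.cast_nonneg j) hs.le)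
    (mul_le_mul_of_nonneg_right (by push_cast; linarith) hs.le))) (le_max_right _ _)

include h0

lemma pwl_le {s : ℝ} (hs : 0 < s) (N : ℕ) :
    ∀ t, 0 ≤ t → pwl φ s N t ≤ φ t ∧
      ((N : ℝ) * s ≤ t → pwl φ s N t ≤ φ ((N : ℝ) * s) + rd φ ((N : ℝ) * s) * (t - (N : ℝ) * s)) := by
  induction N with
  | zero =>
    intro t ht
    have h1 := rd_support hm hc (le_refl (0:ℝ)) ht
    constructor
    · simp only [pwl, Finset.range_zero, Finset.sum_empty, add_zero]
      linarith [h1]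
    · intro _
      simp only [pwl, Finset.range_zero, Finset.sum_empty, add_zero, Nat.cast_zero, zero_mul]
      linarith [h1]
  | succ N ih =>
    intro t ht
    set a : ℝ := (N : ℝ) * s with ha
    set b : ℝ := ((N : ℕ) + 1 : ℝ) * s with hb
    have hab : b = a + s := by rw [ha, hb]; ring
    have ha0 : 0 ≤ a := mul_nonneg (Nat.cast_nonneg _) hs.le
    have hb0 : 0 ≤ b := by rw [hab]; linarith
    have hsum : pwl φ s (N + 1) t = pwl φ s N t + (rd φ b - rd φ a) * max (t - b) 0 := by
      simp only [pwl, Finset.sum_range_succ]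
      push_cast
      ring
    have hcoef : 0 ≤ rd φ b - rd φ a := sub_nonneg.2 (rd_mono hm hc ha0 (by rw [hab]; linarith))
    have second : b ≤ t → pwl φ s (N + 1) t ≤ φ b + rd φ b * (t - b) := by
      intro hbt
      have hmax : max (t - b) 0 = t - b := max_eq_left (by linarith)
      have ih2 := (ih t ht).2 (by linarith [hab])
      have hsupp := rd_support hm hc ha0 hb0
      have e : rd φ a * (t - a) = rd φ a * s + rd φ a * (t - b) := by rw [hab]; ring
      have e1 : rd φ a * (b - a) = rd φ a * s := by rw [hab]; ring
      rw [hsum, hmax]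
      nlinarith [ih2, hsupp, e, e1]
    constructor
    · rcases le_or_gt t b with h | h
      · have hmax : max (t - b) 0 = 0 := max_eq_right (by linarith)
        rw [hsum, hmax, mul_zero, add_zero]
        exact (ih t ht).1
      · have h2 := second h.le
        have h3 := rd_support hm hc hb0 ht
        linarith
    · intro hbt
      have hNb : ((N + 1 : ℕ) : ℝ) * s = b := by push_cast; rw [hb]
      rw [hNb] at hbt ⊢
      exact second hbt

lemma le_pwl {s : ℝ} (hs : 0 < s) (N : ℕ) :
    ∀ t, 0 ≤ t →
      (t ≤ (N : ℝ) * s → φ t - (rd φ (t + s) - rd φ 0) * s ≤ pwl φ s N t) ∧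
      ((N : ℝ) * s ≤ t →
        φ ((N : ℝ) * s) + rd φ ((N : ℝ) * s) * (t - (N : ℝ) * s)
          - (rd φ ((N : ℝ) * s) - rd φ 0) * s ≤ pwl φ s N t) := by
  induction N with
  | zero =>
    intro t ht
    constructor
    · intro h
      have ht0 : t = 0 := le_antisymm (by simpa using h) ht
      subst ht0
      have : rd φ 0 ≤ rd φ (0 + s) := rd_mono hm hc le_rfl (by linarith)
      simp only [pwl, Finset.range_zero, Finset.sum_empty, add_zero, mul_zero, h0]
      nlinarith
    · intro _
      simp only [pwl, Finset.range_zero, Finset.sum_empty, add_zero, Nat.cast_zero, zero_mul, h0]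
      ring_nf
      nlinarith [le_refl (rd φ 0)]
  | succ N ih =>
    intro t ht
    set a : ℝ := (N : ℝ) * s with ha
    set b : ℝ := ((N : ℝ) + 1) * s with hb
    have hab : b = a + s := by rw [ha, hb]; ring
    have ha0 : 0 ≤ a := mul_nonneg (Nat.cast_nonneg _) hs.le
    have hb0 : 0 ≤ b := by rw [hab]; linarith
    have hsum : pwl φ s (N + 1) t = pwl φ s N t + (rd φ b - rd φ a) * max (t - b) 0 := by
      simp only [pwl, Finset.sum_range_succ]
      push_cast
      ring
    have hcoef : 0 ≤ rd φ b - rd φ a := sub_nonneg.2 (rd_mono hm hc ha0 (by linarith [hab]))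
    have hNb : ((N : ℕ) + 1 : ℝ) * s = b := by rw [hb]
    have hmono_pwl : pwl φ s N t ≤ pwl φ s (N + 1) t := by
      rw [hsum]
      nlinarith [le_max_right (t - b) 0, mul_nonneg hcoef (le_max_right (t - b) 0)]
    constructor
    · intro htb
      have htb : t ≤ b := by rw [hb]; push_cast at htb; linarith
      rcases le_or_gt t a with h | h
      · exact le_trans ((ih t ht).1 h) hmono_pwl
      · have ih2 := (ih t ht).2 h.le
        have hts : 0 ≤ rd φ t - rd φ a := sub_nonneg.2 (rd_mono hm hc ha0 h.le)
        have hts2 : rd φ t ≤ rd φ (t + s) := rd_mono hm hc (ha0.trans h.le) (by linarith)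
        have hsupp : φ t - φ a ≤ rd φ t * (t - a) := by
          have := rd_support hm hc (ha0.trans h.le) ha0
          nlinarith
        have hprod : (rd φ t - rd φ a) * (t - a) ≤ (rd φ (t + s) - rd φ a) * s :=
          mul_le_mul (by linarith) (by rw [hab] at htb; linarith) (by linarith) (by linarith)
        have e0 : 0 ≤ rd φ a - rd φ 0 := sub_nonneg.2 (rd_mono hm hc le_rfl ha0)
        have e1 : rd φ a ≤ rd φ (t + s) := rd_mono hm hc ha0 (by linarith)
        nlinarith [hmono_pwl, ih2]
    · intro hbt
      have hNb' : ((N + 1 : ℕ) : ℝ) * s = b := by push_cast; rw [hb]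
      rw [hNb'] at hbt
      have ih2 := (ih t ht).2 (by linarith [hab])
      have hsuppb : φ b - φ a ≤ rd φ b * s := by
        have h1 := rd_support hm hc hb0 ha0
        have h2 : rd φ b * (a - b) = -(rd φ b * s) := by rw [hab]; ring
        linarith
      have hmax : max (t - b) 0 = t - b := max_eq_left (by linarith)
      have e : rd φ a * (t - a) = rd φ a * s + rd φ a * (t - b) := by rw [hab]; ring
      have e2 : (rd φ b - rd φ a) * (t - b) = rd φ b * (t - b) - rd φ a * (t - b) := by ring
      have e3 : (rd φ b - rd φ 0) * s = rd φ b * s - rd φ 0 * s := by ring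
      have e4 : (rd φ a - rd φ 0) * s = rd φ a * s - rd φ 0 * s := by ring
      rw [hNb', hsum, hmax]
      linarith [ih2, e, e2, e3, e4]

lemma pwl_tendsto {t : ℝ} (ht : 0 ≤ t) :
    Filter.Tendsto (fun n : ℕ => pwl φ (1 / ((n : ℝ) + 1)) ((n + 1) * (n + 1)) t)
      Filter.atTop (nhds (φ t)) := by
  have hC : Filter.Tendsto
      (fun n : ℕ => φ t - (rd φ (t + 1) - rd φ 0) * (1 / ((n : ℝ) + 1)))
      Filter.atTop (nhds (φ t)) := by
    have h1 : Filter.Tendsto (fun n : ℕ => 1 / ((n : ℝ) + 1)) Filter.atTop (nhds 0) :=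
      tendsto_one_div_add_atTop_nhds_zero_nat
    have h2 := h1.const_mul (rd φ (t + 1) - rd φ 0)
    simpa using tendsto_const_nhds.sub h2
  refine tendsto_of_tendsto_of_tendsto_of_le_of_le' hC tendsto_const_nhds ?_ ?_
  · filter_upwards [Filter.eventually_ge_atTop ⌈t⌉₊] with n hn
    have hs : (0:ℝ) < 1 / ((n : ℝ) + 1) := by positivity
    set s : ℝ := 1 / ((n : ℝ) + 1) with hsdef
    have hs1 : s ≤ 1 := by
      rw [hsdef, div_le_one (by positivity)]
      linarith [Nat.cast_nonneg (α := ℝ) n]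
    have hNs : ((((n + 1) * (n + 1) : ℕ)) : ℝ) * s = (n : ℝ) + 1 := by
      rw [hsdef]; push_cast; field_simp
    have htN : t ≤ ((((n + 1) * (n + 1) : ℕ)) : ℝ) * s := by
      rw [hNs]
      have h3 : t ≤ (⌈t⌉₊ : ℝ) := Nat.le_ceil t
      have h4 : ((⌈t⌉₊ : ℕ) : ℝ) ≤ (n : ℝ) := Nat.cast_le.2 hn
      linarith
    have h1 := (le_pwl hm hc h0 hs _ t ht).1 htN
    have h2 : rd φ (t + s) ≤ rd φ (t + 1) := rd_mono hm hc (by linarith) (by linarith)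
    have h3 : rd φ 0 ≤ rd φ (t + s) := rd_mono hm hc le_rfl (by linarith)
    have h4 : (rd φ (t + s) - rd φ 0) * s ≤ (rd φ (t + 1) - rd φ 0) * s :=
      mul_le_mul_of_nonneg_right (by linarith) hs.le
    linarith
  · filter_upwards with n
    exact (pwl_le hm hc h0 (by positivity) _ t ht).1

end auxiliary

/-- Let `(X,μ)` be σ-finite and `f, g ∈ L¹(X,μ)` nonnegative with `∫ g dμ = ∫ f dμ`.  If
`∫ (g − u)⁺ dμ ≤ ∫ (f − u)⁺ dμ` for every real `u > 0`, then
`∫ φ∘g dμ ≤ ∫ φ∘f dμ` for every increasing convex `φ : [0,∞) → [0,∞)` with `φ(0) = 0`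
(the integrals of these nonnegative functions taken in `[0,∞]`). -/
theorem integral_convex_le_of_integral_pos_part_le
    {X : Type*} [MeasurableSpace X] (μ : Measure X) [SigmaFinite μ]
    (f g : X → ℝ) (hf : Integrable f μ) (hg : Integrable g μ)
    (hf0 : 0 ≤ᵐ[μ] f) (hg0 : 0 ≤ᵐ[μ] g)
    (heq : ∫ x, g x ∂μ = ∫ x, f x ∂μ)
    (hcut : ∀ u : ℝ, 0 < u →
      ∫ x, max (g x - u) 0 ∂μ ≤ ∫ x, max (f x - u) 0 ∂μ) :
    ∀ φ : ℝ → ℝ, MonotoneOn φ (Set.Ici 0) → ConvexOn ℝ (Set.Ici 0) φ →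
      (∀ x : ℝ, 0 ≤ x → 0 ≤ φ x) → φ 0 = 0 →
      ∫⁻ x, ENNReal.ofReal (φ (g x)) ∂μ ≤ ∫⁻ x, ENNReal.ofReal (φ (f x)) ∂μ := by
  intro φ hm hc hφ0 h0
  -- integrability of truncations
  have hmax : ∀ (h : X → ℝ), Integrable h μ → ∀ u : ℝ, 0 < u →
      Integrable (fun x => max (h x - u) 0) μ := by
    intro h hh u hu
    refine hh.mono (((hh.aestronglyMeasurable.aemeasurable.sub aemeasurable_const).sup_const
      0).aestronglyMeasurable) ?_
    filter_upwards with x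
    rw [Real.norm_eq_abs, Real.norm_eq_abs, abs_of_nonneg (le_max_right _ _)]
    exact max_le (by linarith [le_abs_self (h x)]) (abs_nonneg _)
  have hint : ∀ (h : X → ℝ), Integrable h μ → ∀ (s : ℝ), 0 < s → ∀ N : ℕ,
      Integrable (fun x => pwl φ s N (h x)) μ := by
    intro h hh s hs N
    simp only [pwl]
    exact (hh.const_mul _).add (integrable_finset_sum _ fun j _ =>
      ((hmax h hh _ (mul_pos (by positivity) hs)).const_mul _))
  have expand : ∀ (h : X → ℝ), Integrable h μ → ∀ (s : ℝ), 0 < s → ∀ N : ℕ,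
      ∫ x, pwl φ s N (h x) ∂μ = rd φ 0 * ∫ x, h x ∂μ +
        ∑ j ∈ Finset.range N,
          (rd φ (((j : ℕ) + 1) * s) - rd φ ((j : ℕ) * s)) *
            ∫ x, max (h x - ((j : ℕ) + 1) * s) 0 ∂μ := by
    intro h hh s hs N
    simp only [pwl]
    rw [integral_add (hh.const_mul _) (integrable_finset_sum _ fun j _ =>
        ((hmax h hh _ (mul_pos (by positivity) hs)).const_mul _)), integral_const_mul,
      integral_finset_sum _ (fun j _ =>
        ((hmax h hh _ (mul_pos (by positivity) hs)).const_mul _))]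
    congr 1
    exact Finset.sum_congr rfl fun j _ => integral_const_mul _ _
  have hkey : ∀ (s : ℝ), 0 < s → ∀ N : ℕ,
      ∫ x, pwl φ s N (g x) ∂μ ≤ ∫ x, pwl φ s N (f x) ∂μ := by
    intro s hs N
    rw [expand g hg s hs N, expand f hf s hs N, heq]
    refine add_le_add le_rfl (Finset.sum_le_sum fun j _ => ?_)
    refine mul_le_mul_of_nonneg_left (hcut _ (mul_pos (by positivity) hs)) ?_
    exact sub_nonneg.2 (rd_mono hm hc (mul_nonneg (Nat.cast_nonneg _) hs.le)
      (mul_le_mul_of_nonneg_right (by push_cast; linarith) hs.le))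
  have hsn : ∀ n : ℕ, (0:ℝ) < 1 / ((n : ℝ) + 1) := fun n => by positivity
  have meas : ∀ n : ℕ, AEMeasurable
      (fun x => ENNReal.ofReal (pwl φ (1 / ((n : ℝ) + 1)) ((n + 1) * (n + 1)) (g x))) μ :=
    fun n => ENNReal.measurable_ofReal.comp_aemeasurable
      ((pwl_continuous φ _ _).measurable.comp_aemeasurable hg.aestronglyMeasurable.aemeasurable)
  have bound : ∀ n : ℕ,
      ∫⁻ x, ENNReal.ofReal (pwl φ (1 / ((n : ℝ) + 1)) ((n + 1) * (n + 1)) (g x)) ∂μ ≤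
        ∫⁻ x, ENNReal.ofReal (φ (f x)) ∂μ := by
    intro n
    have e1 := ofReal_integral_eq_lintegral_ofReal (hint g hg _ (hsn n) ((n + 1) * (n + 1)))
      (by filter_upwards [hg0] with x hx
          simpa using pwl_nonneg hm hc (hsn n) ((n + 1) * (n + 1)) hx)
    have e2 := ofReal_integral_eq_lintegral_ofReal (hint f hf _ (hsn n) ((n + 1) * (n + 1)))
      (by filter_upwards [hf0] with x hx
          simpa using pwl_nonneg hm hc (hsn n) ((n + 1) * (n + 1)) hx)
    rw [← e1]
    calc ENNReal.ofReal (∫ x, pwl φ (1 / ((n : ℝ) + 1)) ((n + 1) * (n + 1)) (g x) ∂μ)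
        ≤ ENNReal.ofReal (∫ x, pwl φ (1 / ((n : ℝ) + 1)) ((n + 1) * (n + 1)) (f x) ∂μ) :=
          ENNReal.ofReal_le_ofReal (hkey _ (hsn n) _)
      _ = ∫⁻ x, ENNReal.ofReal (pwl φ (1 / ((n : ℝ) + 1)) ((n + 1) * (n + 1)) (f x)) ∂μ := e2
      _ ≤ ∫⁻ x, ENNReal.ofReal (φ (f x)) ∂μ := by
          refine lintegral_mono_ae ?_
          filter_upwards [hf0] with x hx
          exact ENNReal.ofReal_le_ofReal
            ((pwl_le hm hc h0 (hsn n) ((n + 1) * (n + 1)) (f x) hx).1)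
  calc ∫⁻ x, ENNReal.ofReal (φ (g x)) ∂μ
      = ∫⁻ x, Filter.liminf
          (fun n : ℕ => ENNReal.ofReal (pwl φ (1 / ((n : ℝ) + 1)) ((n + 1) * (n + 1)) (g x)))
          Filter.atTop ∂μ := by
        refine lintegral_congr_ae ?_
        filter_upwards [hg0] with x hx
        exact ((ENNReal.continuous_ofReal.tendsto _).comp (pwl_tendsto hm hc h0 hx)).liminf_eq.symm
    _ ≤ Filter.liminf
          (fun n : ℕ => ∫⁻ x, ENNReal.ofReal
            (pwl φ (1 / ((n : ℝ) + 1)) ((n + 1) * (n + 1)) (g x)) ∂μ) Filter.atTop :=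
        lintegral_liminf_le' meas
    _ ≤ Filter.liminf (fun _ : ℕ => ∫⁻ x, ENNReal.ofReal (φ (f x)) ∂μ) Filter.atTop :=
        Filter.liminf_le_liminf (Filter.Eventually.of_forall bound)
    _ = ∫⁻ x, ENNReal.ofReal (φ (f x)) ∂μ := Filter.liminf_const _
end
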